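/- arXiv:1411.1865 — 8 statements merged into one kernel-verified Lean document; each statement's English description precedes it below -/
import Mathlib

section
/- Let ξ be a probability distribution on ℕ with ℙ(ξ = 1) < 1 and mean 𝔼[ξ] ≤ 1. Then the Galton–Watson tree with offspring distribution ξ is almost surely finite. -/
open MeasureTheory ProbabilityTheory
open scoped ENNReal NNReal


private lemma gw_pow_aux {s : ℝ≥0∞} (hs : s ≤ 1) :
    ∀ j : ℕ, 1 ≤ s ^ (j + 1) + (1 - s) * (1 + (j : ℝ≥0∞) * s) := by
  intro j
  induction j with
  | zero =>
      have h := tsub_add_cancel_of_le hs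
      simpa [add_comm] using h.ge
  | succ j ih =>
      push_cast
      have hss : s * s ≤ s := by simpa using mul_le_mul_left hs s
      have h0 : s ≤ s * (s ^ (j + 1) + (1 - s) * (1 + (j : ℝ≥0∞) * s)) := by
        simpa using mul_le_mul_right ih s
      have hmid : s * ((1 - s) * (1 + (j : ℝ≥0∞) * s)) ≤ (1 - s) * (((j : ℝ≥0∞) + 1) * s) := by
        have hinner : s * (1 + (j : ℝ≥0∞) * s) ≤ ((j : ℝ≥0∞) + 1) * s := by
          calc s * (1 + (j : ℝ≥0∞) * s) = s + (j : ℝ≥0∞) * (s * s) := by ring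
          _ ≤ s + (j : ℝ≥0∞) * s := add_le_add_right (mul_le_mul_right hss _) _
          _ = ((j : ℝ≥0∞) + 1) * s := by ring
        calc s * ((1 - s) * (1 + (j : ℝ≥0∞) * s))
            = (1 - s) * (s * (1 + (j : ℝ≥0∞) * s)) := by ring
        _ ≤ _ := mul_le_mul_right hinner _
      calc (1 : ℝ≥0∞) = s + (1 - s) := by rw [add_comm, tsub_add_cancel_of_le hs]
      _ ≤ s * (s ^ (j + 1) + (1 - s) * (1 + (j : ℝ≥0∞) * s)) + (1 - s) := add_le_add_left h0 _
      _ = s ^ (j + 1 + 1) + (s * ((1 - s) * (1 + (j : ℝ≥0∞) * s)) + (1 - s)) := by ring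
      _ ≤ s ^ (j + 1 + 1) + ((1 - s) * (((j : ℝ≥0∞) + 1) * s) + (1 - s)) :=
          add_le_add_right (add_le_add_left hmid _) _
      _ = s ^ (j + 1 + 1) + (1 - s) * (1 + ((j : ℝ≥0∞) + 1) * s) := by ring

private lemma gw_sum (μ : Measure ℕ) [IsProbabilityMeasure μ] : ∑' k : ℕ, μ {k} = 1 := by
  have h := lintegral_countable' (μ := μ) (fun _ : ℕ => (1 : ℝ≥0∞))
  simpa using h.symm

private lemma gw_tail (μ : Measure ℕ) [IsProbabilityMeasure μ]
    (hmean : ∫⁻ k, (k : ℝ≥0∞) ∂μ ≤ 1) :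
    ∑' k : ℕ, (k : ℝ≥0∞) * μ {k + 1} ≤ μ {0} := by
  have hsum := gw_sum μ
  have hmean' : ∑' k : ℕ, (k : ℝ≥0∞) * μ {k} ≤ 1 := by
    calc ∑' k : ℕ, (k : ℝ≥0∞) * μ {k} = ∫⁻ k, (k : ℝ≥0∞) ∂μ :=
          (lintegral_countable' (μ := μ) _).symm
    _ ≤ 1 := hmean
  have hshift : ∑' k : ℕ, (k : ℝ≥0∞) * μ {k}
      = (∑' k : ℕ, (k : ℝ≥0∞) * μ {k + 1}) + ∑' k : ℕ, μ {k + 1} := by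
    rw [tsum_eq_zero_add' ENNReal.summable]
    simp only [Nat.cast_zero, zero_mul, zero_add]
    rw [← ENNReal.tsum_add]
    exact tsum_congr fun k => by push_cast; ring
  have hsplit : μ {0} + ∑' k : ℕ, μ {k + 1} = 1 := by
    rw [← hsum]; exact (tsum_eq_zero_add' (f := fun k : ℕ => μ {k}) ENNReal.summable).symm
  have hBne : (∑' k : ℕ, μ {k + 1}) ≠ ∞ :=
    ne_top_of_le_ne_top ENNReal.one_ne_top (hsplit ▸ le_add_self)
  have h2 : (∑' k : ℕ, (k : ℝ≥0∞) * μ {k + 1}) + (∑' k : ℕ, μ {k + 1})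
      ≤ μ {0} + ∑' k : ℕ, μ {k + 1} := by
    rw [← hshift, hsplit]; exact hmean'
  exact (ENNReal.add_le_add_iff_right hBne).mp h2

private lemma gw_qpos (μ : Measure ℕ) [IsProbabilityMeasure μ]
    (h1 : μ {1} < 1) (hmean : ∫⁻ k, (k : ℝ≥0∞) ∂μ ≤ 1) : 0 < μ {0} := by
  by_contra hq
  push_neg at hq
  have hq0 : μ {0} = 0 := le_antisymm hq zero_le
  have hA := gw_tail μ hmean
  rw [hq0] at hA
  have hz : ∀ k : ℕ, (k : ℝ≥0∞) * μ {k + 1} = 0 :=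
    ENNReal.tsum_eq_zero.mp (le_zero_iff.mp hA)
  have hzero : ∀ j : ℕ, 2 ≤ j → μ {j} = 0 := by
    intro j hj
    obtain ⟨k, rfl⟩ : ∃ k, j = k + 1 := ⟨j - 1, by omega⟩
    have hk : (k : ℝ≥0∞) ≠ 0 := Nat.cast_ne_zero.mpr (by omega)
    exact (mul_eq_zero.mp (hz k)).resolve_left hk
  have hone : μ {1} = 1 := by
    rw [← gw_sum μ]
    exact (tsum_eq_single (f := fun k : ℕ => μ {k}) 1 (by
      intro b hb
      match b, hb with
      | 0, _ => exact hq0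
      | (j+2), _ => exact hzero (j+2) (by omega))).symm
  exact absurd hone h1.ne

private lemma gw_key (μ : Measure ℕ) [IsProbabilityMeasure μ]
    (hmean : ∫⁻ k, (k : ℝ≥0∞) ∂μ ≤ 1) {s : ℝ≥0∞} (hs : s ≤ 1) :
    1 ≤ (∫⁻ k, s ^ k ∂μ) + (1 - s) * ((1 - μ {0}) + μ {0} * s) := by
  have hsum := gw_sum μ
  have hA := gw_tail μ hmean
  have hsplit : μ {0} + ∑' k : ℕ, μ {k + 1} = 1 := by
    rw [← hsum]; exact (tsum_eq_zero_add' (f := fun k : ℕ => μ {k}) ENNReal.summable).symm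
  have hB : ∑' k : ℕ, μ {k + 1} ≤ 1 - μ {0} := ENNReal.le_sub_of_add_le_left (measure_ne_top μ _) hsplit.le
  have hF : ∫⁻ k, s ^ k ∂μ = ∑' k : ℕ, s ^ k * μ {k} := lintegral_countable' _
  have e1 : ∑' k : ℕ, s ^ k * μ {k} = μ {0} + ∑' j : ℕ, s ^ (j + 1) * μ {j + 1} := by
    rw [tsum_eq_zero_add' ENNReal.summable]; simp
  have hmain : (1 : ℝ≥0∞) ≤ (∑' k : ℕ, s ^ k * μ {k})
      + ∑' j : ℕ, (1 - s) * (1 + (j : ℝ≥0∞) * s) * μ {j + 1} := by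
    calc (1 : ℝ≥0∞) = μ {0} + ∑' j : ℕ, μ {j + 1} := hsplit.symm
    _ ≤ μ {0} + ∑' j : ℕ,
          (s ^ (j + 1) * μ {j + 1} + (1 - s) * (1 + (j : ℝ≥0∞) * s) * μ {j + 1}) := by
        refine add_le_add_right (Summable.tsum_le_tsum (fun j => ?_) ENNReal.summable ENNReal.summable) _
        have h := mul_le_mul_left (gw_pow_aux hs j) (μ {j + 1})
        simpa [add_mul] using h
    _ = (μ {0} + ∑' j : ℕ, s ^ (j + 1) * μ {j + 1})
          + ∑' j : ℕ, (1 - s) * (1 + (j : ℝ≥0∞) * s) * μ {j + 1} := by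
        rw [ENNReal.tsum_add]; ring
    _ = _ := by rw [e1]
  have hW : ∑' j : ℕ, (1 - s) * (1 + (j : ℝ≥0∞) * s) * μ {j + 1}
      ≤ (1 - s) * ((1 - μ {0}) + μ {0} * s) := by
    calc ∑' j : ℕ, (1 - s) * (1 + (j : ℝ≥0∞) * s) * μ {j + 1}
        = ∑' j : ℕ, (1 - s) * (μ {j + 1} + ((j : ℝ≥0∞) * μ {j + 1}) * s) := by
          exact tsum_congr fun j => by ring
    _ = (1 - s) * ((∑' j : ℕ, μ {j + 1}) + (∑' j : ℕ, (j : ℝ≥0∞) * μ {j + 1}) * s) := by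
          rw [ENNReal.tsum_mul_left]
          congr 1
          rw [ENNReal.tsum_add, ENNReal.tsum_mul_right]
    _ ≤ (1 - s) * ((1 - μ {0}) + μ {0} * s) :=
          mul_le_mul_right (add_le_add hB (mul_le_mul_left hA s)) _
  calc (1 : ℝ≥0∞) ≤ _ := hmain
  _ ≤ (∫⁻ k, s ^ k ∂μ) + (1 - s) * ((1 - μ {0}) + μ {0} * s) := by
      rw [hF]; exact add_le_add_right hW _

private lemma gw_lim {q : ℝ≥0∞} (hq0 : 0 < q) (hq1 : q ≤ 1) (a : ℕ → ℝ≥0∞)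
    (ha0 : a 0 = 0)
    (hrec : ∀ n, 1 ≤ a (n + 1) + (1 - a n) * ((1 - q) + q * a n))
    {ε : ℝ≥0∞} (hε : 0 < ε) (hε1 : ε ≤ 1) : ∃ n, 1 ≤ a n + ε := by
  by_contra hc
  push_neg at hc
  set r := (1 - q) + q * (1 - ε) with hr
  have hr1 : r + q * ε = 1 := by
    have h1 : (1 - ε) + ε = 1 := tsub_add_cancel_of_le hε1
    have h2 : (1 - q) + q = 1 := tsub_add_cancel_of_le hq1
    calc r + q * ε = (1 - q) + q * ((1 - ε) + ε) := by rw [hr]; ring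
    _ = (1 - q) + q * 1 := by rw [h1]
    _ = 1 := by rw [mul_one]; exact h2
  have hrne : r ≠ ∞ := ne_top_of_le_ne_top ENNReal.one_ne_top (hr1 ▸ le_self_add)
  have hrlt : r < 1 := by
    conv_rhs => rw [← hr1]
    exact ENNReal.lt_add_right hrne (mul_ne_zero hq0.ne' hε.ne')
  have hub : ∀ n, 1 - a n ≤ r ^ n := by
    intro n
    induction n with
    | zero => simp [ha0]
    | succ n ih =>
      have han : a n ≤ 1 - ε := ENNReal.le_sub_of_add_le_right (by exact ne_top_of_le_ne_top ENNReal.one_ne_top hε1) (hc n).le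
      have h1 : 1 - a (n + 1) ≤ (1 - a n) * ((1 - q) + q * a n) :=
        tsub_le_iff_right.mpr (by rw [add_comm]; exact hrec n)
      calc 1 - a (n + 1) ≤ (1 - a n) * ((1 - q) + q * a n) := h1
      _ ≤ r ^ n * ((1 - q) + q * (1 - ε)) :=
          mul_le_mul' ih (add_le_add_right (mul_le_mul_right han q) _)
      _ = r ^ (n + 1) := by rw [pow_succ, hr]
  have hεle : ∀ n, ε ≤ r ^ n := fun n =>
    le_trans (ENNReal.le_sub_of_add_le_left (by exact ne_top_of_le_ne_top ENNReal.one_ne_top (le_trans le_self_add (hc n).le)) (hc n).le) (hub n)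
  have htend := ENNReal.tendsto_pow_atTop_nhds_zero_of_lt_one hrlt
  obtain ⟨n, hn⟩ := (htend.eventually_lt_const hε).exists
  exact absurd (hεle n) (not_le.mpr hn)

set_option maxHeartbeats 1000000 in
/-- A Galton–Watson branching process whose offspring distribution `μ` satisfies
`μ {1} < 1` and has mean at most `1` dies out almost surely; equivalently, the
Galton–Watson tree is almost surely finite. Here `ξ n i` is the offspring number of the
`i`-th individual in generation `n`, and `Z n` is the size of generation `n`. -/
theorem galtonWatson_extinction
    {Ω : Type*} [MeasureSpace Ω] [IsProbabilityMeasure (ℙ : Measure Ω)]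
    (μ : Measure ℕ) [IsProbabilityMeasure μ]
    (ξ : ℕ → ℕ → Ω → ℕ)
    (hmeas : ∀ n i, Measurable (ξ n i))
    (hindep : iIndepFun
      (fun p : ℕ × ℕ => ξ p.1 p.2) ℙ)
    (hdist : ∀ n i, Measure.map (ξ n i) ℙ = μ)
    (h1 : μ {1} < 1)
    (hmean : ∫⁻ k, (k : ℝ≥0∞) ∂μ ≤ 1)
    (Z : ℕ → Ω → ℕ)
    (hZ0 : ∀ ω, Z 0 ω = 1)
    (hZ : ∀ n ω, Z (n + 1) ω = ∑ i ∈ Finset.range (Z n ω), ξ n i ω) :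
    ℙ {ω | ∃ n, Z n ω = 0} = 1 := by
  classical
  set G : ℕ × ℕ → MeasurableSpace Ω :=
    fun p => MeasurableSpace.comap (ξ p.1 p.2) inferInstance with hG
  have hGle : ∀ p : ℕ × ℕ, G p ≤ (inferInstance : MeasurableSpace Ω) :=
    fun p => (hmeas p.1 p.2).comap_le
  have hiI : iIndep G ℙ := by rw [hG]; exact hindep.iIndep
  set Fil : ℕ → MeasurableSpace Ω :=
    fun n => ⨆ p ∈ {p : ℕ × ℕ | p.1 < n}, G p with hFil
  set Gen : ℕ → MeasurableSpace Ω :=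
    fun n => ⨆ p ∈ {p : ℕ × ℕ | p.1 = n}, G p with hGen
  have hFle : ∀ n, Fil n ≤ (inferInstance : MeasurableSpace Ω) :=
    fun n => iSup₂_le fun p _ => hGle p
  have hGenle : ∀ n, Gen n ≤ (inferInstance : MeasurableSpace Ω) :=
    fun n => iSup₂_le fun p _ => hGle p
  have hIndep : ∀ n, Indep (Fil n) (Gen n) ℙ := fun n =>
    indep_iSup_of_disjoint hGle hiI (by
      rw [Set.disjoint_left]
      rintro ⟨m, i⟩ hm hm'
      simp only [Set.mem_setOf_eq] at hm hm'
      omega)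
  have hGen_meas : ∀ n i, Measurable[Gen n] (ξ n i) := fun n i =>
    (Measurable.of_comap_le le_rfl).mono
      (le_biSup G (show ((n, i) : ℕ × ℕ) ∈ {p : ℕ × ℕ | p.1 = n} from rfl)) le_rfl
  have hZFil : ∀ n, Measurable[Fil n] (Z n) := by
    intro n
    induction n with
    | zero =>
      have h : Z 0 = fun _ => 1 := funext hZ0
      rw [h]; exact measurable_const
    | succ n ih =>
      have hfle : Fil n ≤ Fil (n + 1) :=
        biSup_mono fun p hp => by simp only [Set.mem_setOf_eq] at hp ⊢; omega
      have hξm : ∀ i, Measurable[Fil (n + 1)] (ξ n i) := fun i =>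
        (Measurable.of_comap_le le_rfl).mono
          (le_biSup G (show ((n, i) : ℕ × ℕ) ∈ {p : ℕ × ℕ | p.1 < n + 1} by
            simp only [Set.mem_setOf_eq]; omega)) le_rfl
      refine @measurable_to_countable' ℕ Ω _ _ (Fil (n+1)) (Z (n+1)) fun m => ?_
      have hset : Z (n + 1) ⁻¹' {m}
          = ⋃ k, (Z n ⁻¹' {k} ∩ {ω | (∑ i ∈ Finset.range k, ξ n i ω) = m}) := by
        ext ω
        simp only [Set.mem_preimage, Set.mem_singleton_iff, Set.mem_iUnion, Set.mem_inter_iff,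
          Set.mem_setOf_eq]
        constructor
        · intro h
          exact ⟨Z n ω, rfl, by rw [← hZ n ω]; exact h⟩
        · rintro ⟨k, hk, hsum⟩
          rw [hZ n ω, hk]; exact hsum
      rw [hset]
      refine MeasurableSet.iUnion fun k => MeasurableSet.inter ?_ ?_
      · exact hfle _ (ih (measurableSet_singleton k))
      · exact (Finset.measurable_sum (Finset.range k) fun i _ => hξm i)
          (measurableSet_singleton m)
  have hZsetm : ∀ n k, MeasurableSet (Z n ⁻¹' {k}) :=
    fun n k => hFle n _ (hZFil n (measurableSet_singleton k))
  set F : ℝ≥0∞ → ℝ≥0∞ := fun s => ∫⁻ k, s ^ k ∂μ with hFdef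
  have hFs : ∀ (s : ℝ≥0∞) (n i : ℕ), ∫⁻ ω, s ^ ξ n i ω ∂ℙ = F s := by
    intro s n i
    simp only [hFdef]
    rw [show (∫⁻ k, s ^ k ∂μ) = ∫⁻ k, s ^ k ∂(Measure.map (ξ n i) ℙ) by rw [hdist n i]]
    rw [lintegral_map (Measurable.of_discrete (f := fun m : ℕ => s ^ m)) (hmeas n i)]
  have hprod : ∀ (s : ℝ≥0∞) (n k : ℕ),
      ∫⁻ ω, ∏ i ∈ Finset.range k, s ^ ξ n i ω ∂ℙ = (F s) ^ k := by
    intro s n k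
    induction k with
    | zero => simp
    | succ k ih =>
      have hind := indep_iSup_of_disjoint (μ := ℙ) hGle hiI
        (S := {p : ℕ × ℕ | p.1 = n ∧ p.2 < k}) (T := {((n, k) : ℕ × ℕ)}) (by
          rw [Set.disjoint_left]
          rintro ⟨a, b⟩ h h2
          simp only [Set.mem_setOf_eq] at h
          simp only [Set.mem_singleton_iff, Prod.mk.injEq] at h2
          omega)
      have hfm : Measurable[⨆ p ∈ {p : ℕ × ℕ | p.1 = n ∧ p.2 < k}, G p]
          (fun ω => ∏ i ∈ Finset.range k, s ^ ξ n i ω) := by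
        refine Finset.measurable_prod _ fun i hi => ?_
        have hmem : ((n, i) : ℕ × ℕ) ∈ {p : ℕ × ℕ | p.1 = n ∧ p.2 < k} :=
          ⟨rfl, Finset.mem_range.mp hi⟩
        exact ((Measurable.of_discrete (f := fun m : ℕ => s ^ m)).comp
          (Measurable.of_comap_le le_rfl)).mono (le_biSup G hmem) le_rfl
      have hgm : Measurable[⨆ p ∈ ({((n, k) : ℕ × ℕ)} : Set (ℕ × ℕ)), G p]
          (fun ω => s ^ ξ n k ω) :=
        ((Measurable.of_discrete (f := fun m : ℕ => s ^ m)).comp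
          (Measurable.of_comap_le le_rfl)).mono (le_biSup G (show ((n, k) : ℕ × ℕ) ∈ ({((n, k) : ℕ × ℕ)} : Set (ℕ × ℕ)) from rfl)) le_rfl
      calc ∫⁻ ω, ∏ i ∈ Finset.range (k + 1), s ^ ξ n i ω ∂ℙ
          = ∫⁻ ω, (∏ i ∈ Finset.range k, s ^ ξ n i ω) * s ^ ξ n k ω ∂ℙ :=
            lintegral_congr fun ω => by rw [Finset.prod_range_succ]
      _ = (∫⁻ ω, ∏ i ∈ Finset.range k, s ^ ξ n i ω ∂ℙ) * ∫⁻ ω, s ^ ξ n k ω ∂ℙ :=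
            lintegral_mul_eq_lintegral_mul_lintegral_of_independent_measurableSpace
              (iSup₂_le fun p _ => hGle p) (iSup₂_le fun p _ => hGle p) hind hfm hgm
      _ = (F s) ^ k * F s := by rw [ih, hFs]
      _ = (F s) ^ (k + 1) := (pow_succ _ _).symm
  have hiter : ∀ (s : ℝ≥0∞) (n : ℕ), ∫⁻ ω, s ^ Z n ω ∂ℙ = F^[n] s := by
    intro s n
    induction n generalizing s with
    | zero => simp [hZ0]
    | succ n ih =>
      have key : ∫⁻ ω, s ^ Z (n + 1) ω ∂ℙ = ∫⁻ ω, (F s) ^ Z n ω ∂ℙ := by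
        set P : ℕ → Ω → ℝ≥0∞ := fun k ω => ∏ i ∈ Finset.range k, s ^ ξ n i ω with hP
        set g : ℕ → Ω → ℝ≥0∞ := fun k => (Z n ⁻¹' {k}).indicator (P k) with hg
        set h : ℕ → Ω → ℝ≥0∞ :=
          fun k => (Z n ⁻¹' {k}).indicator (fun _ => (F s) ^ k) with hh
        have hPmeas : ∀ k, Measurable (P k) := fun k =>
          Finset.measurable_prod _ fun i _ =>
            (Measurable.of_discrete (f := fun m : ℕ => s ^ m)).comp (hmeas n i)
        have hPGen : ∀ k, Measurable[Gen n] (P k) := fun k =>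
          Finset.measurable_prod _ fun i _ =>
            (Measurable.of_discrete (f := fun m : ℕ => s ^ m)).comp (hGen_meas n i)
        have e1 : ∀ ω, s ^ Z (n + 1) ω = ∑' k, g k ω := by
          intro ω
          have ht : (∑' k, g k ω) = g (Z n ω) ω := tsum_eq_single _
            (fun k hk => Set.indicator_of_notMem (s := Z n ⁻¹' {k}) (a := ω)
              (fun hmem => hk (Set.mem_singleton_iff.mp hmem).symm) _)
          rw [ht]
          show s ^ Z (n + 1) ω = (Z n ⁻¹' {Z n ω}).indicator (P (Z n ω)) ω
          rw [Set.indicator_of_mem (show ω ∈ Z n ⁻¹' {Z n ω} from rfl)]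
          show s ^ Z (n + 1) ω = ∏ i ∈ Finset.range (Z n ω), s ^ ξ n i ω
          rw [hZ n ω]
          exact (Finset.prod_pow_eq_pow_sum _ _ _).symm
        have e5 : ∀ ω, (F s) ^ Z n ω = ∑' k, h k ω := by
          intro ω
          have ht : (∑' k, h k ω) = h (Z n ω) ω := tsum_eq_single _
            (fun k hk => Set.indicator_of_notMem (s := Z n ⁻¹' {k}) (a := ω)
              (fun hmem => hk (Set.mem_singleton_iff.mp hmem).symm) _)
          rw [ht]
          exact (Set.indicator_of_mem (s := Z n ⁻¹' {Z n ω}) (a := ω) rfl (fun _ => (F s) ^ Z n ω)).symm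
        have e3 : ∀ k, ∫⁻ ω, g k ω ∂ℙ = ℙ (Z n ⁻¹' {k}) * (F s) ^ k := by
          intro k
          have hsplit : ∀ ω, g k ω
              = (Z n ⁻¹' {k}).indicator (fun _ => (1 : ℝ≥0∞)) ω * P k ω := by
            intro ω
            by_cases hω : ω ∈ Z n ⁻¹' {k}
            · show (Z n ⁻¹' {k}).indicator (P k) ω = _
              rw [Set.indicator_of_mem hω, Set.indicator_of_mem hω, one_mul]
            · show (Z n ⁻¹' {k}).indicator (P k) ω = _
              rw [Set.indicator_of_notMem hω, Set.indicator_of_notMem hω, zero_mul]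
          calc ∫⁻ ω, g k ω ∂ℙ
              = ∫⁻ ω, (Z n ⁻¹' {k}).indicator (fun _ => (1 : ℝ≥0∞)) ω * P k ω ∂ℙ :=
                lintegral_congr hsplit
          _ = (∫⁻ ω, (Z n ⁻¹' {k}).indicator (fun _ => (1 : ℝ≥0∞)) ω ∂ℙ)
                * ∫⁻ ω, P k ω ∂ℙ :=
                lintegral_mul_eq_lintegral_mul_lintegral_of_independent_measurableSpace
                  (hFle n) (hGenle n) (hIndep n)
                  (measurable_const.indicator (hZFil n (measurableSet_singleton k)))
                  (hPGen k)
          _ = ℙ (Z n ⁻¹' {k}) * (F s) ^ k := by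
                rw [lintegral_indicator_const (hZsetm n k), one_mul]
                exact congrArg (ℙ (Z n ⁻¹' {k}) * ·) (hprod s n k)
        calc ∫⁻ ω, s ^ Z (n + 1) ω ∂ℙ
            = ∫⁻ ω, ∑' k, g k ω ∂ℙ := lintegral_congr e1
        _ = ∑' k, ∫⁻ ω, g k ω ∂ℙ :=
              lintegral_tsum fun k => ((hPmeas k).indicator (hZsetm n k)).aemeasurable
        _ = ∑' k, ℙ (Z n ⁻¹' {k}) * (F s) ^ k := tsum_congr e3
        _ = ∑' k, ∫⁻ ω, h k ω ∂ℙ := by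
              refine tsum_congr fun k => ?_
              rw [show (∫⁻ ω, h k ω ∂ℙ) = (F s) ^ k * ℙ (Z n ⁻¹' {k}) from
                lintegral_indicator_const (hZsetm n k) _]
              exact mul_comm _ _
        _ = ∫⁻ ω, ∑' k, h k ω ∂ℙ := (lintegral_tsum fun k =>
              (measurable_const.indicator (hZsetm n k)).aemeasurable).symm
        _ = ∫⁻ ω, (F s) ^ Z n ω ∂ℙ := (lintegral_congr e5).symm
      rw [key, ih (F s), ← Function.iterate_succ_apply]
  have ha : ∀ n, ℙ (Z n ⁻¹' {0}) = F^[n] 0 := by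
    intro n
    have h0 : ∀ ω, (0 : ℝ≥0∞) ^ Z n ω
        = (Z n ⁻¹' {0}).indicator (fun _ => (1 : ℝ≥0∞)) ω := by
      intro ω
      by_cases h : Z n ω = 0
      · rw [Set.indicator_of_mem (show ω ∈ Z n ⁻¹' {0} from h), h, pow_zero]
      · rw [Set.indicator_of_notMem (s := Z n ⁻¹' {0}) (a := ω) (fun hc => h (Set.mem_singleton_iff.mp hc))]
        exact zero_pow h
    rw [← hiter 0 n, lintegral_congr h0, lintegral_indicator_const (hZsetm n 0), one_mul]
  have hq0 : 0 < μ {0} := gw_qpos μ h1 hmean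
  have hq1 : μ {0} ≤ 1 := prob_le_one
  have ha1 : ∀ n, F^[n] 0 ≤ 1 := fun n => (ha n) ▸ prob_le_one
  have hrec : ∀ n, 1 ≤ F^[n + 1] 0
      + (1 - F^[n] 0) * ((1 - μ {0}) + μ {0} * F^[n] 0) := by
    intro n
    rw [Function.iterate_succ_apply']
    exact gw_key μ hmean (ha1 n)
  have hUeq : {ω | ∃ n, Z n ω = 0} = ⋃ n, Z n ⁻¹' {0} := by
    ext ω
    simp only [Set.mem_setOf_eq, Set.mem_iUnion, Set.mem_preimage, Set.mem_singleton_iff]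
  have hge : ∀ n, F^[n] 0 ≤ ℙ {ω | ∃ n, Z n ω = 0} := by
    intro n
    rw [← ha n]
    exact measure_mono fun ω h => ⟨n, Set.mem_singleton_iff.mp h⟩
  refine le_antisymm prob_le_one ?_
  refine ENNReal.le_of_forall_pos_le_add fun ε hε _ => ?_
  by_cases h1ε : (ε : ℝ≥0∞) ≤ 1
  · obtain ⟨n, hn⟩ := gw_lim hq0 hq1 (fun n => F^[n] 0) (by simp) hrec
      (ENNReal.coe_pos.mpr hε) h1ε
    exact hn.trans (add_le_add_left (hge n) _)
  · push_neg at h1ε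
    exact h1ε.le.trans le_add_self
end

section
/- Let ξ be a probability distribution on ℕ with mean 1 and finite nonzero variance σ², and let (ξᵢ) be i.i.d. copies of ξ. Then the probability that a ξ-Galton–Watson tree has exactly n vertices equals n⁻¹ · ℙ(ξ₁ + ⋯ + ξₙ = n − 1). -/
open MeasureTheory ProbabilityTheory
open scoped ENNReal NNReal

namespace OtterDwassAux

noncomputable section

/-- weight of a list -/
def Wt (w : ℕ → ℝ≥0∞) (l : List ℕ) : ℝ≥0∞ := (l.map w).prod

/-- layered structure (BFS layers of a forest started with `z` roots) -/
def Layered : ℕ → List (List ℕ) → Prop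
  | z, [] => z = 0
  | z, l :: ls => 0 < z ∧ l.length = z ∧ Layered l.sum ls

def LaySet (z m : ℕ) : Set (List (List ℕ)) := {ll | Layered z ll ∧ ll.flatten.length = m}

/-- lists whose walk started at `z` first hits `0` at time exactly `m` -/
def FP (z m : ℕ) : Set (List ℕ) :=
  {l | l.length = m ∧ z + l.sum = m ∧ ∀ t < m, t < z + (l.take t).sum}

def Lset (nn s : ℕ) : Set (List ℕ) := {l | l.length = nn ∧ l.sum = s}

def A (w : ℕ → ℝ≥0∞) (z m : ℕ) : ℝ≥0∞ := ∑' ll : LaySet z m, Wt w (ll : List (List ℕ)).flatten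
def B (w : ℕ → ℝ≥0∞) (z m : ℕ) : ℝ≥0∞ := ∑' l : FP z m, Wt w (l : List ℕ)
def Call (w : ℕ → ℝ≥0∞) (nn s : ℕ) : ℝ≥0∞ := ∑' l : Lset nn s, Wt w (l : List ℕ)

lemma Wt_nil (w : ℕ → ℝ≥0∞) : Wt w List.nil = 1 := rfl

lemma Wt_append (w : ℕ → ℝ≥0∞) (l₁ l₂ : List ℕ) : Wt w (l₁ ++ l₂) = Wt w l₁ * Wt w l₂ := by
  simp [Wt, List.prod_append]

lemma Wt_rotate (w : ℕ → ℝ≥0∞) (l : List ℕ) (j : ℕ) (hj : j ≤ l.length) :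
    Wt w (l.rotate j) = Wt w l := by
  rw [List.rotate_eq_drop_append_take hj, Wt_append, mul_comm, ← Wt_append,
    List.take_append_drop]

lemma sum_rotate (l : List ℕ) (j : ℕ) (hj : j ≤ l.length) :
    (l.rotate j).sum = l.sum := by
  rw [List.rotate_eq_drop_append_take hj, List.sum_append, Nat.add_comm, ← List.sum_append,
    List.take_append_drop]

/-- finset-product over getD entries equals list product -/
lemma prod_getD {α M : Type*} [CommMonoid M] (l : List α) (f : α → M) (d : α) :
    ∏ i ∈ Finset.range l.length, f (l.getD i d) = (l.map f).prod := by
  induction l with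
  | nil => simp
  | cons a l ih =>
    rw [List.length_cons, Finset.prod_range_succ']
    simp only [List.getD_cons_succ, List.getD_cons_zero, ih]
    rw [List.map_cons, List.prod_cons, mul_comm]

lemma sum_getD (l : List ℕ) :
    ∑ i ∈ Finset.range l.length, l.getD i 0 = l.sum := by
  induction l with
  | nil => simp
  | cons a l ih =>
    rw [List.length_cons, Finset.sum_range_succ']
    simp only [List.getD_cons_succ, List.getD_cons_zero, ih, List.sum_cons]
    omega

lemma list_sum_range {M : Type*} [AddCommMonoid M] (f : ℕ → M) (z : ℕ) :
    ((List.range z).map f).sum = ∑ i ∈ Finset.range z, f i := by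
  induction z with
  | zero => simp
  | succ z ih => rw [List.range_succ, Finset.sum_range_succ, List.map_append, List.sum_append, ih]; simp

end

end OtterDwassAux
namespace OtterDwassAux
noncomputable section

lemma A_zero (w : ℕ → ℝ≥0∞) (m : ℕ) : A w 0 m = if m = 0 then 1 else 0 := by
  rcases Nat.eq_zero_or_pos m with rfl | hm
  · have hset : LaySet 0 0 = {List.nil} := by
      ext ll
      constructor
      · rintro ⟨h1, _⟩
        cases ll with
        | nil => rfl
        | cons l ls => exact absurd h1.1 (lt_irrefl 0)
      · rintro rfl
        exact ⟨rfl, rfl⟩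
    rw [A, hset, if_pos rfl]
    exact (tsum_singleton List.nil (fun ll => Wt w ll.flatten)).trans rfl
  · have hset : LaySet 0 m = (∅ : Set (List (List ℕ))) := by
      ext ll
      simp only [Set.mem_empty_iff_false, iff_false]
      rintro ⟨h1, h2⟩
      cases ll with
      | nil => simp at h2; omega
      | cons l ls => exact absurd h1.1 (lt_irrefl 0)
    rw [A, hset, if_neg (by omega)]
    exact tsum_empty

lemma B_zero (w : ℕ → ℝ≥0∞) (m : ℕ) : B w 0 m = if m = 0 then 1 else 0 := by
  rcases Nat.eq_zero_or_pos m with rfl | hm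
  · have hset : FP 0 0 = {List.nil} := by
      ext l
      constructor
      · rintro ⟨h1, _, _⟩
        exact List.length_eq_zero_iff.mp h1
      · rintro rfl
        exact ⟨rfl, rfl, by omega⟩
    rw [B, hset, if_pos rfl]
    exact (tsum_singleton List.nil (Wt w)).trans rfl
  · have hset : FP 0 m = (∅ : Set (List ℕ)) := by
      ext l
      simp only [Set.mem_empty_iff_false, iff_false]
      rintro ⟨h1, h2, h3⟩
      have := h3 0 hm
      simp at this
    rw [B, hset, if_neg (by omega)]
    exact tsum_empty

lemma A_lt (w : ℕ → ℝ≥0∞) {z m : ℕ} (hz : 0 < z) (h : m < z) : A w z m = 0 := by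
  have hset : LaySet z m = (∅ : Set (List (List ℕ))) := by
    ext ll
    simp only [Set.mem_empty_iff_false, iff_false]
    rintro ⟨h1, h2⟩
    cases ll with
    | nil =>
      have : z = 0 := h1
      omega
    | cons l ls =>
      obtain ⟨_, hlen, _⟩ := h1
      rw [List.flatten_cons, List.length_append] at h2
      omega
  rw [A, hset]
  exact tsum_empty

lemma B_lt (w : ℕ → ℝ≥0∞) {z m : ℕ} (hz : 0 < z) (h : m < z) : B w z m = 0 := by
  have hset : FP z m = (∅ : Set (List ℕ)) := by
    ext l
    simp only [Set.mem_empty_iff_false, iff_false]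
    rintro ⟨h1, h2, h3⟩
    omega
  rw [B, hset]
  exact tsum_empty

lemma A_rec (w : ℕ → ℝ≥0∞) {z m : ℕ} (hz : 0 < z) (hzm : z ≤ m) :
    A w z m = ∑' l : {l : List ℕ // l.length = z}, Wt w l.1 * A w l.1.sum (m - z) := by
  classical
  have key : ∀ (x : Σ l : {l : List ℕ // l.length = z}, LaySet l.1.sum (m - z)),
      (x.1.1 :: (x.2 : List (List ℕ))) ∈ LaySet z m := by
    rintro ⟨⟨l, hl⟩, ⟨ls, hls1, hls2⟩⟩
    refine ⟨⟨hz, hl, hls1⟩, ?_⟩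
    rw [List.flatten_cons, List.length_append, hl, hls2]
    omega
  let e : (Σ l : {l : List ℕ // l.length = z}, LaySet l.1.sum (m - z)) → LaySet z m :=
    fun x => ⟨x.1.1 :: x.2.1, key x⟩
  have hbij : Function.Bijective e := by
    constructor
    · rintro ⟨⟨l, hl⟩, ⟨ls, hls⟩⟩ ⟨⟨l', hl'⟩, ⟨ls', hls'⟩⟩ h
      simp only [e, Subtype.mk.injEq, List.cons.injEq] at h
      obtain ⟨h1, h2⟩ := h
      subst h1; subst h2; rfl
    · rintro ⟨ll, hll, hlen⟩
      cases ll with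
      | nil => exact absurd (show z = 0 from hll) (by omega)
      | cons l ls =>
        obtain ⟨hz', hlenl, hlay⟩ := hll
        rw [List.flatten_cons, List.length_append, hlenl] at hlen
        refine ⟨⟨⟨l, hlenl⟩, ⟨ls, hlay, by omega⟩⟩, rfl⟩
  rw [A, ← (Equiv.ofBijective e hbij).tsum_eq, ENNReal.tsum_sigma']
  refine tsum_congr fun l => ?_
  rw [A, ← ENNReal.tsum_mul_left]
  refine tsum_congr fun ls => ?_
  show Wt w (l.1 :: ls.1).flatten = _
  rw [List.flatten_cons, Wt_append]

lemma B_rec (w : ℕ → ℝ≥0∞) {z m : ℕ} (hz : 0 < z) (hzm : z ≤ m) :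
    B w z m = ∑' l : {l : List ℕ // l.length = z}, Wt w l.1 * B w l.1.sum (m - z) := by
  classical
  have key : ∀ (l : List ℕ), l.length = z → ∀ r ∈ FP l.sum (m - z), (l ++ r) ∈ FP z m := by
    rintro l hl r ⟨hr1, hr2, hr3⟩
    refine ⟨by rw [List.length_append, hl, hr1]; omega, by rw [List.sum_append]; omega, ?_⟩
    intro t ht
    rcases lt_or_ge t z with h | h
    · have : (List.take t (l ++ r)).sum + 0 ≤ z + (List.take t (l ++ r)).sum := by omega
      omega
    · -- t = z + u
      obtain ⟨u, rfl⟩ : ∃ u, t = z + u := ⟨t - z, by omega⟩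
      have htake : (l ++ r).take (z + u) = l ++ r.take u := by
        rw [show z = l.length from hl.symm]
        exact List.take_length_add_append u
      rw [htake, List.sum_append]
      have := hr3 u (by omega)
      omega
  let e : (Σ l : {l : List ℕ // l.length = z}, FP l.1.sum (m - z)) → FP z m :=
    fun x => ⟨x.1.1 ++ x.2.1, key x.1.1 x.1.2 x.2.1 x.2.2⟩
  have hbij : Function.Bijective e := by
    constructor
    · rintro ⟨⟨l, hl⟩, ⟨r, hr⟩⟩ ⟨⟨l', hl'⟩, ⟨r', hr'⟩⟩ h
      simp only [e, Subtype.mk.injEq] at h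
      obtain ⟨h1, h2⟩ := List.append_inj h (by rw [hl, hl'])
      subst h1; subst h2; rfl
    · rintro ⟨l, hlen, hsum, hcond⟩
      have hlt : (l.take z).length = z := by
        rw [List.length_take]; omega
      have hsplit : (l.take z).sum + (l.drop z).sum = l.sum := List.sum_take_add_sum_drop l z
      have hfp : l.drop z ∈ FP (l.take z).sum (m - z) := by
        refine ⟨by rw [List.length_drop]; omega, by omega, ?_⟩
        intro u hu
        have := hcond (z + u) (by omega)
        have htake : l.take (z + u) = l.take z ++ (l.drop z).take u := List.take_add
        rw [htake, List.sum_append] at this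
        omega
      exact ⟨⟨⟨l.take z, hlt⟩, ⟨l.drop z, hfp⟩⟩, Subtype.ext (List.take_append_drop z l)⟩
  rw [B, ← (Equiv.ofBijective e hbij).tsum_eq, ENNReal.tsum_sigma']
  refine tsum_congr fun l => ?_
  rw [B, ← ENNReal.tsum_mul_left]
  refine tsum_congr fun r => ?_
  show Wt w (l.1 ++ r.1) = _
  rw [Wt_append]

lemma A_eq_B (w : ℕ → ℝ≥0∞) : ∀ m z, A w z m = B w z m := by
  intro m
  induction m using Nat.strong_induction_on with
  | _ m ih =>
    intro z
    rcases Nat.eq_zero_or_pos z with rfl | hz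
    · rw [A_zero, B_zero]
    rcases lt_or_ge m z with h | h
    · rw [A_lt w hz h, B_lt w hz h]
    · rw [A_rec w hz h, B_rec w hz h]
      refine tsum_congr fun l => ?_
      rw [ih (m - z) (by omega) l.1.sum]

end
end OtterDwassAux

namespace OtterDwassAux
noncomputable section
lemma rot_unique {n d : ℕ} {l : List ℕ} (hn : 1 ≤ n) (hl : l ∈ FP 1 n) (hd : d < n)
    (h2 : l.rotate d ∈ FP 1 n) : d = 0 := by
  by_contra hd0
  have hlen : l.length = n := hl.1
  have hsum : 1 + l.sum = n := hl.2.1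
  have hr : l.rotate d = l.drop d ++ l.take d :=
    List.rotate_eq_drop_append_take (by omega)
  have hc := h2.2.2 (n - d) (by omega)
  have ht : (l.rotate d).take (n - d) = l.drop d := by
    rw [hr]
    exact List.take_left' (by rw [List.length_drop]; omega)
  rw [ht] at hc
  have hcl := hl.2.2 d (by omega)
  have hsplit : (l.take d).sum + (l.drop d).sum = l.sum := List.sum_take_add_sum_drop l d
  omega

lemma cycle (w : ℕ → ℝ≥0∞) {n : ℕ} (hn : 1 ≤ n) :
    Call w n (n - 1) = n * B w 1 n := by
  classical
  have key : ∀ (j : Fin n) (l : List ℕ), l ∈ FP 1 n → l.rotate j.1 ∈ Lset n (n - 1) := by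
    rintro j l ⟨h1, h2, _⟩
    exact ⟨by rw [List.length_rotate]; exact h1, by rw [sum_rotate l j.1 (by omega)]; omega⟩
  let e : Fin n × FP 1 n → Lset n (n - 1) := fun x => ⟨x.2.1.rotate x.1.1, key x.1 x.2.1 x.2.2⟩
  have hbij : Function.Bijective e := by
    constructor
    · rintro ⟨j, l, hl⟩ ⟨j', l', hl'⟩ h
      simp only [e, Subtype.mk.injEq] at h
      have hlen : l.length = n := hl.1
      have hlen' : l'.length = n := hl'.1
      -- l' = l.rotate ((j + (n - j')) % n)
      have hrot : l' = l.rotate ((j.1 + (n - j'.1)) % n) := by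
        have h1 : (l'.rotate j'.1).rotate (n - j'.1) = l' := by
          rw [List.rotate_rotate, show j'.1 + (n - j'.1) = n by omega, ← hlen',
            List.rotate_length]
        have h2 : l.rotate (j.1 + (n - j'.1)) = l' := by
          rw [← List.rotate_rotate, h, h1]
        have hml : (j.1 + (n - j'.1)) % n = (j.1 + (n - j'.1)) % l.length := by rw [hlen]
        rw [hml, List.rotate_mod, h2]
      have hd : (j.1 + (n - j'.1)) % n < n := Nat.mod_lt _ (by omega)
      have hfp' : l.rotate ((j.1 + (n - j'.1)) % n) ∈ FP 1 n := hrot ▸ hl'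
      have := rot_unique hn hl hd hfp'
      have hjj : j = j' := by
        have hdvd : n ∣ (j.1 + (n - j'.1)) := Nat.dvd_of_mod_eq_zero this
        obtain ⟨k, hk⟩ := hdvd
        have hj : j.1 < n := j.2
        have hj' : j'.1 < n := j'.2
        have : j.1 = j'.1 := by
          have hk1 : k = 1 := by
            rcases Nat.lt_or_ge k 2 with h' | h'
            · interval_cases k <;> omega
            · exfalso
              have : n * 2 ≤ n * k := Nat.mul_le_mul_left n h'
              omega
          subst hk1
          omega
        exact Fin.ext this
      subst hjj
      have hll : l = l' := by
        have h2 : (l.rotate j.1).rotate (n - j.1) = (l'.rotate j.1).rotate (n - j.1) := by rw [h]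
        rwa [List.rotate_rotate, List.rotate_rotate, show j.1 + (n - j.1) = n by omega,
          ← hlen, List.rotate_length, hlen, ← hlen', List.rotate_length] at h2
      subst hll
      rfl
    · rintro ⟨l, hlen, hsum⟩
      set p : ℕ → ℤ := fun t => ((l.take t).sum : ℤ) - t with hp
      obtain ⟨t₀, ht₀mem, ht₀min⟩ :=
        Finset.exists_min_image (Finset.range (n + 1)) p ⟨0, by simp⟩
      have ht₀n : t₀ ≤ n := by
        have := Finset.mem_range.mp ht₀mem
        omega
      have hex : ∃ t, p t ≤ p t₀ := ⟨t₀, le_refl _⟩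
      set t' := Nat.find hex with ht'
      have ht'min : p t' ≤ p t₀ := Nat.find_spec hex
      have ht'le : t' ≤ t₀ := Nat.find_min' hex (le_refl _)
      have hpn : p n = -1 := by
        show ((l.take n).sum : ℤ) - n = -1
        rw [List.take_of_length_le (le_of_eq hlen), hsum]
        omega
      have hp0 : p 0 = 0 := by simp [hp]
      have ht'pos : 0 < t' := by
        rcases Nat.eq_zero_or_pos t' with h0 | h0
        · exfalso
          have h1 : p t' = 0 := by rw [h0]; exact hp0
          have h2 : p t₀ ≤ p n := ht₀min n (Finset.mem_range.mpr (by omega))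
          omega
        · exact h0
      have ht'n : t' ≤ n := le_trans ht'le ht₀n
      have hmin : ∀ t, t ≤ n → p t' ≤ p t := by
        intro t ht
        exact le_trans ht'min (ht₀min t (Finset.mem_range.mpr (by omega)))
      have hstrict : ∀ v, v < t' → p t' < p v := by
        intro v hv
        have := Nat.find_min hex hv
        push_neg at this
        exact lt_of_le_of_lt ht'min this
      have hfp : l.rotate t' ∈ FP 1 n := by
        have hrotlen : (l.rotate t').length = n := by rw [List.length_rotate]; exact hlen
        have hrotsum : (l.rotate t').sum = n - 1 := by
          rw [sum_rotate l t' (by omega)]; exact hsum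
        refine ⟨hrotlen, by omega, ?_⟩
        intro t ht
        have hr : l.rotate t' = l.drop t' ++ l.take t' :=
          List.rotate_eq_drop_append_take (by omega)
        have hdroplen : (l.drop t').length = n - t' := by rw [List.length_drop]; omega
        have hsplit : (l.take t').sum + (l.drop t').sum = l.sum := List.sum_take_add_sum_drop l t'
        rcases le_or_gt t (n - t') with hc | hc
        · have htake : (l.rotate t').take t = (l.drop t').take t := by
            rw [hr]
            exact List.take_append_of_le_length (by omega)
          have hadd : (l.take (t' + t)).sum = (l.take t').sum + ((l.drop t').take t).sum := by
            rw [List.take_add, List.sum_append]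
          have hM := hmin (t' + t) (by omega)
          simp only [hp] at hM
          rw [htake]
          omega
        · set v := t - (n - t') with hv
          have hvpos : 0 < v := by omega
          have hvlt : v < t' := by omega
          have htake : (l.rotate t').take t = l.drop t' ++ l.take v := by
            rw [hr, show t = (l.drop t').length + v by omega, List.take_append,
              Nat.add_sub_cancel_left, List.take_of_length_le (by omega),
              List.take_take, min_eq_left (by omega)]
          have hS := hstrict v hvlt
          simp only [hp] at hS
          rw [htake, List.sum_append]
          omega
      refine ⟨⟨⟨(n - t') % n, Nat.mod_lt _ (by omega)⟩, ⟨l.rotate t', hfp⟩⟩, ?_⟩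
      have : (l.rotate t').rotate ((n - t') % n) = l := by
        have hlenrot : (l.rotate t').length = n := by rw [List.length_rotate]; exact hlen
        rw [← hlenrot, List.rotate_mod, hlenrot, List.rotate_rotate,
          show t' + (n - t') = n by omega, ← hlen, List.rotate_length]
      exact Subtype.ext this
  calc Call w n (n - 1) = ∑' x : Fin n × FP 1 n, Wt w ((e x) : List ℕ) :=
        ((Equiv.ofBijective e hbij).tsum_eq (fun x : Lset n (n-1) => Wt w (x : List ℕ))).symm
    _ = ∑' x : Fin n × FP 1 n, Wt w x.2.1 := by
        refine tsum_congr fun x => ?_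
        exact Wt_rotate w x.2.1 x.1.1 (by rw [x.2.2.1]; omega)
    _ = ∑' (j : Fin n), ∑' (l : FP 1 n), Wt w l.1 :=
        ENNReal.tsum_prod (f := fun (_ : Fin n) (l : FP 1 n) => Wt w l.1)
    _ = n * B w 1 n := by
        rw [tsum_fintype, Finset.sum_const, Finset.card_univ, Fintype.card_fin, nsmul_eq_mul]
        rfl

end
end OtterDwassAux
namespace OtterDwassAux
noncomputable section
lemma enat_summable {ι : Type*} (f : ι → ℕ∞) : Summable f :=
  ⟨⨆ s : Finset ι, ∑ i ∈ s, f i, tendsto_atTop_iSup fun _ _ hst => Finset.sum_le_sum_of_subset hst⟩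

lemma getD_map_range {α : Type*} (f : ℕ → α) {m k : ℕ} (d : α) (h : k < m) :
    ((List.range m).map f).getD k d = f k := by
  rw [List.getD_eq_getElem _ _ (by simpa using h)]
  simp

lemma getD_length (ll : List (List ℕ)) (k : ℕ) :
    (ll.getD k List.nil).length = (ll.map List.length).getD k 0 := by
  rcases lt_or_ge k ll.length with h | h
  · rw [List.getD_eq_getElem _ _ h, List.getD_eq_getElem _ _ (by simpa using h)]
    simp
  · rw [List.getD_eq_default _ _ h, List.getD_eq_default _ _ (by simpa using h)]
    rfl

lemma sum_len (L : List (List ℕ)) :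
    ∑ k ∈ Finset.range L.length, (L.getD k List.nil).length = (L.map List.length).sum := by
  have h := sum_getD (L.map List.length)
  rw [List.length_map] at h
  rw [← h]
  exact Finset.sum_congr rfl fun k _ => getD_length L k

lemma layered_len_pos : ∀ (ll : List (List ℕ)) (z : ℕ), Layered z ll →
    ∀ k < ll.length, 0 < (ll.getD k List.nil).length := by
  intro ll
  induction ll with
  | nil => intro z _ k hk; simp at hk
  | cons l ls ih =>
    intro z h k hk
    obtain ⟨hz, hl, h'⟩ := h
    cases k with
    | zero => rw [List.getD_cons_zero, hl]; exact hz
    | succ k => exact ih l.sum h' k (by simpa using hk)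

lemma layered_length_le : ∀ (ll : List (List ℕ)) (z : ℕ), Layered z ll →
    ll.length ≤ ll.flatten.length := by
  intro ll
  induction ll with
  | nil => intro z _; simp
  | cons l ls ih =>
    intro z h
    obtain ⟨hz, hl, h'⟩ := h
    rw [List.flatten_cons, List.length_append, List.length_cons]
    have := ih l.sum h'
    omega

section Prob
variable {Ω : Type*} [MeasureSpace Ω]

/-- the event that finitely many variables take prescribed values -/
def ME (ξ : ℕ → ℕ → Ω → ℕ) (s : Finset (ℕ × ℕ)) (a : ℕ × ℕ → ℕ) : Set Ω :=
  {ω | ∀ p ∈ s, ξ p.1 p.2 ω = a p}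

lemma ME_eq_iInter (ξ : ℕ → ℕ → Ω → ℕ) (s : Finset (ℕ × ℕ)) (a : ℕ × ℕ → ℕ) :
    ME ξ s a = ⋂ p ∈ s, (fun p : ℕ × ℕ => fun ω => ξ p.1 p.2 ω) p ⁻¹' {a p} := by
  ext ω; simp [ME]

lemma ME_measurable (ξ : ℕ → ℕ → Ω → ℕ) (hmeas : ∀ n i, Measurable (ξ n i))
    (s : Finset (ℕ × ℕ)) (a : ℕ × ℕ → ℕ) : MeasurableSet (ME ξ s a) := by
  rw [ME_eq_iInter]
  exact MeasurableSet.biInter s.countable_toSet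
    (fun p _ => (hmeas p.1 p.2) (measurableSet_singleton _))

variable [IsProbabilityMeasure (ℙ : Measure Ω)]

lemma ME_prob (μ : Measure ℕ) (ξ : ℕ → ℕ → Ω → ℕ)
    (hmeas : ∀ n i, Measurable (ξ n i))
    (hindep : iIndepFun (fun p : ℕ × ℕ => ξ p.1 p.2) ℙ)
    (hdist : ∀ n i, Measure.map (ξ n i) ℙ = μ)
    (s : Finset (ℕ × ℕ)) (a : ℕ × ℕ → ℕ) :
    ℙ (ME ξ s a) = ∏ p ∈ s, μ {a p} := by
  rw [ME_eq_iInter,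
    hindep.measure_inter_preimage_eq_mul s (sets := fun p => {a p})
      (fun p _ => measurableSet_singleton _)]
  refine Finset.prod_congr rfl fun p _ => ?_
  rw [← hdist p.1 p.2, Measure.map_apply (hmeas p.1 p.2) (measurableSet_singleton _)]

/-- measure of the event that a sum of distinct iid variables equals `s` -/
lemma meas_sum_event (μ : Measure ℕ) (ξ : ℕ → ℕ → Ω → ℕ)
    (hmeas : ∀ n i, Measurable (ξ n i))
    (hindep : iIndepFun (fun p : ℕ × ℕ => ξ p.1 p.2) ℙ)
    (hdist : ∀ n i, Measure.map (ξ n i) ℙ = μ)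
    (nn s : ℕ) :
    ℙ {ω | (∑ i ∈ Finset.range nn, ξ 0 i ω) = s} = Call (fun k => μ {k}) nn s := by
  classical
  have hset : {ω | (∑ i ∈ Finset.range nn, ξ 0 i ω) = s} =
      ⋃ l : Lset nn s, ME ξ ((Finset.range nn).image (fun i => (0, i)))
        (fun p => (l : List ℕ).getD p.2 0) := by
    ext ω
    simp only [Set.mem_setOf_eq, Set.mem_iUnion]
    constructor
    · intro h
      refine ⟨⟨(List.range nn).map (fun i => ξ 0 i ω), by simp, by rw [list_sum_range]; exact h⟩, ?_⟩
      intro p hp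
      simp only [Finset.mem_image, Finset.mem_range] at hp
      obtain ⟨i, hi, rfl⟩ := hp
      exact (getD_map_range (fun i => ξ 0 i ω) 0 hi).symm
    · rintro ⟨⟨l, hlen, hsum⟩, hME⟩
      have hc : ∀ i ∈ Finset.range nn, ξ 0 i ω = l.getD i 0 := by
        intro i hi
        exact hME (0, i) (Finset.mem_image.mpr ⟨i, hi, rfl⟩)
      rw [Finset.sum_congr rfl hc, ← hlen, sum_getD, hsum]
  rw [hset, measure_iUnion ?_ (fun l => ME_measurable ξ hmeas _ _)]
  · rw [Call]
    refine tsum_congr fun l => ?_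
    rw [ME_prob μ ξ hmeas hindep hdist,
      Finset.prod_image (fun i _ j _ h => by simpa using h)]
    have : ∏ i ∈ Finset.range nn, μ {(l : List ℕ).getD i 0}
        = ∏ i ∈ Finset.range (l : List ℕ).length, (fun k => μ {k}) ((l : List ℕ).getD i 0) := by
      rw [l.2.1]
    rw [this]
    exact prod_getD (l : List ℕ) (fun k => μ {k}) 0
  · intro l₁ l₂ hne
    refine Set.disjoint_left.mpr fun ω h₁ h₂ => hne ?_
    refine Subtype.ext (List.ext_getElem (by rw [l₁.2.1, l₂.2.1]) ?_)
    intro i hi₁ hi₂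
    have e₁ := h₁ (0, i) (Finset.mem_image.mpr ⟨i, by rw [Finset.mem_range, ← l₁.2.1]; exact hi₁, rfl⟩)
    have e₂ := h₂ (0, i) (Finset.mem_image.mpr ⟨i, by rw [Finset.mem_range, ← l₂.2.1]; exact hi₂, rfl⟩)
    dsimp only at e₁ e₂
    rw [List.getD_eq_getElem _ _ hi₁] at e₁
    rw [List.getD_eq_getElem _ _ hi₂] at e₂
    rw [← e₁, ← e₂]

end Prob

section Tree
variable {Ω : Type*} [MeasureSpace Ω]

lemma Z_death (ξ : ℕ → ℕ → Ω → ℕ) (Z : ℕ → Ω → ℕ)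
    (hZ : ∀ n ω, Z (n + 1) ω = ∑ i ∈ Finset.range (Z n ω), ξ n i ω)
    {ω : Ω} {j : ℕ} (h : Z j ω = 0) : ∀ k, j ≤ k → Z k ω = 0 := by
  intro k hk
  obtain ⟨t, rfl⟩ := Nat.exists_eq_add_of_le hk
  induction t with
  | zero => exact h
  | succ t ih =>
    rw [show j + (t + 1) = (j + t) + 1 by omega, hZ, ih (by omega)]
    simp

lemma Z_of_layers (ξ : ℕ → ℕ → Ω → ℕ) (Z : ℕ → Ω → ℕ)
    (hZ : ∀ n ω, Z (n + 1) ω = ∑ i ∈ Finset.range (Z n ω), ξ n i ω) :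
    ∀ (ll : List (List ℕ)) (z r : ℕ) (ω : Ω), Layered z ll →
      (∀ k < ll.length, ∀ i < (ll.getD k List.nil).length,
        ξ (r + k) i ω = (ll.getD k List.nil).getD i 0) →
      Z r ω = z → ∀ k, Z (r + k) ω = (ll.getD k List.nil).length := by
  intro ll
  induction ll with
  | nil =>
    intro z r ω hlay _ hzr k
    have hz0 : z = 0 := hlay
    have : Z (r + k) ω = 0 := Z_death ξ Z hZ (by rw [hzr, hz0]) (r + k) (by omega)
    simp [this]
  | cons l ls ih =>
    intro z r ω hlay hmatch hzr k
    obtain ⟨hzpos, hlenl, hlay'⟩ := hlay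
    cases k with
    | zero =>
      rw [List.getD_cons_zero, Nat.add_zero, hzr, hlenl]
    | succ k =>
      have hZr1 : Z (r + 1) ω = l.sum := by
        rw [hZ r ω, hzr, ← hlenl]
        have hc : ∀ i ∈ Finset.range l.length, ξ r i ω = l.getD i 0 := by
          intro i hi
          have := hmatch 0 (by simp) i (by simpa using Finset.mem_range.mp hi)
          simpa using this
        rw [Finset.sum_congr rfl hc, sum_getD]
      have hm' : ∀ k' < ls.length, ∀ i < (ls.getD k' List.nil).length,
          ξ (r + 1 + k') i ω = (ls.getD k' List.nil).getD i 0 := by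
        intro k' hk' i hi
        have := hmatch (k' + 1) (by simp; omega) i (by simpa using hi)
        rw [show r + (k' + 1) = r + 1 + k' by omega] at this
        simpa using this
      have := ih l.sum (r + 1) ω hlay' hm' hZr1 k
      rw [show r + (k + 1) = r + 1 + k by omega]
      simpa using this

lemma E_char (ξ : ℕ → ℕ → Ω → ℕ) (Z : ℕ → Ω → ℕ)
    (hZ : ∀ n ω, Z (n + 1) ω = ∑ i ∈ Finset.range (Z n ω), ξ n i ω)
    (n : ℕ) (ω : Ω) :
    (∑' k, (Z k ω : ℕ∞)) = (n : ℕ∞) ↔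
      (∑ k ∈ Finset.range n, Z k ω = n ∧ Z n ω = 0) := by
  constructor
  · intro h
    have hZn : Z n ω = 0 := by
      by_contra h0
      have hall : ∀ k, k ≤ n → 1 ≤ Z k ω := by
        intro k hk
        by_contra hk0
        exact h0 (Z_death ξ Z hZ (by omega : Z k ω = 0) n hk)
      have hle : (∑ k ∈ Finset.range (n + 1), (Z k ω : ℕ∞)) ≤ ∑' k, (Z k ω : ℕ∞) :=
        Summable.sum_le_tsum _ (fun _ _ => zero_le) (enat_summable _)
      have hge : ((n + 1 : ℕ) : ℕ∞) ≤ ∑ k ∈ Finset.range (n + 1), (Z k ω : ℕ∞) := by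
        calc ((n + 1 : ℕ) : ℕ∞) = ∑ _k ∈ Finset.range (n + 1), (1 : ℕ∞) := by simp
          _ ≤ ∑ k ∈ Finset.range (n + 1), (Z k ω : ℕ∞) := by
              refine Finset.sum_le_sum fun k hk => ?_
              have := hall k (by simpa [Nat.lt_succ_iff] using hk)
              exact_mod_cast this
      rw [h] at hle
      have : ((n + 1 : ℕ) : ℕ∞) ≤ (n : ℕ∞) := le_trans hge hle
      have : n + 1 ≤ n := by exact_mod_cast this
      omega
    have hz : ∀ k ∉ Finset.range n, (Z k ω : ℕ∞) = 0 := by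
      intro k hk
      rw [Finset.mem_range, not_lt] at hk
      rw [Z_death ξ Z hZ hZn k hk]
      rfl
    rw [tsum_eq_sum hz] at h
    have : ((∑ k ∈ Finset.range n, Z k ω : ℕ) : ℕ∞) = ((n : ℕ) : ℕ∞) := by
      rw [← h]
      push_cast
      rfl
    exact ⟨by exact_mod_cast this, hZn⟩
  · rintro ⟨hsum, hZn⟩
    have hz : ∀ k ∉ Finset.range n, (Z k ω : ℕ∞) = 0 := by
      intro k hk
      rw [Finset.mem_range, not_lt] at hk
      rw [Z_death ξ Z hZ hZn k hk]
      rfl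
    have hcast : ((∑ k ∈ Finset.range n, Z k ω : ℕ) : ℕ∞) = ∑ k ∈ Finset.range n, (Z k ω : ℕ∞) := by
      push_cast
      rfl
    rw [tsum_eq_sum hz, ← hcast, hsum]

/-- the index finset of a layered table -/
def SL (ll : List (List ℕ)) : Finset (ℕ × ℕ) :=
  (Finset.range ll.length).biUnion
    (fun k => (Finset.range (ll.getD k List.nil).length).image (fun i => (k, i)))

lemma mem_SL {ll : List (List ℕ)} {k i : ℕ} :
    (k, i) ∈ SL ll ↔ k < ll.length ∧ i < (ll.getD k List.nil).length := by
  simp only [SL, Finset.mem_biUnion, Finset.mem_range, Finset.mem_image, Prod.mk.injEq]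
  constructor
  · rintro ⟨k', hk', i', hi', rfl, rfl⟩
    exact ⟨hk', hi'⟩
  · rintro ⟨hk, hi⟩
    exact ⟨k, hk, i, hi, rfl, rfl⟩

def aL (ll : List (List ℕ)) : ℕ × ℕ → ℕ := fun p => (ll.getD p.1 List.nil).getD p.2 0

lemma MEL_mem {ξ : ℕ → ℕ → Ω → ℕ} {ll : List (List ℕ)} {ω : Ω} :
    ω ∈ ME ξ (SL ll) (aL ll) ↔
      ∀ k < ll.length, ∀ i < (ll.getD k List.nil).length,
        ξ k i ω = (ll.getD k List.nil).getD i 0 := by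
  constructor
  · intro h k hk i hi
    exact h (k, i) (mem_SL.mpr ⟨hk, hi⟩)
  · rintro h ⟨k, i⟩ hp
    obtain ⟨hk, hi⟩ := mem_SL.mp hp
    exact h k hk i hi

variable [IsProbabilityMeasure (ℙ : Measure Ω)]

lemma MEL_prob (μ : Measure ℕ) (ξ : ℕ → ℕ → Ω → ℕ)
    (hmeas : ∀ n i, Measurable (ξ n i))
    (hindep : iIndepFun (fun p : ℕ × ℕ => ξ p.1 p.2) ℙ)
    (hdist : ∀ n i, Measure.map (ξ n i) ℙ = μ)
    (ll : List (List ℕ)) :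
    ℙ (ME ξ (SL ll) (aL ll)) = Wt (fun k => μ {k}) ll.flatten := by
  classical
  rw [ME_prob μ ξ hmeas hindep hdist, SL, Finset.prod_biUnion]
  · have h1 : ∀ k ∈ Finset.range ll.length,
        (∏ p ∈ (Finset.range (ll.getD k List.nil).length).image (fun i => (k, i)), μ {aL ll p})
          = Wt (fun j => μ {j}) (ll.getD k List.nil) := by
      intro k _
      rw [Finset.prod_image (fun i _ j _ h => by simpa using h)]
      exact prod_getD (ll.getD k List.nil) (fun j => μ {j}) 0
    rw [Finset.prod_congr rfl h1]
    have h2 : Wt (fun k => μ {k}) ll.flatten = (ll.map (Wt (fun k => μ {k}))).prod := by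
      rw [Wt, List.map_flatten, List.prod_flatten, List.map_map]
      rfl
    rw [h2, ← prod_getD ll (Wt (fun k => μ {k})) List.nil]
  · intro x hx y hy hxy
    refine Finset.disjoint_left.mpr fun p hp hp' => ?_
    simp only [Finset.mem_image] at hp hp'
    obtain ⟨i, _, rfl⟩ := hp
    obtain ⟨i', _, h⟩ := hp'
    exact hxy (by simpa using (congrArg Prod.fst h).symm)

lemma match_eq (ξ : ℕ → ℕ → Ω → ℕ) (Z : ℕ → Ω → ℕ)
    (hZ0 : ∀ ω, Z 0 ω = 1)
    (hZ : ∀ n ω, Z (n + 1) ω = ∑ i ∈ Finset.range (Z n ω), ξ n i ω)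
    (ω : Ω) (ll₁ ll₂ : List (List ℕ))
    (h₁ : Layered 1 ll₁) (h₂ : Layered 1 ll₂)
    (m₁ : ∀ k < ll₁.length, ∀ i < (ll₁.getD k List.nil).length,
      ξ k i ω = (ll₁.getD k List.nil).getD i 0)
    (m₂ : ∀ k < ll₂.length, ∀ i < (ll₂.getD k List.nil).length,
      ξ k i ω = (ll₂.getD k List.nil).getD i 0) : ll₁ = ll₂ := by
  have d₁ : ∀ k, Z k ω = (ll₁.getD k List.nil).length := fun k => by
    have := Z_of_layers ξ Z hZ ll₁ 1 0 ω h₁ (by simpa using m₁) (hZ0 ω) k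
    simpa using this
  have d₂ : ∀ k, Z k ω = (ll₂.getD k List.nil).length := fun k => by
    have := Z_of_layers ξ Z hZ ll₂ 1 0 ω h₂ (by simpa using m₂) (hZ0 ω) k
    simpa using this
  have dlen : ∀ k, (ll₁.getD k List.nil).length = (ll₂.getD k List.nil).length :=
    fun k => (d₁ k).symm.trans (d₂ k)
  have hlen : ll₁.length = ll₂.length := by
    by_contra hne
    rcases Nat.lt_or_ge ll₁.length ll₂.length with h | h
    · have e1 : (ll₁.getD ll₁.length List.nil).length = 0 := by
        rw [List.getD_eq_default _ _ (le_refl _)]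
        rfl
      have e2 : 0 < (ll₂.getD ll₁.length List.nil).length :=
        layered_len_pos ll₂ 1 h₂ ll₁.length h
      have := dlen ll₁.length
      omega
    · rcases Nat.lt_or_ge ll₂.length ll₁.length with h' | h'
      · have e1 : (ll₂.getD ll₂.length List.nil).length = 0 := by
          rw [List.getD_eq_default _ _ (le_refl _)]
          rfl
        have e2 : 0 < (ll₁.getD ll₂.length List.nil).length :=
          layered_len_pos ll₁ 1 h₁ ll₂.length h'
        have := dlen ll₂.length
        omega
      · omega
  refine List.ext_getElem hlen ?_
  intro k hk₁ hk₂
  have hlk : ll₁[k].length = ll₂[k].length := by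
    have := dlen k
    rwa [List.getD_eq_getElem _ _ hk₁, List.getD_eq_getElem _ _ hk₂] at this
  refine List.ext_getElem hlk ?_
  intro i hi₁ hi₂
  have e₁ := m₁ k hk₁ i (by rwa [List.getD_eq_getElem _ _ hk₁])
  have e₂ := m₂ k hk₂ i (by rwa [List.getD_eq_getElem _ _ hk₂])
  rw [List.getD_eq_getElem _ _ hk₁] at e₁
  rw [List.getD_eq_getElem _ _ hk₂] at e₂
  rw [List.getD_eq_getElem _ _ hi₁] at e₁
  rw [List.getD_eq_getElem _ _ hi₂] at e₂
  rw [← e₁, ← e₂]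

lemma exists_layers (ξ : ℕ → ℕ → Ω → ℕ) (Z : ℕ → Ω → ℕ)
    (hZ0 : ∀ ω, Z 0 ω = 1)
    (hZ : ∀ n ω, Z (n + 1) ω = ∑ i ∈ Finset.range (Z n ω), ξ n i ω)
    {ω : Ω} {n : ℕ}
    (hsum : ∑ k ∈ Finset.range n, Z k ω = n) (hZn : Z n ω = 0) :
    ∃ ll ∈ LaySet 1 n,
      ∀ k < ll.length, ∀ i < (ll.getD k List.nil).length,
        ξ k i ω = (ll.getD k List.nil).getD i 0 := by
  classical
  have hex : ∃ m, Z m ω = 0 := ⟨n, hZn⟩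
  set m := Nat.find hex with hm
  have hZm : Z m ω = 0 := Nat.find_spec hex
  have hmn : m ≤ n := Nat.find_min' hex hZn
  have hpos : ∀ k, k < m → 0 < Z k ω := by
    intro k hk
    have := Nat.find_min hex hk
    omega
  set layer : ℕ → List ℕ := fun k => (List.range (Z k ω)).map (fun i => ξ k i ω) with hlayer
  have hlaysum : ∀ k, (layer k).sum = Z (k + 1) ω := by
    intro k
    rw [hlayer]
    simp only
    rw [list_sum_range]
    exact (hZ k ω).symm
  have hlaylen : ∀ k, (layer k).length = Z k ω := by
    intro k
    simp [hlayer]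
  have haux : ∀ j, j ≤ m →
      Layered (Z (m - j) ω) ((List.range j).map (fun k => layer (m - j + k))) := by
    intro j
    induction j with
    | zero =>
      intro _
      show Layered (Z (m - 0) ω) (List.nil)
      show Z (m - 0) ω = 0
      simpa using hZm
    | succ j ihj =>
      intro hjm
      have hmj : m - (j + 1) + 1 = m - j := by omega
      rw [List.range_succ_eq_map, List.map_cons, List.map_map]
      have hcomp : ((fun k => layer (m - (j + 1) + k)) ∘ Nat.succ) = fun k => layer (m - j + k) := by
        funext k
        simp only [Function.comp]
        congr 1
        omega
      rw [hcomp]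
      refine ⟨hpos _ (by omega), hlaylen _, ?_⟩
      rw [Nat.add_zero, hlaysum, hmj]
      exact ihj (by omega)
  have hlay : Layered 1 ((List.range m).map layer) := by
    have := haux m (le_refl m)
    rw [Nat.sub_self] at this
    rw [show ((List.range m).map layer) = (List.range m).map (fun k => layer (0 + k)) by
      refine List.map_congr_left fun k _ => ?_
      rw [Nat.zero_add]]
    rwa [hZ0 ω] at this
  refine ⟨(List.range m).map layer, ⟨hlay, ?_⟩, ?_⟩
  · rw [List.length_flatten, List.map_map]
    have : (List.length ∘ layer) = fun k => Z k ω := by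
      funext k
      exact hlaylen k
    rw [this, list_sum_range]
    rw [← hsum]
    refine Finset.sum_subset (Finset.range_subset_range.mpr hmn) ?_
    intro k _ hk
    rw [Finset.mem_range, not_lt] at hk
    exact Z_death ξ Z hZ hZm k hk
  · intro k hk i hi
    rw [List.length_map, List.length_range] at hk
    rw [getD_map_range layer List.nil hk] at hi ⊢
    rw [hlaylen] at hi
    rw [hlayer]
    simp only
    rw [getD_map_range (fun i => ξ k i ω) 0 hi]

lemma meas_tree_event (μ : Measure ℕ) (ξ : ℕ → ℕ → Ω → ℕ)
    (hmeas : ∀ n i, Measurable (ξ n i))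
    (hindep : iIndepFun (fun p : ℕ × ℕ => ξ p.1 p.2) ℙ)
    (hdist : ∀ n i, Measure.map (ξ n i) ℙ = μ)
    (Z : ℕ → Ω → ℕ)
    (hZ0 : ∀ ω, Z 0 ω = 1)
    (hZ : ∀ n ω, Z (n + 1) ω = ∑ i ∈ Finset.range (Z n ω), ξ n i ω)
    (n : ℕ) (hn : 1 ≤ n) :
    ℙ {ω | (∑' k, (Z k ω : ℕ∞)) = (n : ℕ∞)} = A (fun k => μ {k}) 1 n := by
  classical
  have hset : {ω | (∑' k, (Z k ω : ℕ∞)) = (n : ℕ∞)} =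
      ⋃ ll : LaySet 1 n, ME ξ (SL (ll : List (List ℕ))) (aL (ll : List (List ℕ))) := by
    ext ω
    rw [Set.mem_setOf_eq, E_char ξ Z hZ n ω]
    constructor
    · rintro ⟨hsum, hZn⟩
      obtain ⟨ll, hmem, hmatch⟩ := exists_layers ξ Z hZ0 hZ hsum hZn
      exact Set.mem_iUnion.mpr ⟨⟨ll, hmem⟩, MEL_mem.mpr hmatch⟩
    · intro h
      obtain ⟨⟨ll, hmem⟩, hME⟩ := Set.mem_iUnion.mp h
      have hmatch := MEL_mem.mp hME
      have d : ∀ k, Z k ω = (ll.getD k List.nil).length := fun k => by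
        have := Z_of_layers ξ Z hZ ll 1 0 ω hmem.1 (by simpa using hmatch) (hZ0 ω) k
        simpa using this
      have hLle : ll.length ≤ n := by
        have h1 := layered_length_le ll 1 hmem.1
        have h2 := hmem.2
        omega
      constructor
      · have h1 : ∑ k ∈ Finset.range n, Z k ω
            = ∑ k ∈ Finset.range ll.length, (ll.getD k List.nil).length := by
          rw [Finset.sum_congr rfl (fun k _ => d k)]
          symm
          refine Finset.sum_subset (Finset.range_subset_range.mpr hLle) ?_
          intro k _ hk
          rw [Finset.mem_range, not_lt] at hk
          rw [List.getD_eq_default _ _ hk]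
          rfl
        rw [h1, sum_len, ← List.length_flatten, hmem.2]
      · rw [d n, List.getD_eq_default _ _ hLle]
        rfl
  rw [hset, measure_iUnion ?_ (fun ll => ME_measurable ξ hmeas _ _)]
  · rw [A]
    exact tsum_congr fun ll => MEL_prob μ ξ hmeas hindep hdist ll.1
  · intro ll₁ ll₂ hne
    refine Set.disjoint_left.mpr fun ω h₁ h₂ => hne ?_
    exact Subtype.ext (match_eq ξ Z hZ0 hZ ω ll₁.1 ll₂.1 ll₁.2.1 ll₂.2.1
      (MEL_mem.mp h₁) (MEL_mem.mp h₂))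

end Tree

end
end OtterDwassAux

/-- Otter–Dwass / cycle lemma: for a critical offspring distribution `μ` (mean `1`,
finite nonzero variance), the probability that the total progeny of the Galton–Watson
branching process equals `n` is `n⁻¹` times the probability that the sum of `n` i.i.d.
offspring variables equals `n - 1`. -/
theorem galtonWatson_size_eq_cycle_lemma
    {Ω : Type*} [MeasureSpace Ω] [IsProbabilityMeasure (ℙ : Measure Ω)]
    (μ : Measure ℕ) [IsProbabilityMeasure μ]
    (ξ : ℕ → ℕ → Ω → ℕ)
    (hmeas : ∀ n i, Measurable (ξ n i))
    (hindep : iIndepFun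
      (fun p : ℕ × ℕ => ξ p.1 p.2) ℙ)
    (hdist : ∀ n i, Measure.map (ξ n i) ℙ = μ)
    (hmean : ∫⁻ k, (k : ℝ≥0∞) ∂μ = 1)
    (hvarfin : ∫⁻ k, ((k : ℝ≥0∞)) ^ 2 ∂μ < ∞)
    (hvarpos : μ {1} < 1)
    (Z : ℕ → Ω → ℕ)
    (hZ0 : ∀ ω, Z 0 ω = 1)
    (hZ : ∀ n ω, Z (n + 1) ω = ∑ i ∈ Finset.range (Z n ω), ξ n i ω)
    (n : ℕ) (hn : 1 ≤ n) :
    ℙ {ω | (∑' k, (Z k ω : ℕ∞)) = (n : ℕ∞)} =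
      (n : ℝ≥0∞)⁻¹ * ℙ {ω | (∑ i ∈ Finset.range n, ξ 0 i ω) = n - 1} := by
  have h1 := OtterDwassAux.meas_tree_event μ ξ hmeas hindep hdist Z hZ0 hZ n hn
  have h2 := OtterDwassAux.meas_sum_event μ ξ hmeas hindep hdist n (n - 1)
  rw [h1, h2, OtterDwassAux.A_eq_B (fun k => μ {k}) n 1,
    OtterDwassAux.cycle (fun k => μ {k}) hn, ← mul_assoc,
    ENNReal.inv_mul_cancel (by exact_mod_cast (by omega : n ≠ 0)) (ENNReal.natCast_ne_top n),
    one_mul]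
end

section
/- Let ξ be an ℕ-valued random variable with ℙ(ξ=1)<1, not almost surely positive (i.e., ℙ(ξ=0)>0), with span d = gcd{k − ℓ : ℙ(ξ=k)>0, ℙ(ξ=ℓ)>0}. Then for all sufficiently large n with n ≡ 1 (mod d), the probability that a ξ-Galton–Watson tree has exactly n vertices is positive. -/
open MeasureTheory ProbabilityTheory
open scoped ENNReal NNReal

lemma aux_sum_range_getD (l : List ℕ) :
    ∑ t ∈ Finset.range l.length, l.getD t 0 = l.sum := by
  induction l with
  | nil => simp
  | cons a l ih =>
    rw [List.length_cons, Finset.sum_range_succ']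
    simp only [List.getD_cons_succ, List.getD_cons_zero, List.sum_cons, ih]
    omega

lemma aux_semigroup (d q : ℕ) (M : AddSubmonoid ℕ) (hQ : d * q ∈ M) (hP : d * q + d ∈ M) :
    ∀ k, q * q ≤ k → d * k ∈ M := by
  intro k hk
  rcases Nat.eq_zero_or_pos q with hq | hq
  · subst hq
    simp only [Nat.mul_zero, Nat.zero_add] at hP
    have : d * k = k • d := by simp [nsmul_eq_mul, Nat.mul_comm]
    rw [this]; exact M.nsmul_mem hP k
  · have hr : k % q < q := Nat.mod_lt _ hq
    have hs : q ≤ k / q := (Nat.le_div_iff_mul_le hq).2 (by nlinarith)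
    have hrs : k % q ≤ k / q := le_trans hr.le hs
    obtain ⟨u, hu⟩ := Nat.exists_eq_add_of_le hrs
    have hk' : k = q * (k % q + u) + k % q := by
      rw [← hu]; exact (Nat.div_add_mod k q).symm
    have key : d * k = u • (d * q) + (k % q) • (d * q + d) := by
      simp only [smul_eq_mul]
      conv_lhs => rw [hk']
      ring
    rw [key]
    exact M.add_mem (M.nsmul_mem hQ u) (M.nsmul_mem hP (k % q))

/-- The set of differences of elements of an additive submonoid of `ℕ`, as a subgroup of `ℤ`. -/
def diffSubgroup (M : AddSubmonoid ℕ) : AddSubgroup ℤ where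
  carrier := {x | ∃ P ∈ M, ∃ Q ∈ M, x = (P : ℤ) - Q}
  zero_mem' := ⟨0, M.zero_mem, 0, M.zero_mem, by ring⟩
  add_mem' := by
    rintro x y ⟨P, hP, Q, hQ, rfl⟩ ⟨P', hP', Q', hQ', rfl⟩
    exact ⟨P + P', M.add_mem hP hP', Q + Q', M.add_mem hQ hQ', by push_cast; ring⟩
  neg_mem' := by
    rintro x ⟨P, hP, Q, hQ, rfl⟩
    exact ⟨Q, hQ, P, hP, by ring⟩

lemma aux_exists_PQ (A : Set ℕ) (a : ℕ) (ha : a ∈ A) (ha0 : a ≠ 0) (d : ℕ)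
    (hdvd : ∀ m ∈ A, d ∣ m) (hmax : ∀ e : ℕ, (∀ m ∈ A, e ∣ m) → e ≤ d) :
    ∃ Q ∈ AddSubmonoid.closure A, Q + d ∈ AddSubmonoid.closure A := by
  set G : AddSubgroup ℤ := AddSubgroup.closure ((↑) '' A) with hGdef
  obtain ⟨g, hG⟩ := Int.subgroup_cyclic G
  have hmemG : ∀ m ∈ A, (m : ℤ) ∈ G := fun m hm =>
    AddSubgroup.subset_closure ⟨m, hm, rfl⟩
  have hgdvd : ∀ m ∈ A, g ∣ (m : ℤ) := by
    intro m hm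
    have := hmemG m hm
    rw [hG, ← AddSubgroup.zmultiples_eq_closure, Int.mem_zmultiples_iff] at this
    exact this
  have hgdvd' : ∀ m ∈ A, g.natAbs ∣ m := by
    intro m hm
    have := Int.natAbs_dvd_natAbs.2 (hgdvd m hm)
    simpa using this
  have hg0 : g ≠ 0 := by
    intro h
    have := hgdvd a ha
    rw [h] at this
    exact ha0 (by exact_mod_cast (zero_dvd_iff.1 this))
  have hled : g.natAbs ≤ d := hmax _ hgdvd'
  have hdg : (d : ℤ) ∣ g := by
    have hle : G ≤ AddSubgroup.zmultiples (d : ℤ) := by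
      rw [hGdef]
      apply (AddSubgroup.closure_le _).2
      rintro x ⟨m, hm, rfl⟩
      show (m : ℤ) ∈ AddSubgroup.zmultiples (d : ℤ)
      rw [Int.mem_zmultiples_iff]
      exact_mod_cast hdvd m hm
    have hgG : g ∈ G := by
      rw [hG]; exact AddSubgroup.subset_closure rfl
    exact Int.mem_zmultiples_iff.1 (hle hgG)
  have hdg' : d ∣ g.natAbs := by
    have := Int.natAbs_dvd_natAbs.2 hdg
    simpa using this
  have hd_eq : g.natAbs = d :=
    le_antisymm hled (Nat.le_of_dvd (Nat.pos_of_ne_zero (Int.natAbs_ne_zero.2 hg0)) hdg')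
  -- (d : ℤ) ∈ G
  have hdG : (d : ℤ) ∈ G := by
    have hgG : g ∈ G := by rw [hG]; exact AddSubgroup.subset_closure rfl
    rcases Int.natAbs_eq g with h | h
    · rw [← hd_eq, ← h]; exact hgG
    · rw [← hd_eq]
      have h2 : -g ∈ G := G.neg_mem hgG
      rw [h] at h2
      simpa using h2
  have hle2 : G ≤ diffSubgroup (AddSubmonoid.closure A) := by
    rw [hGdef]
    apply (AddSubgroup.closure_le _).2
    rintro x ⟨m, hm, rfl⟩
    exact ⟨m, AddSubmonoid.subset_closure hm, 0, (AddSubmonoid.closure A).zero_mem, by simp⟩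
  obtain ⟨P, hP, Q, hQ, hPQ⟩ := hle2 hdG
  refine ⟨Q, hQ, ?_⟩
  have : P = Q + d := by
    have : (P : ℤ) = (Q : ℤ) + d := by linarith [hPQ]
    exact_mod_cast this
  rwa [← this]

open MeasureTheory ProbabilityTheory
open scoped ENNReal NNReal

lemma aux_gw_list {Ω : Type*} [MeasureSpace Ω] [IsProbabilityMeasure (ℙ : Measure Ω)]
    (μ : Measure ℕ)
    (ξ : ℕ → ℕ → Ω → ℕ)
    (hmeas : ∀ n i, Measurable (ξ n i))
    (hindep : iIndepFun
      (fun p : ℕ × ℕ => ξ p.1 p.2) ℙ)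
    (hdist : ∀ n i, Measure.map (ξ n i) ℙ = μ)
    (h0 : μ {0} ≠ 0)
    (Z : ℕ → Ω → ℕ)
    (hZ0 : ∀ ω, Z 0 ω = 1)
    (hZ : ∀ n ω, Z (n + 1) ω = ∑ i ∈ Finset.range (Z n ω), ξ n i ω)
    (l : List ℕ) (hl : ∀ c ∈ l, c ≠ 0 ∧ μ {c} ≠ 0) :
    0 < ℙ {ω | (∑' k, (Z k ω : ℕ∞)) = ((1 + l.sum : ℕ) : ℕ∞)} := by
  set T := l.length with hT
  set n := 1 + l.sum with hn
  -- deterministic generation sizes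
  set w : ℕ → ℕ := fun t => if t = 0 then 1 else l.getD (t - 1) 0 with hw
  -- prescribed values
  set v : ℕ → ℕ → ℕ := fun t i => if i = 0 then l.getD t 0 else 0 with hv
  have hgetD_mem : ∀ t, t < T → l.getD t 0 ∈ l := by
    intro t ht
    rw [List.getD_eq_getElem l 0 ht]
    exact List.getElem_mem ht
  have hgetD_zero : ∀ t, T ≤ t → l.getD t 0 = 0 := fun t ht => List.getD_eq_default l 0 ht
  have hwpos : ∀ t, t ≤ T → 0 < w t := by
    intro t ht
    rcases Nat.eq_zero_or_pos t with rfl | htpos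
    · simp [hw]
    · have h1 : t - 1 < T := by omega
      have := (hl _ (hgetD_mem _ h1)).1
      simp only [hw]
      rw [if_neg (by omega)]
      omega
  have hwzero : ∀ t, T < t → w t = 0 := by
    intro t ht
    simp only [hw]
    rw [if_neg (by omega)]
    exact hgetD_zero _ (by omega)
  have hwle : ∀ t, w t ≤ n := by
    intro t
    simp only [hw]
    split
    · omega
    · rcases Nat.lt_or_ge (t - 1) T with h | h
      · have := List.single_le_sum (l := l) (fun x _ => Nat.zero_le x) _ (hgetD_mem _ h)
        omega
      · rw [hgetD_zero _ h]; omega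
  have hμv : ∀ t i, μ {v t i} ≠ 0 := by
    intro t i
    simp only [hv]
    split
    · rcases Nat.lt_or_ge t T with h | h
      · exact (hl _ (hgetD_mem _ h)).2
      · rw [hgetD_zero _ h]; exact h0
    · exact h0
  -- the finite index set
  set F : Finset (ℕ × ℕ) :=
    (Finset.range (T + 1) ×ˢ Finset.range (n + 1)).filter (fun p => p.2 < w p.1) with hF
  have hmemF : ∀ t i, (t, i) ∈ F ↔ t < T + 1 ∧ i < w t := by
    intro t i
    simp only [hF, Finset.mem_filter, Finset.mem_product, Finset.mem_range]
    constructor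
    · rintro ⟨⟨h1, h2⟩, h3⟩; exact ⟨h1, h3⟩
    · rintro ⟨h1, h2⟩
      exact ⟨⟨h1, lt_of_lt_of_le h2 (le_trans (hwle t) (Nat.le_succ n))⟩, h2⟩
  set s : ℕ × ℕ → Set Ω := fun p => ξ p.1 p.2 ⁻¹' {v p.1 p.2} with hs
  have hPE : ℙ (⋂ p ∈ F, s p) = ∏ p ∈ F, ℙ (s p) := by
    refine hindep.meas_biInter (fun p _ => ?_)
    exact ⟨{v p.1 p.2}, measurableSet_singleton _, rfl⟩
  have hfac : ∀ p : ℕ × ℕ, ℙ (s p) = μ {v p.1 p.2} := by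
    intro p
    rw [hs]
    rw [← hdist p.1 p.2, Measure.map_apply (hmeas p.1 p.2) (measurableSet_singleton _)]
  have hEpos : 0 < ℙ (⋂ p ∈ F, s p) := by
    rw [hPE]
    rw [pos_iff_ne_zero]
    rw [Finset.prod_ne_zero_iff]
    intro p _
    rw [hfac p]
    exact hμv p.1 p.2
  refine lt_of_lt_of_le hEpos (measure_mono ?_)
  intro ω hω
  have hval : ∀ t i, t < T + 1 → i < w t → ξ t i ω = v t i := by
    intro t i h1 h2
    have := Set.mem_iInter₂.1 hω (t, i) ((hmemF t i).2 ⟨h1, h2⟩)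
    exact this
  have hZw : ∀ t, Z t ω = w t := by
    intro t
    induction t with
    | zero => rw [hZ0]; simp [hw]
    | succ t ih =>
      rw [hZ, ih]
      rcases Nat.lt_or_ge t (T + 1) with h | h
      · have hsum : ∑ i ∈ Finset.range (w t), ξ t i ω = ∑ i ∈ Finset.range (w t), v t i := by
          refine Finset.sum_congr rfl (fun i hi => ?_)
          exact hval t i h (Finset.mem_range.1 hi)
        rw [hsum]
        have h0w : 0 < w t := hwpos t (by omega)
        have : ∑ i ∈ Finset.range (w t), v t i = l.getD t 0 := by
          simp only [hv]
          rw [Finset.sum_ite_eq' (Finset.range (w t)) 0 (fun _ => l.getD t 0)]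
          rw [if_pos (Finset.mem_range.2 h0w)]
        rw [this]
        simp only [hw]
        rw [if_neg (Nat.succ_ne_zero t)]
        simp
      · rw [hwzero t (by omega)]
        rw [hwzero (t + 1) (by omega)]
        simp
  have htsum : (∑' k, (Z k ω : ℕ∞)) = (n : ℕ∞) := by
    have h1 : (∑' k, (Z k ω : ℕ∞)) = ∑' k, (w k : ℕ∞) := by
      exact tsum_congr (fun k => by rw [hZw k])
    rw [h1]
    rw [tsum_eq_sum (s := Finset.range (T + 1))
      (fun k hk => by
        have hTk : T < k := by
          by_contra h
          exact hk (Finset.mem_range.2 (by omega))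
        rw [hwzero k hTk]
        simp)]
    rw [← Nat.cast_sum]
    congr 1
    rw [Finset.sum_range_succ']
    simp only [hw]
    have : ∀ i ∈ Finset.range T, (if i + 1 = 0 then 1 else l.getD (i + 1 - 1) 0) = l.getD i 0 := by
      intro i _
      rw [if_neg (Nat.succ_ne_zero i)]
      simp
    rw [Finset.sum_congr rfl this, aux_sum_range_getD]
    simp [hn]
    omega
  exact htsum

/-- Let `ξ` have offspring distribution `μ` with `μ {1} < 1`, `μ {0} > 0`, and span `d`
(the greatest common divisor of all differences of points of the support of `μ`). Then for
all sufficiently large `n` with `n ≡ 1 (mod d)`, the probability that the total progeny of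
the Galton–Watson process equals `n` is positive. -/
theorem galtonWatson_size_positive_probability
    {Ω : Type*} [MeasureSpace Ω] [IsProbabilityMeasure (ℙ : Measure Ω)]
    (μ : Measure ℕ) [IsProbabilityMeasure μ]
    (ξ : ℕ → ℕ → Ω → ℕ)
    (hmeas : ∀ n i, Measurable (ξ n i))
    (hindep : iIndepFun
      (fun p : ℕ × ℕ => ξ p.1 p.2) ℙ)
    (hdist : ∀ n i, Measure.map (ξ n i) ℙ = μ)
    (h1 : μ {1} < 1)
    (h0 : 0 < μ {0})
    (d : ℕ)
    (hd : IsGreatest {e : ℕ | ∀ k l : ℕ, μ {k} ≠ 0 → μ {l} ≠ 0 →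
      (e : ℤ) ∣ (k : ℤ) - (l : ℤ)} d)
    (Z : ℕ → Ω → ℕ)
    (hZ0 : ∀ ω, Z 0 ω = 1)
    (hZ : ∀ n ω, Z (n + 1) ω = ∑ i ∈ Finset.range (Z n ω), ξ n i ω) :
    ∃ N : ℕ, ∀ n ≥ N, n % d = 1 % d →
      0 < ℙ {ω | (∑' k, (Z k ω : ℕ∞)) = (n : ℕ∞)} := by
  have h0' : μ {0} ≠ 0 := h0.ne'
  -- there is a nonzero point in the support
  have hex : ∃ a : ℕ, μ {a} ≠ 0 ∧ a ≠ 0 := by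
    by_contra h
    push_neg at h
    have hall : ∀ k : ℕ, μ {k} ≠ 0 → k = 0 := by
      intro k hk
      exact h k hk
    have hmem : (d + 1) ∈ {e : ℕ | ∀ k l : ℕ, μ {k} ≠ 0 → μ {l} ≠ 0 →
        (e : ℤ) ∣ (k : ℤ) - (l : ℤ)} := by
      intro k l hk hl
      rw [hall k hk, hall l hl]
      simp
    have := hd.2 hmem
    omega
  obtain ⟨a, ha, ha0⟩ := hex
  set A : Set ℕ := {m : ℕ | μ {m} ≠ 0 ∧ m ≠ 0} with hA
  have haA : a ∈ A := ⟨ha, ha0⟩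
  have hdvd : ∀ m ∈ A, d ∣ m := by
    intro m hm
    have := hd.1 m 0 hm.1 h0'
    simp only [Nat.cast_zero, sub_zero] at this
    exact_mod_cast this
  have hd1 : 1 ≤ d := by
    rcases Nat.eq_zero_or_pos d with rfl | h
    · exact absurd (Nat.eq_zero_of_zero_dvd (hdvd a haA)) ha0
    · exact h
  have hmax : ∀ e : ℕ, (∀ m ∈ A, e ∣ m) → e ≤ d := by
    intro e he
    refine hd.2 ?_
    intro k l hk hl
    have hke : (e : ℤ) ∣ k := by
      rcases Nat.eq_zero_or_pos k with rfl | hkpos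
      · simp
      · exact_mod_cast he k ⟨hk, by omega⟩
    have hle : (e : ℤ) ∣ l := by
      rcases Nat.eq_zero_or_pos l with rfl | hlpos
      · simp
      · exact_mod_cast he l ⟨hl, by omega⟩
    exact dvd_sub hke hle
  obtain ⟨Q, hQ, hP⟩ := aux_exists_PQ A a haA ha0 d hdvd hmax
  -- every element of the closure is a multiple of d
  have hdQ : d ∣ Q := by
    obtain ⟨L, hLmem, hLsum⟩ := AddSubmonoid.exists_list_of_mem_closure hQ
    rw [← hLsum]
    exact List.dvd_sum (fun x hx => hdvd x (hLmem x hx))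
  obtain ⟨q, hq⟩ := hdQ
  rw [hq] at hQ
  have hP' : d * q + d ∈ AddSubmonoid.closure A := by rwa [hq] at hP
  refine ⟨d * (q * q) + 2, fun n hn hmod => ?_⟩
  have hn1 : 1 ≤ n := by omega
  -- d ∣ n - 1
  have hdvdn : d ∣ n - 1 := by
    have : (1 : ℕ) ≡ n [MOD d] := (hmod : Nat.ModEq d n 1).symm
    exact (Nat.modEq_iff_dvd' hn1).1 this
  obtain ⟨k, hk⟩ := hdvdn
  have hkq : q * q ≤ k := by
    have : d * (q * q) + 1 ≤ d * k := by omega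
    by_contra h
    push_neg at h
    have : d * k < d * (q * q) := by
      exact Nat.mul_lt_mul_of_le_of_lt (le_refl d) h (by omega)
    omega
  have hmem : n - 1 ∈ AddSubmonoid.closure A := by
    rw [hk]
    exact aux_semigroup d q (AddSubmonoid.closure A) hQ hP' k hkq
  obtain ⟨L, hLmem, hLsum⟩ := AddSubmonoid.exists_list_of_mem_closure hmem
  have hLl : ∀ c ∈ L, c ≠ 0 ∧ μ {c} ≠ 0 := by
    intro c hc
    have := hLmem c hc
    exact ⟨this.2, this.1⟩
  have hres := aux_gw_list μ ξ hmeas hindep hdist h0' Z hZ0 hZ L hLl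
  have hns : (1 + L.sum : ℕ) = n := by omega
  rwa [hns] at hres
end

section
/- Let C be a connected graph, let x be a vertex, and define d̄_C(x,y) as the distance from x to y in the block tree structure rooted at x (equivalently, the minimum number of blocks needed to cover the edges of a shortest path from x to y). Then d̄_C is a metric on the vertex set of C. -/
open SimpleGraph

/-- A block of a graph `G`: a maximal connected subgraph without a cutvertex. -/
def IsBlock {V : Type*} (G : SimpleGraph V) (H : G.Subgraph) : Prop :=
  H.Connected ∧
  (∀ v ∈ H.verts, (H.deleteVerts {v}).verts.Nonempty → (H.deleteVerts {v}).Connected) ∧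
  (∀ H' : G.Subgraph, H ≤ H' → H'.Connected →
    (∀ v ∈ H'.verts, (H'.deleteVerts {v}).verts.Nonempty → (H'.deleteVerts {v}).Connected) →
    H' = H)

/-- The block distance `d̄_C(x,y)`: the minimal number of blocks needed to cover the edges
of a shortest path from `x` to `y`. -/
noncomputable def blockDist {V : Type*} (G : SimpleGraph V) (x y : V) : ℕ :=
  sInf {n : ℕ | ∃ p : G.Walk x y, p.IsPath ∧ p.length = G.dist x y ∧
    ∃ S : Finset G.Subgraph, S.card = n ∧ (∀ H ∈ S, IsBlock G H) ∧
      ∀ e ∈ p.edges, ∃ H ∈ S, e ∈ H.edgeSet}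

namespace BlockProof
variable {V : Type*} {G : SimpleGraph V}

/-- The "no cutvertex" property. -/
def NC (H : G.Subgraph) : Prop :=
  ∀ v ∈ H.verts, (H.deleteVerts {v}).verts.Nonempty → (H.deleteVerts {v}).Connected

lemma reachable_mono {H H' : G.Subgraph} (h : H ≤ H') {u v : V} (hu : u ∈ H.verts)
    (hv : v ∈ H.verts) (hr : H.coe.Reachable ⟨u, hu⟩ ⟨v, hv⟩) :
    H'.coe.Reachable ⟨u, h.1 hu⟩ ⟨v, h.1 hv⟩ :=
  hr.map (Subgraph.inclusion h)

lemma deleteVerts_eq_of_not_mem {H : G.Subgraph} {v : V} (hv : v ∉ H.verts) :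
    H.deleteVerts {v} = H := by
  ext a b
  · simp only [Subgraph.deleteVerts_verts, Set.mem_diff, Set.mem_singleton_iff,
      and_iff_left_iff_imp]
    rintro ha rfl; exact hv ha
  · simp only [Subgraph.deleteVerts_adj, Set.mem_singleton_iff]
    constructor
    · rintro ⟨_, _, _, _, h⟩; exact h
    · intro h
      exact ⟨H.edge_vert h, fun he => hv (he ▸ H.edge_vert h),
        H.edge_vert h.symm, fun he => hv (he ▸ H.edge_vert h.symm), h⟩

lemma exists_block_le (H₀ : G.Subgraph) (hc : H₀.Connected) (hnc : NC H₀) :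
    ∃ B, IsBlock G B ∧ H₀ ≤ B := by
  have hchain : ∀ c ⊆ {H : G.Subgraph | H₀ ≤ H ∧ H.Connected ∧ NC H},
      IsChain (· ≤ ·) c → ∀ y ∈ c, ∃ ub ∈ {H : G.Subgraph | H₀ ≤ H ∧ H.Connected ∧ NC H},
        ∀ z ∈ c, z ≤ ub := by
    intro c hcsub hchain y hy
    refine ⟨sSup c, ⟨(hcsub hy).1.trans (le_sSup hy), ?_, ?_⟩, fun z hz => le_sSup hz⟩
    · -- connected
      rw [Subgraph.connected_iff]
      constructor
      · constructor
        rintro ⟨u, hu⟩ ⟨v, hv⟩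
        rw [Subgraph.verts_sSup] at hu hv
        simp only [Set.mem_iUnion] at hu hv
        obtain ⟨A, hA, hu⟩ := hu
        obtain ⟨B, hB, hv⟩ := hv
        rcases hchain.total hA hB with hAB | hBA
        · exact reachable_mono (le_sSup hB) (hAB.1 hu) hv
            ((hcsub hB).2.1.preconnected ⟨u, hAB.1 hu⟩ ⟨v, hv⟩)
        · exact reachable_mono (le_sSup hA) hu (hBA.1 hv)
            ((hcsub hA).2.1.preconnected ⟨u, hu⟩ ⟨v, hBA.1 hv⟩)
      · exact ⟨(hcsub hy).2.1.nonempty.choose, Set.mem_of_mem_of_subset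
          (hcsub hy).2.1.nonempty.choose_spec ((le_sSup hy).1)⟩
    · -- no cutvertex
      intro v hv hne
      rw [Subgraph.connected_iff]
      refine ⟨⟨?_⟩, hne⟩
      rintro ⟨u, hu⟩ ⟨w, hw⟩
      simp only [Subgraph.deleteVerts_verts, Set.mem_diff, Set.mem_singleton_iff,
        Subgraph.verts_sSup, Set.mem_iUnion] at hu hw
      obtain ⟨⟨A, hA, huA⟩, hune⟩ := hu
      obtain ⟨⟨B, hB, hwB⟩, hwne⟩ := hw
      -- wlog via chain
      rcases hchain.total hA hB with hAB | hBA
      · have huB : u ∈ B.verts := hAB.1 huA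
        have hD : (B.deleteVerts {v}).Connected := by
          by_cases hvB : v ∈ B.verts
          · exact (hcsub hB).2.2 v hvB ⟨u, by simp [huB, hune]⟩
          · rw [deleteVerts_eq_of_not_mem hvB]; exact (hcsub hB).2.1
        have hu' : u ∈ (B.deleteVerts {v}).verts := by simp [huB, hune]
        have hw' : w ∈ (B.deleteVerts {v}).verts := by simp [hwB, hwne]
        exact reachable_mono (Subgraph.deleteVerts_mono (le_sSup hB)) hu' hw'
          (hD.preconnected ⟨u, hu'⟩ ⟨w, hw'⟩)
      · have hwA : w ∈ A.verts := hBA.1 hwB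
        have hD : (A.deleteVerts {v}).Connected := by
          by_cases hvA : v ∈ A.verts
          · exact (hcsub hA).2.2 v hvA ⟨u, by simp [huA, hune]⟩
          · rw [deleteVerts_eq_of_not_mem hvA]; exact (hcsub hA).2.1
        have hu' : u ∈ (A.deleteVerts {v}).verts := by simp [huA, hune]
        have hw' : w ∈ (A.deleteVerts {v}).verts := by simp [hwA, hwne]
        exact reachable_mono (Subgraph.deleteVerts_mono (le_sSup hA)) hu' hw'
          (hD.preconnected ⟨u, hu'⟩ ⟨w, hw'⟩)
  obtain ⟨m, hm1, hm2⟩ := zorn_le_nonempty₀ _ hchain H₀ ⟨le_rfl, hc, hnc⟩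
  refine ⟨m, ⟨hm2.prop.2.1, hm2.prop.2.2, fun H' hle hcon hnc' => ?_⟩, hm2.prop.1⟩
  exact le_antisymm (hm2.le_of_ge ⟨hm2.prop.1.trans hle, hcon, hnc'⟩ hle) hle


lemma connected_of_subsingleton {H : G.Subgraph} (hne : H.verts.Nonempty)
    (hs : H.verts.Subsingleton) : H.Connected := by
  rw [Subgraph.connected_iff]
  refine ⟨⟨?_⟩, hne⟩
  rintro ⟨u, hu⟩ ⟨v, hv⟩
  have : u = v := hs hu hv
  subst this
  rfl

lemma deleteVerts_sup {H K : G.Subgraph} {s : Set V} :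
    (H ⊔ K).deleteVerts s = H.deleteVerts s ⊔ K.deleteVerts s := by
  ext a b
  · simp only [Subgraph.deleteVerts_verts, Subgraph.verts_sup, Set.mem_diff, Set.mem_union]
    tauto
  · simp only [Subgraph.deleteVerts_adj, Subgraph.sup_adj, Subgraph.verts_sup, Set.mem_union]
    constructor
    · rintro ⟨_, ha, _, hb, (h | h)⟩
      · exact Or.inl ⟨H.edge_vert h, ha, H.edge_vert h.symm, hb, h⟩
      · exact Or.inr ⟨K.edge_vert h, ha, K.edge_vert h.symm, hb, h⟩
    · rintro (⟨h1, h2, h3, h4, h⟩ | ⟨h1, h2, h3, h4, h⟩)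
      · exact ⟨Or.inl h1, h2, Or.inl h3, h4, Or.inl h⟩
      · exact ⟨Or.inr h1, h2, Or.inr h3, h4, Or.inr h⟩

lemma block_unique {B₁ B₂ : G.Subgraph} (h₁ : IsBlock G B₁) (h₂ : IsBlock G B₂)
    {a b : V} (he₁ : B₁.Adj a b) (he₂ : B₂.Adj a b) : B₁ = B₂ := by
  have hab : a ≠ b := (B₁.adj_sub he₁).ne
  have hsup_conn : (B₁ ⊔ B₂).Connected :=
    Subgraph.connected_sup h₁.1.preconnected h₂.1.preconnected ⟨a, B₁.edge_vert he₁, B₂.edge_vert he₂⟩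
  have hsup_nc : ∀ v ∈ (B₁ ⊔ B₂).verts, (((B₁ ⊔ B₂).deleteVerts {v}).verts.Nonempty) →
      ((B₁ ⊔ B₂).deleteVerts {v}).Connected := by
    intro v _ _
    obtain ⟨w, hwv, hw1, hw2⟩ : ∃ w, w ≠ v ∧ w ∈ B₁.verts ∧ w ∈ B₂.verts := by
      rcases eq_or_ne v a with rfl | hva
      · exact ⟨b, fun hh => hab hh.symm, B₁.edge_vert he₁.symm, B₂.edge_vert he₂.symm⟩
      · exact ⟨a, fun hh => hva hh.symm, B₁.edge_vert he₁, B₂.edge_vert he₂⟩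
    have hD1 : (B₁.deleteVerts {v}).Connected := by
      by_cases hvB : v ∈ B₁.verts
      · exact h₁.2.1 v hvB ⟨w, by simp [hw1, hwv]⟩
      · rw [deleteVerts_eq_of_not_mem hvB]; exact h₁.1
    have hD2 : (B₂.deleteVerts {v}).Connected := by
      by_cases hvB : v ∈ B₂.verts
      · exact h₂.2.1 v hvB ⟨w, by simp [hw2, hwv]⟩
      · rw [deleteVerts_eq_of_not_mem hvB]; exact h₂.1
    rw [deleteVerts_sup]
    exact Subgraph.connected_sup hD1.preconnected hD2.preconnected ⟨w, by simp [hw1, hw2, hwv]⟩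
  have e1 := h₁.2.2 (B₁ ⊔ B₂) le_sup_left hsup_conn hsup_nc
  have e2 := h₂.2.2 (B₁ ⊔ B₂) le_sup_right hsup_conn hsup_nc
  exact e1.symm.trans e2

lemma exists_block_edge {a b : V} (h : G.Adj a b) :
    ∃ B, IsBlock G B ∧ B.Adj a b := by
  have hconn : (G.subgraphOfAdj h).Connected := Subgraph.subgraphOfAdj_connected h
  have hnc : NC (G.subgraphOfAdj h) := by
    intro v hv hne
    refine connected_of_subsingleton hne ?_
    intro u hu u' hu'
    simp only [Subgraph.deleteVerts_verts, subgraphOfAdj_verts, Set.mem_diff,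
      Set.mem_insert_iff, Set.mem_singleton_iff] at hv hu hu'
    rcases hv with rfl | rfl
    · rcases hu.1 with rfl | rfl
      · exact absurd rfl hu.2
      · rcases hu'.1 with rfl | rfl
        · exact absurd rfl hu'.2
        · rfl
    · rcases hu.1 with rfl | rfl
      · rcases hu'.1 with rfl | rfl
        · rfl
        · exact absurd rfl hu'.2
      · exact absurd rfl hu.2
  obtain ⟨B, hB, hle⟩ := exists_block_le _ hconn hnc
  exact ⟨B, hB, hle.2 (by simp)⟩

lemma cycle_delete_start {v : V} {c : G.Walk v v} (hc : c.IsCycle) :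
    (c.toSubgraph.deleteVerts {v}).Connected := by
  cases c with
  | nil => exact absurd rfl hc.ne_nil
  | cons hadj t =>
    rename_i s
    rw [Walk.cons_isCycle_iff] at hc
    obtain ⟨htp, hne⟩ := hc
    have hvs : v ≠ s := hadj.ne
    -- t.reverse : Walk v s
    cases htr : t.reverse with
    | nil => exact absurd rfl hvs
    | cons hadj2 t2 =>
      rename_i u
      have htrp : (Walk.cons hadj2 t2).IsPath := htr ▸ htp.reverse
      rw [Walk.cons_isPath_iff] at htrp
      obtain ⟨ht2p, hvt2⟩ := htrp
      -- support relation: t.support as a set is {v} ∪ t2.support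
      have hsupp : ∀ z, z ∈ t.support ↔ z = v ∨ z ∈ t2.support := by
        intro z
        have : z ∈ t.support ↔ z ∈ t.reverse.support := by
          rw [Walk.support_reverse, List.mem_reverse]
        rw [this, htr, Walk.support_cons]
        simp
      have hle : t2.toSubgraph ≤ (Walk.cons hadj t).toSubgraph.deleteVerts {v} := by
        constructor
        · intro z hz
          rw [Walk.mem_verts_toSubgraph] at hz
          simp only [Subgraph.deleteVerts_verts, Set.mem_diff, Set.mem_singleton_iff]
          constructor
          · rw [Walk.mem_verts_toSubgraph, Walk.support_cons]
            exact List.mem_cons_of_mem _ ((hsupp z).2 (Or.inr hz))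
          · exact fun hzv => hvt2 (hzv ▸ hz)
        · intro z w hzw
          have hz : z ∈ t2.support := by
            have := hzw.fst_mem
            rwa [Walk.mem_verts_toSubgraph] at this
          have hw : w ∈ t2.support := by
            have := hzw.snd_mem
            rwa [Walk.mem_verts_toSubgraph] at this
          have htadj : t.toSubgraph.Adj z w := by
            have h1 : t.reverse.toSubgraph.Adj z w := by
              rw [htr, Walk.toSubgraph]
              exact Subgraph.sup_adj.mpr (Or.inr hzw)
            rwa [Walk.toSubgraph_reverse] at h1
          simp only [Subgraph.deleteVerts_adj, Set.mem_singleton_iff]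
          refine ⟨?_, fun hzv => hvt2 (hzv ▸ hz), ?_, fun hwv => hvt2 (hwv ▸ hw), ?_⟩
          · simp only [Walk.mem_verts_toSubgraph, Walk.support_cons]
            exact List.mem_cons_of_mem _ ((hsupp z).2 (Or.inr hz))
          · simp only [Walk.mem_verts_toSubgraph, Walk.support_cons]
            exact List.mem_cons_of_mem _ ((hsupp w).2 (Or.inr hw))
          · exact Subgraph.sup_adj.mpr (Or.inr htadj)
      have hverts : t2.toSubgraph.verts = ((Walk.cons hadj t).toSubgraph.deleteVerts {v}).verts := by
        apply Set.eq_of_subset_of_subset hle.1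
        intro z hz
        simp only [Subgraph.deleteVerts_verts, Set.mem_diff, Set.mem_singleton_iff,
          Walk.mem_verts_toSubgraph, Walk.support_cons, List.mem_cons] at hz
        obtain ⟨hz1, hz2⟩ := hz
        rw [Walk.mem_verts_toSubgraph]
        rcases hz1 with rfl | hz1
        · exact absurd rfl hz2
        · rcases (hsupp z).1 hz1 with hzv | hz1
          · exact absurd hzv hz2
          · exact hz1
      exact Subgraph.Connected.mono hle hverts t2.toSubgraph_connected

lemma cycle_nc {x : V} {w : G.Walk x x} (hw : w.IsCycle) : NC w.toSubgraph := by
  classical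
  intro v hv _
  rw [Walk.mem_verts_toSubgraph] at hv
  rw [← w.toSubgraph_rotate hv]
  exact cycle_delete_start (hw.rotate hv)

lemma exists_block_cycle {x : V} {w : G.Walk x x} (hw : w.IsCycle) :
    ∃ B, IsBlock G B ∧ ∀ e ∈ w.edges, e ∈ B.edgeSet := by
  obtain ⟨B, hB, hle⟩ := exists_block_le w.toSubgraph w.toSubgraph_connected (cycle_nc hw)
  exact ⟨B, hB, fun e he => Subgraph.edgeSet_mono hle ((w.mem_edges_toSubgraph).2 he)⟩

lemma first_meet {u y : V} (p : G.Walk u y) (S : Set V) (hy : y ∈ S) :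
    ∃ c, c ∈ S ∧ ∃ (p1 : G.Walk u c) (p2 : G.Walk c y), p = p1.append p2 ∧
      ∀ v ∈ p1.support, v ∈ S → v = c := by
  classical
  revert hy
  induction p with
  | nil =>
    intro hy
    exact ⟨_, hy, Walk.nil, Walk.nil, rfl, by simp⟩
  | cons h q ih =>
    intro hy
    rename_i a b _
    by_cases hu : a ∈ S
    · exact ⟨a, hu, Walk.nil, Walk.cons h q, rfl, by simp⟩
    · obtain ⟨c, hc, p1, p2, hsplit, hfirst⟩ := ih hy
      refine ⟨c, hc, Walk.cons h p1, p2, by rw [Walk.cons_append, ← hsplit], ?_⟩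
      intro v hv hvS
      rw [Walk.support_cons, List.mem_cons] at hv
      rcases hv with rfl | hv
      · exact absurd hvS hu
      · exact hfirst v hv hvS

lemma same_blocks : ∀ (n : ℕ) {x y : V} (p q : G.Walk x y), p.IsPath → q.IsPath →
    p.length + q.length ≤ n →
    ∀ e ∈ p.edges, ∃ f ∈ q.edges, ∃ B, IsBlock G B ∧ e ∈ B.edgeSet ∧ f ∈ B.edgeSet := by
  classical
  intro n
  induction n with
  | zero =>
    intro x y p q hp hq hlen e he
    cases p with
    | nil => simp at he
    | cons h p' => simp [Walk.length_cons] at hlen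
  | succ n ih =>
    intro x y p q hp hq hlen e he
    cases p with
    | nil => simp at he
    | cons hxa p' =>
      rename_i a
      have hxp' : x ∉ p'.support := ((Walk.cons_isPath_iff _ _).1 hp).2
      have hp' : p'.IsPath := ((Walk.cons_isPath_iff _ _).1 hp).1
      obtain ⟨c, hcq0, p1', p2, hsplit, hfirst⟩ :=
        first_meet p' {v | v ∈ q.support} q.end_mem_support
      have hcq : c ∈ q.support := hcq0
      have hcx : c ≠ x := by
        rintro rfl
        exact hxp' (hsplit ▸ (Walk.subset_support_append_left _ _ (Walk.end_mem_support p1')))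
      have hq12 : q = (q.takeUntil c hcq).append (q.dropUntil c hcq) := (q.take_spec hcq).symm
      set q1 := q.takeUntil c hcq with hq1def
      set q2 := q.dropUntil c hcq with hq2def
      have hq1 : q1.IsPath := hq.takeUntil hcq
      have hq2 : q2.IsPath := hq.dropUntil hcq
      have hp'app : (p1'.append p2).IsPath := hsplit ▸ hp'
      have hp1' : p1'.IsPath := hp'app.of_append_left
      have hp2 : p2.IsPath := hp'app.of_append_right
      have hq1len : q1.length ≠ 0 := fun h0 => hcx (Walk.eq_of_length_eq_zero h0).symm
      have hq1ne : ∃ f, f ∈ q1.edges := by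
        refine List.exists_mem_of_ne_nil _ (fun h0 => hq1len ?_)
        have h1 := congrArg List.length h0
        rwa [Walk.length_edges] at h1
      have key : ∃ B, IsBlock G B ∧ (∀ e', e' ∈ (Walk.cons hxa p1').edges → e' ∈ B.edgeSet) ∧
          ∃ f ∈ q1.edges, f ∈ B.edgeSet := by
        by_cases hmem : s(x, a) ∈ q1.edges
        · -- degenerate case : both prefixes are the same single edge
          have ha : a ∈ q1.support := Walk.snd_mem_support_of_mem_edges q1 hmem
          have hac : a = c :=
            hfirst a p1'.start_mem_support (Walk.support_takeUntil_subset q hcq ha)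
          subst hac
          have hp1nil : p1' = Walk.nil := Walk.isPath_iff_eq_nil.1 hp1'
          obtain ⟨B, hB, hBadj⟩ := exists_block_edge ((G.adj_symm hxa.symm))
          refine ⟨B, hB, ?_, s(x, a), hmem, Subgraph.mem_edgeSet.2 hBadj⟩
          intro e' he'
          rw [hp1nil] at he'
          simp only [Walk.edges_cons, Walk.edges_nil, List.mem_cons, List.not_mem_nil,
            or_false] at he'
          rw [he']
          exact Subgraph.mem_edgeSet.2 hBadj
        · -- build a cycle from the two prefixes
          have hpath : (p1'.append q1.reverse).IsPath := by
            rw [Walk.isPath_def, Walk.support_append, List.nodup_append]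
            refine ⟨hp1'.support_nodup, ?_, ?_⟩
            · have hnd := hq1.reverse.support_nodup
              rw [Walk.support_eq_cons] at hnd
              exact (List.nodup_cons.1 hnd).2
            · intro z hz1 z' hz2 hzz'
              subst hzz'
              have hzq1 : z ∈ q1.support := by
                have hzz : z ∈ q1.reverse.support := List.mem_of_mem_tail hz2
                rwa [Walk.support_reverse, List.mem_reverse] at hzz
              have hzc : z = c :=
                hfirst z hz1 (Walk.support_takeUntil_subset q hcq hzq1)
              subst hzc
              have hnd := hq1.reverse.support_nodup
              rw [Walk.support_eq_cons] at hnd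
              exact (List.nodup_cons.1 hnd).1 hz2
          have hnotmem : s(x, a) ∉ (p1'.append q1.reverse).edges := by
            rw [Walk.edges_append, List.mem_append]
            rintro (h1 | h1)
            · exact hxp' (hsplit ▸ (Walk.subset_support_append_left _ _
                (Walk.fst_mem_support_of_mem_edges p1' h1)))
            · rw [Walk.edges_reverse, List.mem_reverse] at h1; exact hmem h1
          have hcyc : (Walk.cons hxa (p1'.append q1.reverse)).IsCycle :=
            (Walk.cons_isCycle_iff _ hxa).2 ⟨hpath, hnotmem⟩
          obtain ⟨B, hB, hBcov⟩ := exists_block_cycle hcyc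
          obtain ⟨f₀, hf₀⟩ := hq1ne
          refine ⟨B, hB, ?_, f₀, hf₀, ?_⟩
          · intro e' he'
            rw [Walk.edges_cons, List.mem_cons] at he'
            apply hBcov
            rw [Walk.edges_cons, Walk.edges_append]
            rcases he' with rfl | he'
            · exact List.mem_cons_self
            · exact List.mem_cons_of_mem _ (List.mem_append_left _ he')
          · apply hBcov
            rw [Walk.edges_cons, Walk.edges_append, Walk.edges_reverse]
            exact List.mem_cons_of_mem _ (List.mem_append_right _ (List.mem_reverse.2 hf₀))
      obtain ⟨B, hB, hBp1, f₀, hf₀q1, hf₀B⟩ := key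
      rw [Walk.edges_cons, List.mem_cons] at he
      rcases he with rfl | he'
      · exact ⟨f₀, Walk.edges_takeUntil_subset q hcq hf₀q1, B, hB,
          hBp1 _ (by simp), hf₀B⟩
      · rw [hsplit, Walk.edges_append, List.mem_append] at he'
        rcases he' with he1 | he2
        · exact ⟨f₀, Walk.edges_takeUntil_subset q hcq hf₀q1, B, hB,
            hBp1 _ (by rw [Walk.edges_cons]; exact List.mem_cons_of_mem _ he1), hf₀B⟩
        · have hlen2 : p2.length + q2.length ≤ n := by
            have h1 : p'.length = p1'.length + p2.length := by
              rw [hsplit, Walk.length_append]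
            have h2 : q.length = q1.length + q2.length := by
              rw [hq12, Walk.length_append]
            rw [Walk.length_cons] at hlen
            omega
          obtain ⟨f, hf, B', hB', heB', hfB'⟩ := ih p2 q2 hp2 hq2 hlen2 e he2
          exact ⟨f, Walk.edges_dropUntil_subset q hcq hf, B', hB', heB', hfB'⟩

lemma block_unique_edge {B₁ B₂ : G.Subgraph} (h₁ : IsBlock G B₁) (h₂ : IsBlock G B₂)
    {e : Sym2 V} (he₁ : e ∈ B₁.edgeSet) (he₂ : e ∈ B₂.edgeSet) : B₁ = B₂ := by
  induction e with
  | _ a b =>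
    exact block_unique h₁ h₂ (Subgraph.mem_edgeSet.1 he₁) (Subgraph.mem_edgeSet.1 he₂)

lemma cover_exists {x y : V} (p : G.Walk x y) :
    ∃ S : Finset G.Subgraph, (∀ H ∈ S, IsBlock G H) ∧ ∀ e ∈ p.edges, ∃ H ∈ S, e ∈ H.edgeSet := by
  classical
  induction p with
  | nil => exact ⟨∅, by simp, by simp⟩
  | cons h p' ih =>
    obtain ⟨S', hS'b, hS'c⟩ := ih
    obtain ⟨B, hB, hBadj⟩ := exists_block_edge h
    refine ⟨insert B S', ?_, ?_⟩
    · intro H hH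
      rcases Finset.mem_insert.1 hH with rfl | hH
      · exact hB
      · exact hS'b H hH
    · intro e he
      rw [Walk.edges_cons, List.mem_cons] at he
      rcases he with rfl | he
      · exact ⟨B, Finset.mem_insert_self _ _, Subgraph.mem_edgeSet.2 hBadj⟩
      · obtain ⟨H, hH, heH⟩ := hS'c e he
        exact ⟨H, Finset.mem_insert_of_mem hH, heH⟩

end BlockProof

/-- For a connected graph `C`, the block distance `d̄_C` is a metric on the vertex set:
it vanishes exactly on the diagonal, is symmetric, and satisfies the triangle
inequality. -/
theorem blockDist_is_metric {V : Type*} (G : SimpleGraph V) (hG : G.Connected) :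
    (∀ x y : V, blockDist G x y = 0 ↔ x = y) ∧
    (∀ x y : V, blockDist G x y = blockDist G y x) ∧
    (∀ x y z : V, blockDist G x z ≤ blockDist G x y + blockDist G y z) := by
  classical
  have hne : ∀ x y : V, {n : ℕ | ∃ p : G.Walk x y, p.IsPath ∧ p.length = G.dist x y ∧
      ∃ S : Finset G.Subgraph, S.card = n ∧ (∀ H ∈ S, IsBlock G H) ∧
        ∀ e ∈ p.edges, ∃ H ∈ S, e ∈ H.edgeSet}.Nonempty := by
    intro x y
    obtain ⟨p, hp, hlen⟩ := hG.exists_path_of_dist x y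
    obtain ⟨S, hSb, hSc⟩ := BlockProof.cover_exists p
    exact ⟨S.card, p, hp, hlen, S, rfl, hSb, hSc⟩
  refine ⟨?_, ?_, ?_⟩
  · intro x y
    constructor
    · intro h0
      by_contra hxy
      have hmem := Nat.sInf_mem (hne x y)
      rw [show sInf {n : ℕ | ∃ p : G.Walk x y, p.IsPath ∧ p.length = G.dist x y ∧
          ∃ S : Finset G.Subgraph, S.card = n ∧ (∀ H ∈ S, IsBlock G H) ∧
            ∀ e ∈ p.edges, ∃ H ∈ S, e ∈ H.edgeSet} = blockDist G x y from rfl, h0] at hmem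
      obtain ⟨p, hp, hlen, S, hcard, hSb, hSc⟩ := hmem
      have hd : 0 < G.dist x y := hG.pos_dist_of_ne hxy
      have hplen : p.length ≠ 0 := by omega
      cases p with
      | nil => simp at hplen
      | cons h p' =>
        obtain ⟨H, hH, _⟩ := hSc _ (by rw [Walk.edges_cons]; exact List.mem_cons_self)
        rw [Finset.card_eq_zero] at hcard
        simp [hcard] at hH
    · rintro rfl
      refine Nat.le_zero.1 (Nat.sInf_le ?_)
      exact ⟨Walk.nil, Walk.IsPath.nil, by simp [SimpleGraph.dist_self], ∅, rfl, by simp, by simp⟩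
  · intro x y
    have key : ∀ (u v : V) (n : ℕ),
        n ∈ {n : ℕ | ∃ p : G.Walk u v, p.IsPath ∧ p.length = G.dist u v ∧
          ∃ S : Finset G.Subgraph, S.card = n ∧ (∀ H ∈ S, IsBlock G H) ∧
            ∀ e ∈ p.edges, ∃ H ∈ S, e ∈ H.edgeSet} →
        n ∈ {n : ℕ | ∃ p : G.Walk v u, p.IsPath ∧ p.length = G.dist v u ∧
          ∃ S : Finset G.Subgraph, S.card = n ∧ (∀ H ∈ S, IsBlock G H) ∧
            ∀ e ∈ p.edges, ∃ H ∈ S, e ∈ H.edgeSet} := by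
      rintro u v n ⟨p, hp, hlen, S, hcard, hSb, hSc⟩
      refine ⟨p.reverse, hp.reverse, ?_, S, hcard, hSb, ?_⟩
      · rw [Walk.length_reverse, hlen, SimpleGraph.dist_comm]
      · intro e he
        rw [Walk.edges_reverse, List.mem_reverse] at he
        exact hSc e he
    unfold blockDist
    congr 1
    exact Set.eq_of_subset_of_subset (fun n hn => key x y n hn) (fun n hn => key y x n hn)
  · intro x y z
    obtain ⟨p1, hp1, hl1, S1, hc1, hb1, hcov1⟩ := Nat.sInf_mem (hne x y)
    obtain ⟨p2, hp2, hl2, S2, hc2, hb2, hcov2⟩ := Nat.sInf_mem (hne y z)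
    obtain ⟨r, hr, hlr⟩ := hG.exists_path_of_dist x z
    have hqp : (p1.append p2).bypass.IsPath := (p1.append p2).bypass_isPath
    have hcov : ∀ e ∈ r.edges, ∃ H ∈ S1 ∪ S2, e ∈ H.edgeSet := by
      intro e he
      obtain ⟨f, hf, B, hB, heB, hfB⟩ :=
        BlockProof.same_blocks (r.length + (p1.append p2).bypass.length) r _ hr hqp le_rfl e he
      have hf2 : f ∈ p1.edges ∨ f ∈ p2.edges := by
        have hff := (p1.append p2).edges_bypass_subset hf
        rwa [Walk.edges_append, List.mem_append] at hff
      rcases hf2 with hf1 | hf1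
      · obtain ⟨H, hH, hfH⟩ := hcov1 f hf1
        have hHB : H = B := BlockProof.block_unique_edge (hb1 H hH) hB hfH hfB
        exact ⟨H, Finset.mem_union_left _ hH, hHB ▸ heB⟩
      · obtain ⟨H, hH, hfH⟩ := hcov2 f hf1
        have hHB : H = B := BlockProof.block_unique_edge (hb2 H hH) hB hfH hfB
        exact ⟨H, Finset.mem_union_right _ hH, hHB ▸ heB⟩
    have hblocks : ∀ H ∈ S1 ∪ S2, IsBlock G H := by
      intro H hH
      rcases Finset.mem_union.1 hH with hH | hH
      · exact hb1 H hH
      · exact hb2 H hH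
    calc blockDist G x z ≤ (S1 ∪ S2).card :=
          Nat.sInf_le ⟨r, hr, hlr, S1 ∪ S2, rfl, hblocks, hcov⟩
      _ ≤ S1.card + S2.card := Finset.card_union_le _ _
      _ = blockDist G x y + blockDist G y z := by rw [hc1, hc2]; rfl
end

section
/- Let (Xᵢ) be i.i.d. real random variables with mean 0 such that 𝔼[e^{θX}] < ∞ for all |θ| < δ for some δ > 0, and let Sₙ = X₁ + ⋯ + Xₙ. Then there is c > 0 such that for every p with 1/2 < p < 1 there exists N so that for all n ≥ N and 0 < ε < 1: ℙ(|Sₙ| ≥ ε nᵖ) ≤ 2 exp(−c ε² n^{2p−1}). -/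
open MeasureTheory ProbabilityTheory
open scoped ENNReal NNReal

private lemma md_exp_quad_bound (y : ℝ) : Real.exp y ≤ 1 + y + y ^ 2 / 2 * Real.exp |y| := by
  rcases le_or_gt y 0 with hy | hy
  · have key : ∀ z ≤ (0:ℝ), Real.exp z ≤ 1 + z + z ^ 2 / 2 := by
      intro z hz
      have hmono : MonotoneOn (fun x : ℝ => Real.exp x - (1 + x + x ^ 2 / 2)) (Set.Iic 0) := by
        apply monotoneOn_of_deriv_nonneg (convex_Iic 0)
        · fun_prop
        · intro x hx
          exact (DifferentiableAt.sub (by fun_prop) (by fun_prop)).differentiableWithinAt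
        · intro x hx
          have hd : HasDerivAt (fun x : ℝ => Real.exp x - (1 + x + x ^ 2 / 2))
              (Real.exp x - (0 + 1 + x)) x := by
            have h1 : HasDerivAt (fun x : ℝ => x ^ 2 / 2) x x := by
              simpa using ((hasDerivAt_pow 2 x).div_const 2)
            exact (Real.hasDerivAt_exp x).sub
              ((((hasDerivAt_const x (1:ℝ)).add (hasDerivAt_id x))).add h1)
          rw [hd.deriv]
          have := Real.add_one_le_exp x
          linarith
      have := hmono (Set.mem_Iic.2 hz) (Set.mem_Iic.2 le_rfl) hz
      simp only [Real.exp_zero] at this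
      nlinarith
    have h1 : (1:ℝ) ≤ Real.exp |y| := Real.one_le_exp (abs_nonneg y)
    nlinarith [key y hy, sq_nonneg y]
  · rw [abs_of_pos hy]
    have key : ∀ z, 0 ≤ z → (1:ℝ) ≤ z ^ 2 / 2 + (1 + z) * Real.exp (-z) := by
      intro z hz
      have hmono : MonotoneOn (fun x : ℝ => x ^ 2 / 2 + (1 + x) * Real.exp (-x)) (Set.Ici 0) := by
        apply monotoneOn_of_deriv_nonneg (convex_Ici 0)
        · fun_prop
        · intro x hx
          exact (DifferentiableAt.add (by fun_prop) (by fun_prop)).differentiableWithinAt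
        · intro x hx
          simp only [interior_Ici, Set.mem_Ioi] at hx
          have hd : HasDerivAt (fun x : ℝ => x ^ 2 / 2 + (1 + x) * Real.exp (-x))
              (x + ((0 + 1) * Real.exp (-x) + (1 + x) * (Real.exp (-x) * (-1)))) x := by
            have h1 : HasDerivAt (fun x : ℝ => x ^ 2 / 2) x x := by
              simpa using ((hasDerivAt_pow 2 x).div_const 2)
            have h2 : HasDerivAt (fun x : ℝ => Real.exp (-x)) (Real.exp (-x) * (-1)) x := by
              simpa [Function.comp_def] using (Real.hasDerivAt_exp (-x)).comp x ((hasDerivAt_id x).neg)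
            exact h1.add (((hasDerivAt_const x (1:ℝ)).add (hasDerivAt_id x)).mul h2)
          rw [hd.deriv]
          have hex : Real.exp (-x) ≤ 1 := Real.exp_le_one_iff.2 (by linarith)
          nlinarith [Real.exp_pos (-x)]
      have := hmono (Set.mem_Ici.2 le_rfl) (Set.mem_Ici.2 hz) hz
      simpa using this
    have h := key y hy.le
    have hp := Real.exp_pos y
    have hne : Real.exp (-y) = (Real.exp y)⁻¹ := Real.exp_neg y
    rw [hne] at h
    have := mul_le_mul_of_nonneg_right h hp.le
    rw [one_mul, add_mul, mul_assoc, inv_mul_cancel₀ hp.ne'] at this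
    nlinarith

/-- exp of a bound times abs is dominated by sum of two exps. -/
private lemma md_exp_abs_le (a s x : ℝ) (hs : 0 ≤ s) (hsa : s ≤ a) :
    Real.exp (s * |x|) ≤ Real.exp (a * x) + Real.exp (-a * x) := by
  have h1 : s * |x| ≤ a * |x| := mul_le_mul_of_nonneg_right hsa (abs_nonneg x)
  rcases le_total 0 x with h | h
  · rw [abs_of_nonneg h] at h1 ⊢
    exact (Real.exp_le_exp.2 h1).trans (le_add_of_nonneg_right (Real.exp_pos _).le)
  · rw [abs_of_nonpos h] at h1 ⊢
    refine (Real.exp_le_exp.2 (h1.trans_eq (by ring))).trans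
      (le_add_of_nonneg_left (Real.exp_pos _).le)

/-- Moderate deviations for one-dimensional random walk: if `(Xᵢ)` are i.i.d., centered,
with finite exponential moments in a neighbourhood of `0`, then there is `c > 0` such
that for every `1/2 < p < 1` there is `N` with
`ℙ(|Sₙ| ≥ ε nᵖ) ≤ 2 exp(-c ε² n^(2p-1))` for all `n ≥ N` and `0 < ε < 1`. -/
theorem moderate_deviations
    {Ω : Type*} [MeasureSpace Ω] [IsProbabilityMeasure (ℙ : Measure Ω)]
    (X : ℕ → Ω → ℝ)
    (hmeas : ∀ i, Measurable (X i))
    (hindep : iIndepFun X ℙ)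
    (hident : ∀ i, Measure.map (X i) ℙ = Measure.map (X 0) ℙ)
    (hmean : ∫ ω, X 0 ω ∂ℙ = 0)
    (δ : ℝ) (hδ : 0 < δ)
    (hexp : ∀ θ : ℝ, |θ| < δ →
      ∫⁻ ω, ENNReal.ofReal (Real.exp (θ * X 0 ω)) ∂ℙ < ∞) :
    ∃ c > (0:ℝ), ∀ p : ℝ, 1/2 < p → p < 1 → ∃ N : ℕ, ∀ n ≥ N, ∀ ε : ℝ,
      0 < ε → ε < 1 →
      ℙ {ω | ε * (n : ℝ) ^ p ≤ |∑ i ∈ Finset.range n, X i ω|} ≤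
        ENNReal.ofReal (2 * Real.exp (-c * ε ^ 2 * (n : ℝ) ^ (2 * p - 1))) := by
  -- Step 1: integrability of exponential moments
  have hInt : ∀ θ : ℝ, |θ| < δ → Integrable (fun ω => Real.exp (θ * X 0 ω)) ℙ := by
    intro θ hθ
    refine ⟨(((hmeas 0).const_mul θ).exp).aestronglyMeasurable, ?_⟩
    rw [hasFiniteIntegral_iff_ofReal (ae_of_all _ fun ω => (Real.exp_pos _).le)]
    exact hexp θ hθ
  have h34 : |3 * δ / 4| < δ := by rw [abs_of_pos (by linarith)]; linarith
  have h34' : |(-(3 * δ / 4))| < δ := by rw [abs_neg]; exact h34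
  have hE : Integrable (fun ω => Real.exp ((3 * δ / 4) * X 0 ω)
      + Real.exp (-(3 * δ / 4) * X 0 ω)) ℙ := by
    have := (hInt _ h34).add (hInt _ h34')
    exact this
  -- X 0 is integrable
  have hX0int : Integrable (X 0) ℙ := by
    refine Integrable.mono (hE.const_mul (4 / (3 * δ)))
      (hmeas 0).aestronglyMeasurable (ae_of_all _ fun ω => ?_)
    have h1 : (3 * δ / 4) * |X 0 ω| ≤ Real.exp ((3 * δ / 4) * |X 0 ω|) :=
      (Real.add_one_le_exp _).trans' (by linarith)
    have h2 : Real.exp ((3 * δ / 4) * |X 0 ω|) ≤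
        Real.exp ((3 * δ / 4) * X 0 ω) + Real.exp (-(3 * δ / 4) * X 0 ω) :=
      md_exp_abs_le _ _ _ (by linarith) le_rfl
    have hpos : (0:ℝ) < 3 * δ / 4 := by linarith
    rw [Real.norm_eq_abs, Real.norm_eq_abs]
    rw [abs_of_nonneg (by positivity : (0:ℝ) ≤ 4 / (3 * δ) *
      (Real.exp ((3 * δ / 4) * X 0 ω) + Real.exp (-(3 * δ / 4) * X 0 ω)))]
    rw [div_mul_eq_mul_div, le_div_iff₀ (by linarith : (0:ℝ) < 3 * δ)]
    nlinarith [abs_nonneg (X 0 ω)]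
  -- the quadratic-weight function is integrable
  have hGmeas : Measurable (fun ω => (X 0 ω) ^ 2 * Real.exp ((δ/2) * |X 0 ω|)) := by
    exact ((hmeas 0).pow_const 2).mul (((hmeas 0).abs.const_mul (δ/2)).exp)
  have hptG : ∀ x : ℝ, x ^ 2 * Real.exp ((δ/2) * |x|) ≤
      (64 / δ ^ 2) * (Real.exp ((3 * δ / 4) * x) + Real.exp (-(3 * δ / 4) * x)) := by
    intro x
    have hsq : x ^ 2 ≤ (64 / δ ^ 2) * Real.exp ((δ/4) * |x|) := by
      have h1 : (δ/8) * |x| ≤ Real.exp ((δ/8) * |x|) :=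
        (Real.add_one_le_exp _).trans' (by linarith)
      have h2 : Real.exp ((δ/4) * |x|) = (Real.exp ((δ/8) * |x|)) ^ 2 := by
        rw [← Real.exp_nat_mul]; ring_nf
      have h3 : ((δ/8) * |x|) ^ 2 ≤ (Real.exp ((δ/8) * |x|)) ^ 2 :=
        pow_le_pow_left₀ (by positivity) h1 2
      rw [h2, div_mul_eq_mul_div, le_div_iff₀ (by positivity : (0:ℝ) < δ ^ 2)]
      have h4 : ((δ/8) * |x|) ^ 2 = δ ^ 2 * x ^ 2 / 64 := by
        rw [mul_pow, sq_abs]; ring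
      nlinarith
    have hsum : Real.exp ((δ/4) * |x|) * Real.exp ((δ/2) * |x|) =
        Real.exp ((3 * δ / 4) * |x|) := by
      rw [← Real.exp_add]; ring_nf
    have h4 : Real.exp ((3 * δ / 4) * |x|) ≤
        Real.exp ((3 * δ / 4) * x) + Real.exp (-(3 * δ / 4) * x) :=
      md_exp_abs_le _ _ _ (by linarith) le_rfl
    calc x ^ 2 * Real.exp ((δ/2) * |x|)
        ≤ (64 / δ ^ 2) * Real.exp ((δ/4) * |x|) * Real.exp ((δ/2) * |x|) :=
          mul_le_mul_of_nonneg_right hsq (Real.exp_pos _).le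
      _ = (64 / δ ^ 2) * Real.exp ((3 * δ / 4) * |x|) := by rw [mul_assoc, hsum]
      _ ≤ _ := mul_le_mul_of_nonneg_left h4 (by positivity)
  have hGint : Integrable (fun ω => (X 0 ω) ^ 2 * Real.exp ((δ/2) * |X 0 ω|)) ℙ := by
    refine Integrable.mono (hE.const_mul (64 / δ ^ 2))
      hGmeas.aestronglyMeasurable (ae_of_all _ fun ω => ?_)
    have hg0 : (0:ℝ) ≤ (X 0 ω) ^ 2 * Real.exp ((δ/2) * |X 0 ω|) := by positivity
    have hf0 : (0:ℝ) ≤ 64 / δ ^ 2 *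
        (Real.exp ((3 * δ / 4) * X 0 ω) + Real.exp (-(3 * δ / 4) * X 0 ω)) := by positivity
    rw [Real.norm_eq_abs, Real.norm_eq_abs, abs_of_nonneg hg0, abs_of_nonneg hf0]
    exact hptG (X 0 ω)
  -- constant
  set C : ℝ := (∫ ω, (X 0 ω) ^ 2 * Real.exp ((δ/2) * |X 0 ω|) ∂ℙ) / 2 with hCdef
  have hC0 : 0 ≤ C := by
    apply div_nonneg _ (by norm_num)
    exact integral_nonneg fun ω => by positivity
  set D : ℝ := C + 1 with hDdef
  have hD1 : (1:ℝ) ≤ D := by simp [hDdef]; linarith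
  have hD0 : (0:ℝ) < D := by linarith
  -- mgf bound
  have hmgf : ∀ t : ℝ, |t| ≤ δ/2 → mgf (X 0) ℙ t ≤ Real.exp (D * t ^ 2) := by
    intro t ht
    have htδ : |t| < δ := lt_of_le_of_lt ht (by linarith)
    have hpt : ∀ ω, Real.exp (t * X 0 ω) ≤
        1 + t * X 0 ω + t ^ 2 / 2 * ((X 0 ω) ^ 2 * Real.exp ((δ/2) * |X 0 ω|)) := by
      intro ω
      set x := X 0 ω
      have h1 := md_exp_quad_bound (t * x)
      have h2 : Real.exp |t * x| ≤ Real.exp ((δ/2) * |x|) := by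
        apply Real.exp_le_exp.2
        rw [abs_mul]
        exact mul_le_mul_of_nonneg_right ht (abs_nonneg x)
      have h3 : (t * x) ^ 2 / 2 * Real.exp |t * x| ≤
          t ^ 2 / 2 * (x ^ 2 * Real.exp ((δ/2) * |x|)) := by
        calc (t * x) ^ 2 / 2 * Real.exp |t * x|
            ≤ (t * x) ^ 2 / 2 * Real.exp ((δ/2) * |x|) := by
              apply mul_le_mul_of_nonneg_left h2 (by positivity)
          _ = t ^ 2 / 2 * (x ^ 2 * Real.exp ((δ/2) * |x|)) := by ring
      linarith
    have hRHSint : Integrable (fun ω => 1 + t * X 0 ω +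
        t ^ 2 / 2 * ((X 0 ω) ^ 2 * Real.exp ((δ/2) * |X 0 ω|))) ℙ :=
      ((integrable_const 1).add (hX0int.const_mul t)).add (hGint.const_mul _)
    have hle : mgf (X 0) ℙ t ≤ ∫ ω, (1 + t * X 0 ω +
        t ^ 2 / 2 * ((X 0 ω) ^ 2 * Real.exp ((δ/2) * |X 0 ω|))) ∂ℙ :=
      integral_mono (hInt t htδ) hRHSint hpt
    have hI1 : Integrable (fun ω => 1 + t * X 0 ω) ℙ :=
      (integrable_const 1).add (hX0int.const_mul t)
    have hI2 : Integrable (fun ω =>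
        t ^ 2 / 2 * ((X 0 ω) ^ 2 * Real.exp ((δ/2) * |X 0 ω|))) ℙ := hGint.const_mul _
    have hI3 : Integrable (fun ω => t * X 0 ω) ℙ := hX0int.const_mul t
    have heval : ∫ ω, (1 + t * X 0 ω +
        t ^ 2 / 2 * ((X 0 ω) ^ 2 * Real.exp ((δ/2) * |X 0 ω|))) ∂ℙ = 1 + C * t ^ 2 := by
      rw [integral_add hI1 hI2, integral_add (integrable_const 1) hI3,
        integral_const, integral_const_mul, integral_const_mul, hmean]
      simp only [measure_univ, probReal_univ, ENNReal.toReal_one, smul_eq_mul, mul_one, mul_zero, add_zero]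
      rw [hCdef]; ring
    have hfin : 1 + C * t ^ 2 ≤ Real.exp (D * t ^ 2) := by
      have := Real.add_one_le_exp (D * t ^ 2)
      nlinarith [sq_nonneg t]
    calc mgf (X 0) ℙ t ≤ 1 + C * t ^ 2 := heval ▸ hle
      _ ≤ _ := hfin
  -- identical distribution: same mgf, same integrability
  have hmgfi : ∀ i t, mgf (X i) ℙ t = mgf (X 0) ℙ t := by
    intro i t
    have hgm : ∀ j : ℕ, AEStronglyMeasurable (fun x : ℝ => Real.exp (t * x))
        (Measure.map (X j) ℙ) := fun j =>
      (Real.continuous_exp.comp (continuous_const.mul continuous_id)).aestronglyMeasurable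
    calc mgf (X i) ℙ t = ∫ x, Real.exp (t * x) ∂(Measure.map (X i) ℙ) :=
          (integral_map (hmeas i).aemeasurable (hgm i)).symm
      _ = ∫ x, Real.exp (t * x) ∂(Measure.map (X 0) ℙ) := by rw [hident i]
      _ = mgf (X 0) ℙ t := integral_map (hmeas 0).aemeasurable (hgm 0)
  have hInti : ∀ i, ∀ t : ℝ, |t| < δ → Integrable (fun ω => Real.exp (t * X i ω)) ℙ := by
    intro i t ht
    have hgm : ∀ j : ℕ, AEStronglyMeasurable (fun x : ℝ => Real.exp (t * x))
        (Measure.map (X j) ℙ) := fun j =>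
      (Real.continuous_exp.comp (continuous_const.mul continuous_id)).aestronglyMeasurable
    have : Integrable (fun x : ℝ => Real.exp (t * x)) (Measure.map (X i) ℙ) := by
      rw [hident i]
      exact (integrable_map_measure (hgm 0) (hmeas 0).aemeasurable).2 (hInt t ht)
    exact (integrable_map_measure (hgm i) (hmeas i).aemeasurable).1 this
  have hIntSum : ∀ (t : ℝ), |t| < δ → ∀ n : ℕ,
      Integrable (fun ω => Real.exp (t * (∑ i ∈ Finset.range n, X i) ω)) ℙ := by
    intro t ht n
    exact hindep.integrable_exp_mul_sum hmeas (fun i _ => hInti i t ht)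
  -- choose the constant
  clear_value C D
  refine ⟨1 / (4 * D), by positivity, ?_⟩
  intro p hp1 hp2
  -- choose N
  have hlim : Filter.Tendsto (fun n : ℕ => (n : ℝ) ^ (p - 1)) Filter.atTop (nhds 0) := by
    have h := (tendsto_rpow_neg_atTop (by linarith : (0:ℝ) < 1 - p)).comp
      tendsto_natCast_atTop_atTop (α := ℕ)
    have he : (fun n : ℕ => (n : ℝ) ^ (p - 1)) =
        (fun x : ℝ => x ^ (-(1 - p))) ∘ (fun n : ℕ => (n : ℝ)) := by
      funext n
      simp only [Function.comp_apply]
      rw [show -(1 - p) = p - 1 by ring]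
    rw [he]; exact h
  have hev : ∀ᶠ n : ℕ in Filter.atTop, (n : ℝ) ^ (p - 1) < δ * D :=
    hlim.eventually_lt_const (by positivity)
  obtain ⟨N0, hN0⟩ := Filter.eventually_atTop.1 hev
  refine ⟨max N0 1, ?_⟩
  intro n hn ε hε0 hε1
  have hn1 : 1 ≤ n := le_trans (le_max_right N0 1) hn
  have hnR : (1:ℝ) ≤ (n:ℝ) := by exact_mod_cast hn1
  have hn0 : (0:ℝ) < (n:ℝ) := by linarith
  have hnp : (n : ℝ) ^ (p - 1) < δ * D := hN0 n (le_trans (le_max_left N0 1) hn)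
  set z : ℝ := (n : ℝ) ^ (p - 1) with hzdef
  set u : ℝ := (n : ℝ) ^ (2 * p - 1) with hudef
  have hz0 : 0 < z := Real.rpow_pos_of_pos hn0 _
  have hzu1 : z * (n : ℝ) ^ p = u := by
    rw [hzdef, hudef, ← Real.rpow_add hn0]; ring_nf
  have hzu2 : (n : ℝ) * z ^ 2 = u := by
    have e1 : z ^ 2 = (n : ℝ) ^ ((p - 1) * (2:ℕ)) := by
      rw [Real.rpow_mul hn0.le, Real.rpow_natCast]
    rw [e1, hudef]
    calc (n : ℝ) * (n : ℝ) ^ ((p - 1) * (2:ℕ)) 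
        = (n : ℝ) ^ (1:ℝ) * (n : ℝ) ^ ((p - 1) * (2:ℕ)) := by rw [Real.rpow_one]
      _ = (n : ℝ) ^ (1 + (p - 1) * (2:ℕ)) := (Real.rpow_add hn0 _ _).symm
      _ = (n : ℝ) ^ (2 * p - 1) := by norm_num; ring_nf
  set t : ℝ := ε * z / (2 * D) with htdef
  have ht0 : 0 < t := by positivity
  have htle : t ≤ δ / 2 := by
    rw [htdef, div_le_iff₀ (by positivity)]
    nlinarith
  have htabs : |t| ≤ δ / 2 := by rwa [abs_of_pos ht0]
  have htδ : |t| < δ := lt_of_le_of_lt htabs (by linarith)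
  have htδ' : |(-t)| < δ := by rwa [abs_neg]
  have htabs' : |(-t)| ≤ δ / 2 := by rwa [abs_neg]
  set S : Ω → ℝ := ∑ i ∈ Finset.range n, X i with hSdef
  have hSapp : ∀ ω, S ω = ∑ i ∈ Finset.range n, X i ω := fun ω => by
    rw [hSdef]; simp
  set a : ℝ := ε * (n : ℝ) ^ p with hadef
  have hsub : {ω | a ≤ |∑ i ∈ Finset.range n, X i ω|} ⊆
      {ω | a ≤ S ω} ∪ {ω | S ω ≤ -a} := by
    intro ω hω
    simp only [Set.mem_setOf_eq] at hω
    rcases le_abs.1 hω with h | h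
    · exact Or.inl (by simp only [Set.mem_setOf_eq, hSapp]; exact h)
    · exact Or.inr (by simp only [Set.mem_setOf_eq, hSapp]; linarith)
  have hIS : ∀ s : ℝ, |s| < δ → Integrable (fun ω => Real.exp (s * S ω)) ℙ :=
    fun s hs => hIntSum s hs n
  clear_value z u t a S
  -- mgf of the sum
  have hmgfS : ∀ s : ℝ, |s| ≤ δ / 2 → |s| < δ →
      mgf S ℙ s ≤ Real.exp ((n : ℝ) * (D * s ^ 2)) := by
    intro s hs hsδ
    have h1 : mgf S ℙ s = (mgf (X 0) ℙ s) ^ n := by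
      rw [hSdef, hindep.mgf_sum hmeas,
        Finset.prod_congr rfl (fun i _ => hmgfi i s), Finset.prod_const, Finset.card_range]
    rw [h1]
    calc (mgf (X 0) ℙ s) ^ n ≤ (Real.exp (D * s ^ 2)) ^ n :=
          pow_le_pow_left₀ mgf_nonneg (hmgf s hs) n
      _ = Real.exp ((n : ℝ) * (D * s ^ 2)) := by rw [← Real.exp_nat_mul]
  have hexps : -t * a + (n : ℝ) * (D * t ^ 2) = -(1 / (4 * D)) * ε ^ 2 * u := by
    have hD' : D ≠ 0 := ne_of_gt hD0
    have e1 : -t * a = -(ε ^ 2 * u) / (2 * D) := by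
      rw [htdef, hadef, ← hzu1]; field_simp
    have e2 : (n : ℝ) * (D * t ^ 2) = ε ^ 2 * u / (4 * D) := by
      rw [htdef, ← hzu2]; field_simp; ring
    rw [e1, e2]; field_simp; ring
  -- upper tail
  have hA : ℙ {ω | a ≤ S ω} ≤ ENNReal.ofReal (Real.exp (-(1 / (4 * D)) * ε ^ 2 * u)) := by
    have h1 := measure_ge_le_exp_mul_mgf (μ := ℙ) (X := S) a ht0.le (hIS t htδ)
    have h2 : Real.exp (-t * a) * mgf S ℙ t ≤ Real.exp (-(1 / (4 * D)) * ε ^ 2 * u) := by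
      calc Real.exp (-t * a) * mgf S ℙ t
          ≤ Real.exp (-t * a) * Real.exp ((n : ℝ) * (D * t ^ 2)) :=
            mul_le_mul_of_nonneg_left (hmgfS t htabs htδ) (Real.exp_pos _).le
        _ = Real.exp (-t * a + (n : ℝ) * (D * t ^ 2)) := (Real.exp_add _ _).symm
        _ = _ := by rw [hexps]
    calc ℙ {ω | a ≤ S ω} = ENNReal.ofReal ((ℙ {ω | a ≤ S ω}).toReal) :=
          (ENNReal.ofReal_toReal (measure_ne_top _ _)).symm
      _ ≤ _ := ENNReal.ofReal_le_ofReal (h1.trans h2)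
  -- lower tail
  have hB : ℙ {ω | S ω ≤ -a} ≤ ENNReal.ofReal (Real.exp (-(1 / (4 * D)) * ε ^ 2 * u)) := by
    have h1 := measure_le_le_exp_mul_mgf (μ := ℙ) (X := S) (-a)
      (neg_nonpos.2 ht0.le) (hIS (-t) htδ')
    have h2 : Real.exp (-(-t) * (-a)) * mgf S ℙ (-t) ≤
        Real.exp (-(1 / (4 * D)) * ε ^ 2 * u) := by
      have he : Real.exp (-(-t) * (-a)) = Real.exp (-t * a) := by congr 1; ring
      rw [he]
      calc Real.exp (-t * a) * mgf S ℙ (-t)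
          ≤ Real.exp (-t * a) * Real.exp ((n : ℝ) * (D * (-t) ^ 2)) :=
            mul_le_mul_of_nonneg_left (hmgfS (-t) htabs' htδ') (Real.exp_pos _).le
        _ = Real.exp (-t * a + (n : ℝ) * (D * t ^ 2)) := by
            rw [← Real.exp_add]; congr 1; ring
        _ = _ := by rw [hexps]
    calc ℙ {ω | S ω ≤ -a} = ENNReal.ofReal ((ℙ {ω | S ω ≤ -a}).toReal) :=
          (ENNReal.ofReal_toReal (measure_ne_top _ _)).symm
      _ ≤ _ := ENNReal.ofReal_le_ofReal (h1.trans h2)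
  calc ℙ {ω | a ≤ |∑ i ∈ Finset.range n, X i ω|}
      ≤ ℙ ({ω | a ≤ S ω} ∪ {ω | S ω ≤ -a}) := measure_mono hsub
    _ ≤ ℙ {ω | a ≤ S ω} + ℙ {ω | S ω ≤ -a} := measure_union_le _ _
    _ ≤ ENNReal.ofReal (Real.exp (-(1 / (4 * D)) * ε ^ 2 * u)) +
        ENNReal.ofReal (Real.exp (-(1 / (4 * D)) * ε ^ 2 * u)) := add_le_add hA hB
    _ = ENNReal.ofReal (2 * Real.exp (-(1 / (4 * D)) * ε ^ 2 * u)) := by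
        rw [← ENNReal.ofReal_add (Real.exp_nonneg _) (Real.exp_nonneg _), two_mul]
end

section
/- Let B(z) and C(z) be formal power series with nonnegative coefficients, C(0)=0, satisfying the block-decomposition equation C•(z) = z·exp(B'(C•(z))), where C•(z) = z·C'(z). Assume B has at least one nonzero coefficient of degree ≥ 2 (i.e., B' ≠ 0). If C has finite positive radius of convergence ρ, then y := C•(ρ) < ∞ and λ := B'(y) < ∞, and y = ρ·exp(λ). -/
open scoped ENNReal
open Filter Topology

/-- The exponential function on `ℝ≥0∞`, given by its power series. -/
noncomputable def eexp (t : ℝ≥0∞) : ℝ≥0∞ := ∑' k : ℕ, t ^ k / (k.factorial : ℝ≥0∞)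

section Aux

private lemma tsum_iSup_mono (f : ℕ → ℕ → ℝ≥0∞) (hf : ∀ n, Monotone fun k => f k n) :
    ∑' n, ⨆ k, f k n = ⨆ k, ∑' n, f k n := by
  refine le_antisymm ?_ (iSup_le fun k => ENNReal.tsum_le_tsum fun n => le_iSup (fun k => f k n) k)
  rw [ENNReal.tsum_eq_iSup_sum]
  refine iSup_le fun s => ?_
  rw [ENNReal.finsetSum_iSup_of_monotone fun n => hf n]
  exact iSup_mono fun k => ENNReal.sum_le_tsum s

private lemma pow_iSup_mono (y : ℕ → ℝ≥0∞) (hy : Monotone y) (n : ℕ) :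
    (⨆ k, y k) ^ n = ⨆ k, y k ^ n := by
  have h1 : Filter.Tendsto (fun k => y k ^ n) atTop (𝓝 ((⨆ k, y k) ^ n)) :=
    ((ENNReal.continuous_pow n).continuousAt.tendsto).comp (tendsto_atTop_iSup hy)
  exact (iSup_eq_of_tendsto (fun i j h => by gcongr; exact hy h) h1).symm

private lemma ser_iSup (a : ℕ → ℝ≥0∞) (y : ℕ → ℝ≥0∞) (hy : Monotone y) :
    ∑' n, a n * (⨆ k, y k) ^ n = ⨆ k, ∑' n, a n * y k ^ n := by
  have h : ∀ n : ℕ, a n * (⨆ k, y k) ^ n = ⨆ k, a n * y k ^ n := fun n => by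
    rw [pow_iSup_mono y hy n, ENNReal.mul_iSup]
  simp_rw [h]
  exact tsum_iSup_mono _ (fun n i j hij => mul_le_mul_right (by gcongr; exact hy hij) (a n))

private lemma one_le_eexp (t : ℝ≥0∞) : 1 ≤ eexp t := by
  have := ENNReal.le_tsum (f := fun k : ℕ => t ^ k / (k.factorial : ℝ≥0∞)) 0
  simpa [eexp] using this

private lemma le_eexp (t : ℝ≥0∞) : t ≤ eexp t := by
  have := ENNReal.le_tsum (f := fun k : ℕ => t ^ k / (k.factorial : ℝ≥0∞)) 1
  simpa [eexp] using this

private lemma sq_div_two_le_eexp (t : ℝ≥0∞) : t ^ 2 / 2 ≤ eexp t := by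
  have := ENNReal.le_tsum (f := fun k : ℕ => t ^ k / (k.factorial : ℝ≥0∞)) 2
  simpa [eexp, Nat.factorial] using this

private lemma eexp_eq_ser (t : ℝ≥0∞) : eexp t = ∑' n : ℕ, ((n.factorial : ℝ≥0∞))⁻¹ * t ^ n := by
  unfold eexp
  congr 1
  funext n
  rw [div_eq_mul_inv, mul_comm]

end Aux

/-- Finiteness of the singular constants for block-stable graph classes.  Let `c` be the
(nonnegative) coefficient sequence of `C(z)` with `c 0 = 0`, let `b` be that of `B(z)`
with some nonzero coefficient of degree at least `2`, write `Cdot` for the series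
`C•(z) = z C'(z)` and `Bp` for `B'(z)`, and suppose the block-decomposition equation
`C•(x) = x · exp(B'(C•(x)))` holds strictly below the radius of convergence `ρ` of `C`,
with `0 < ρ < ∞`.  Then `y = C•(ρ)` and `λ = B'(y)` are finite and `y = ρ e^λ`. -/
theorem singular_constants_finite
    (b c : ℕ → ℝ≥0∞) (hc0 : c 0 = 0)
    (hb : ∃ n, 2 ≤ n ∧ b n ≠ 0)
    (ρ : ℝ≥0∞) (hρ0 : 0 < ρ) (hρfin : ρ < ∞)
    (Cdot : ℝ≥0∞ → ℝ≥0∞)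
    (hCdot : ∀ x, Cdot x = ∑' n : ℕ, (n : ℝ≥0∞) * c n * x ^ n)
    (Bp : ℝ≥0∞ → ℝ≥0∞)
    (hBp : ∀ t, Bp t = ∑' n : ℕ, ((n : ℝ≥0∞) + 1) * b (n + 1) * t ^ n)
    (hrad₁ : ∀ x, x < ρ → (∑' n : ℕ, c n * x ^ n) < ∞)
    (hrad₂ : ∀ x, ρ < x → (∑' n : ℕ, c n * x ^ n) = ∞)
    (heq : ∀ x, x < ρ → Cdot x = x * eexp (Bp (Cdot x))) :
    Cdot ρ < ∞ ∧ Bp (Cdot ρ) < ∞ ∧ Cdot ρ = ρ * eexp (Bp (Cdot ρ)) := by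
  classical
  obtain ⟨n₀, hn₀2, hbn₀⟩ := hb
  obtain ⟨m, rfl⟩ : ∃ m, n₀ = m + 1 := ⟨n₀ - 1, by omega⟩
  have hm : m ≠ 0 := by omega
  set a : ℝ≥0∞ := ((m : ℝ≥0∞) + 1) * b (m + 1) with ha
  have ha0 : a ≠ 0 := by
    rw [ha]
    exact mul_ne_zero (by simp) hbn₀
  -- monotonicity
  have hCmono : Monotone Cdot := fun s t h => by
    rw [hCdot s, hCdot t]; exact ENNReal.tsum_le_tsum fun n => by gcongr
  have hBpmono : Monotone Bp := fun s t h => by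
    rw [hBp s, hBp t]; exact ENNReal.tsum_le_tsum fun n => by gcongr
  have heexp_mono : Monotone eexp := fun s t h =>
    ENNReal.tsum_le_tsum fun k => by gcongr
  -- lower bound on Bp
  have hBplb : ∀ t, a * t ^ m ≤ Bp t := fun t => by
    rw [hBp t, ha]
    exact ENNReal.le_tsum m
  -- finiteness strictly below ρ
  have hfin : ∀ x, x < ρ → Cdot x < ∞ := by
    intro x hx
    obtain ⟨x', hx1, hx2⟩ := exists_between hx
    set d := x' - x with hd
    have hxle : x ≤ x' := hx1.le
    have hx'top : x' ≠ ∞ := (hx2.trans hρfin).ne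
    have hxtop : x ≠ ∞ := (hx.trans hρfin).ne
    have hd0 : d ≠ 0 := by rw [hd]; exact (tsub_pos_of_lt hx1).ne'
    have hd_top : d ≠ ∞ := (lt_of_le_of_lt tsub_le_self (hx2.trans hρfin)).ne
    have hxd : x + d = x' := add_tsub_cancel_of_le hxle
    have key : ∀ n : ℕ, (n : ℝ≥0∞) * x ^ n ≤ x / d * x' ^ n := by
      intro n
      cases n with
      | zero => simp
      | succ m' =>
        have hbin : ((m' : ℝ≥0∞) + 1) * x ^ m' * d ≤ x' ^ (m' + 1) := by
          have hterm : x ^ m' * d ^ (m' + 1 - m') * ((m' + 1).choose m' : ℝ≥0∞)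
              ≤ (x + d) ^ (m' + 1) := by
            rw [add_pow]
            exact Finset.single_le_sum
              (f := fun k => x ^ k * d ^ (m' + 1 - k) * ((m' + 1).choose k : ℝ≥0∞))
              (fun i _ => zero_le) (Finset.mem_range.2 (by omega))
          rw [hxd] at hterm
          calc ((m' : ℝ≥0∞) + 1) * x ^ m' * d
              = x ^ m' * d ^ (m' + 1 - m') * ((m' + 1).choose m' : ℝ≥0∞) := by
                rw [Nat.choose_succ_self_right]
                have h1 : m' + 1 - m' = 1 := by omega
                rw [h1, pow_one]
                push_cast; ring
            _ ≤ x' ^ (m' + 1) := hterm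
        have h2 : ((m' : ℝ≥0∞) + 1) * x ^ m' ≤ x' ^ (m' + 1) / d :=
          (ENNReal.le_div_iff_mul_le (Or.inl hd0) (Or.inl hd_top)).2 hbin
        calc ((m' + 1 : ℕ) : ℝ≥0∞) * x ^ (m' + 1)
            = (((m' : ℝ≥0∞) + 1) * x ^ m') * x := by push_cast; ring
          _ ≤ x' ^ (m' + 1) / d * x := by gcongr
          _ = x / d * x' ^ (m' + 1) := by rw [div_eq_mul_inv, div_eq_mul_inv]; ring
    rw [hCdot x]
    have hle : ∑' n : ℕ, (n : ℝ≥0∞) * c n * x ^ n ≤ x / d * ∑' n : ℕ, c n * x' ^ n := by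
      rw [← ENNReal.tsum_mul_left]
      refine ENNReal.tsum_le_tsum fun n => ?_
      calc (n : ℝ≥0∞) * c n * x ^ n = c n * ((n : ℝ≥0∞) * x ^ n) := by ring
        _ ≤ c n * (x / d * x' ^ n) := mul_le_mul_right (key n) (c n)
        _ = x / d * (c n * x' ^ n) := by ring
    refine lt_of_le_of_lt hle (ENNReal.mul_lt_top ?_ ?_)
    · exact ENNReal.div_lt_top hxtop hd0
    · exact hrad₁ x' hx2
  -- lower bound Cdot x ≥ x
  have hCge : ∀ x, x < ρ → x ≤ Cdot x := fun x hx => by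
    rw [heq x hx]
    calc x = x * 1 := (mul_one x).symm
      _ ≤ x * eexp (Bp (Cdot x)) := by gcongr; exact one_le_eexp _
  -- the uniform bound M
  have hhalf0 : ρ / 2 ≠ 0 := by
    simp [ENNReal.div_eq_zero_iff, hρ0.ne']
  have hhalftop : ρ / 2 ≠ ∞ := (lt_of_le_of_lt ENNReal.half_le_self hρfin).ne
  set M₀ : ℝ≥0∞ := (ρ / 2 * a ^ 2 / 2)⁻¹ with hM₀
  set M : ℝ≥0∞ := max 1 M₀ with hM
  have hMtop : M ≠ ∞ := by
    have hpos : ρ / 2 * a ^ 2 / 2 ≠ 0 := by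
      rw [div_eq_mul_inv]
      exact mul_ne_zero (mul_ne_zero hhalf0 (pow_ne_zero 2 ha0)) (by simp)
    have hM₀top : M₀ ≠ ∞ := by
      rw [hM₀]
      simpa [ENNReal.inv_eq_top] using hpos
    rw [hM]
    exact (max_lt ENNReal.one_lt_top hM₀top.lt_top).ne
  have hbound : ∀ x, ρ / 2 ≤ x → x < ρ → Cdot x ≤ M := by
    intro x hx1 hx2
    have hx0 : (0 : ℝ≥0∞) < x := lt_of_lt_of_le (pos_iff_ne_zero.2 hhalf0) hx1
    have hEq := heq x hx2
    have hyfin : Cdot x ≠ ∞ := (hfin x hx2).ne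
    set y := Cdot x with hy
    by_cases hy1 : y ≤ 1
    · exact hy1.trans (le_max_left _ _)
    push_neg at hy1
    have hy0 : y ≠ 0 := (hx0.trans_le (hCge x hx2)).ne'
    have h1 : a * y ≤ Bp y := by
      calc a * y ≤ a * y ^ m := by gcongr; exact le_self_pow₀ hy1.le hm
        _ ≤ Bp y := hBplb y
    have h2 : (a * y) ^ 2 / 2 ≤ eexp (Bp y) := by
      calc (a * y) ^ 2 / 2 ≤ (Bp y) ^ 2 / 2 := by gcongr
        _ ≤ eexp (Bp y) := sq_div_two_le_eexp _
    have h3 : x * ((a * y) ^ 2 / 2) ≤ y := by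
      calc x * ((a * y) ^ 2 / 2) ≤ x * eexp (Bp y) := by gcongr
        _ = y := hEq.symm
    have h4 : (x * a ^ 2 / 2) * y * y ≤ 1 * y := by
      calc (x * a ^ 2 / 2) * y * y = x * ((a * y) ^ 2 / 2) := by
            rw [div_eq_mul_inv, div_eq_mul_inv]; ring
        _ ≤ y := h3
        _ = 1 * y := (one_mul y).symm
    have h5 : x * a ^ 2 / 2 * y ≤ 1 := (ENNReal.mul_le_mul_iff_left hy0 hyfin).1 h4
    have h6 : y ≤ (x * a ^ 2 / 2)⁻¹ := by
      rw [ENNReal.le_inv_iff_mul_le, mul_comm]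
      exact h5
    have h7 : (x * a ^ 2 / 2)⁻¹ ≤ M₀ := by
      rw [hM₀, ENNReal.inv_le_inv]
      gcongr
    exact h6.trans (h7.trans (le_max_right 1 M₀))
  -- the approximating sequence
  have hden : ∀ k : ℕ, ((k : ℝ≥0∞) + 2) ≠ ∞ :=
    fun k => ENNReal.add_ne_top.2 ⟨ENNReal.natCast_ne_top k, ENNReal.ofNat_ne_top⟩
  set xk : ℕ → ℝ≥0∞ := fun k => ρ - ρ / ((k : ℝ≥0∞) + 2) with hxk
  have hxmono : Monotone xk := by
    intro i j h
    apply tsub_le_tsub_left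
    apply ENNReal.div_le_div_left
    gcongr
  have hxlt : ∀ k, xk k < ρ := by
    intro k
    refine ENNReal.sub_lt_self hρfin.ne hρ0.ne' ?_
    simp [ENNReal.div_eq_zero_iff, hρ0.ne', hden k]
  have hxhalf : ∀ k, ρ / 2 ≤ xk k := by
    intro k
    have h1 : ρ / ((k : ℝ≥0∞) + 2) ≤ ρ / 2 :=
      ENNReal.div_le_div_left (le_add_self) ρ
    calc ρ / 2 = ρ - ρ / 2 := (ENNReal.sub_half hρfin.ne).symm
      _ ≤ xk k := tsub_le_tsub_left h1 ρ
  have hxsup : (⨆ k, xk k) = ρ := by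
    have h2 : Filter.Tendsto (fun k : ℕ => ((k : ℝ≥0∞) + 2)⁻¹) atTop (𝓝 0) := by
      have h3 := ENNReal.tendsto_inv_nat_nhds_zero.comp (tendsto_add_atTop_nat 2)
      have h4 : (fun k : ℕ => ((k : ℝ≥0∞) + 2)⁻¹)
          = fun n : ℕ => (((n + 2 : ℕ) : ℝ≥0∞))⁻¹ := by
        funext k
        push_cast
        ring
      rw [h4]
      exact h3
    have h1 : Filter.Tendsto (fun k : ℕ => ρ / ((k : ℝ≥0∞) + 2)) atTop (𝓝 0) := by
      have := ENNReal.Tendsto.const_mul (a := ρ) h2 (Or.inr hρfin.ne)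
      simpa [div_eq_mul_inv] using this
    have h3 : Filter.Tendsto xk atTop (𝓝 (ρ - 0)) :=
      ENNReal.Tendsto.sub tendsto_const_nhds h1 (Or.inl hρfin.ne)
    rw [tsub_zero] at h3
    exact iSup_eq_of_tendsto hxmono h3
  -- sup identities
  have hCsup : Cdot ρ = ⨆ k, Cdot (xk k) := by
    have h := ser_iSup (fun n => (n : ℝ≥0∞) * c n) xk hxmono
    rw [hxsup] at h
    simp_rw [← hCdot] at h
    exact h
  have hCle : ∀ k, Cdot (xk k) ≤ M := fun k => hbound (xk k) (hxhalf k) (hxlt k)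
  have goal1 : Cdot ρ < ∞ := by
    rw [hCsup]
    exact lt_of_le_of_lt (iSup_le hCle) (lt_top_iff_ne_top.2 hMtop)
  have hymono : Monotone fun k => Cdot (xk k) := hCmono.comp hxmono
  have hBsupEq : Bp (Cdot ρ) = ⨆ k, Bp (Cdot (xk k)) := by
    rw [hCsup]
    have h := ser_iSup (fun n => ((n : ℝ≥0∞) + 1) * b (n + 1)) (fun k => Cdot (xk k)) hymono
    simp_rw [← hBp] at h
    exact h
  have hBpk : ∀ k, Bp (Cdot (xk k)) ≤ M / (ρ / 2) := by
    intro k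
    have hEq := heq _ (hxlt k)
    have h1 : Bp (Cdot (xk k)) * (ρ / 2) ≤ M := by
      calc Bp (Cdot (xk k)) * (ρ / 2) = ρ / 2 * Bp (Cdot (xk k)) := mul_comm _ _
        _ ≤ xk k * eexp (Bp (Cdot (xk k))) := mul_le_mul' (hxhalf k) (le_eexp _)
        _ = Cdot (xk k) := hEq.symm
        _ ≤ M := hCle k
    exact (ENNReal.le_div_iff_mul_le (Or.inl hhalf0) (Or.inl hhalftop)).2 h1
  have goal2 : Bp (Cdot ρ) < ∞ := by
    rw [hBsupEq]
    exact lt_of_le_of_lt (iSup_le hBpk) (ENNReal.div_lt_top hMtop hhalf0)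
  -- the equation at ρ
  have hBmonoSeq : Monotone fun k => Bp (Cdot (xk k)) := hBpmono.comp hymono
  have heE : eexp (Bp (Cdot ρ)) = ⨆ k, eexp (Bp (Cdot (xk k))) := by
    rw [hBsupEq]
    have h := ser_iSup (fun n => ((n.factorial : ℝ≥0∞))⁻¹) (fun k => Bp (Cdot (xk k))) hBmonoSeq
    simp_rw [← eexp_eq_ser] at h
    exact h
  have hemonoSeq : Monotone fun k => eexp (Bp (Cdot (xk k))) := heexp_mono.comp hBmonoSeq
  have goal3 : Cdot ρ = ρ * eexp (Bp (Cdot ρ)) := by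
    rw [heE, ENNReal.mul_iSup, hCsup]
    apply le_antisymm
    · refine iSup_mono fun k => ?_
      have hEq := heq _ (hxlt k)
      calc Cdot (xk k) = xk k * eexp (Bp (Cdot (xk k))) := hEq
        _ ≤ ρ * eexp (Bp (Cdot (xk k))) := mul_le_mul_left (hxlt k).le _
    · refine iSup_le fun k => ?_
      calc ρ * eexp (Bp (Cdot (xk k)))
          = (⨆ j, xk j) * eexp (Bp (Cdot (xk k))) := by rw [hxsup]
        _ = ⨆ j, xk j * eexp (Bp (Cdot (xk k))) := ENNReal.iSup_mul _ _
        _ ≤ ⨆ i, Cdot (xk i) := by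
            refine iSup_le fun j => le_iSup_of_le (max j k) ?_
            calc xk j * eexp (Bp (Cdot (xk k)))
                ≤ xk (max j k) * eexp (Bp (Cdot (xk (max j k)))) :=
                  mul_le_mul' (hxmono (le_max_left j k))
                    (heexp_mono (hBpmono (hCmono (hxmono (le_max_right j k)))))
              _ = Cdot (xk (max j k)) := (heq _ (hxlt _)).symm
  exact ⟨goal1, goal2, goal3⟩
end

section
/- Let T be a rooted plane tree with n vertices and let v₀, …, v_{n−1} be its vertices in lexicographic (depth-first) order. Define the DFS queue process by Q₀ = 1 and Qᵢ = Q_{i−1} − 1 + d⁺(v_{i−1}), where d⁺ is the out-degree. Then for each 0 ≤ j ≤ n−1, if v = v_j and v' is the same vertex at position k in the reverse (mirror-image) DFS order with queue process Q^r, one has Q_j + Q^r_k = 2 + Σ_{u ≻ v} d⁺(u) − h(v), where the sum ranges over the strict ancestors u of v and h(v) is the height of v. -/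
open scoped Classical

/-- A plane tree: a rooted tree with an ordered list of subtrees at every vertex. -/
inductive PlaneTree where
  | node : List PlaneTree → PlaneTree

namespace PlaneTree

/-- The list of subtrees dangling from the root. -/
def children : PlaneTree → List PlaneTree
  | node cs => cs

/-- The subtree at an Ulam–Harris address, if it exists. -/
def get : List ℕ → PlaneTree → Option PlaneTree
  | [], t => some t
  | i :: p, t => (t.children[i]?).bind (get p)

/-- The out-degree of the vertex at address `p` (or `0` if there is no such vertex). -/
def degAt (t : PlaneTree) (p : List ℕ) : ℕ :=
  match get p t with
  | some s => s.children.length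
  | none => 0

/-- The mirror image of a plane tree: every offspring list is reversed. -/
def mirror : PlaneTree → PlaneTree
  | node cs => node ((cs.attach.map fun c => mirror c.1).reverse)
  decreasing_by
    have := List.sizeOf_lt_of_mem c.2
    simp only [PlaneTree.node.sizeOf_spec]
    omega

/-- The address in the mirror image corresponding to the address `p` in `t`. -/
def mirrorAddr : List ℕ → PlaneTree → List ℕ
  | [], _ => []
  | i :: p, t =>
      (t.children.length - 1 - i) ::
        (match t.children[i]? with
         | some c => mirrorAddr p c
         | none => p)

/-- The lexicographic depth-first-search queue value at the vertex `v` of `t`: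
`Q_j = 1 + Σ_{i<j} (d⁺(v_i) - 1)`, the sum ranging over the vertices strictly preceding
`v` in depth-first (lexicographic) order.  Here `V` is the set of (Ulam–Harris addresses
of) vertices of `t`. -/
noncomputable def queueAt (t : PlaneTree) (V : Finset (List ℕ)) (v : List ℕ) : ℤ :=
  1 + ∑ q ∈ V.filter (fun q => List.Lex (· < ·) q v), ((degAt t q : ℤ) - 1)

-- auxiliary lemmas

lemma isSome_get? {α} (l : List α) (n : ℕ) : (l[n]?).isSome ↔ n < l.length := by
  rw [Option.isSome_iff_exists]
  constructor
  · rintro ⟨a, ha⟩; exact (List.getElem?_eq_some_iff.mp ha).1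
  · intro h; exact ⟨_, List.getElem?_eq_getElem h⟩

lemma get_nil (t : PlaneTree) : get [] t = some t := rfl

lemma get_cons (i : ℕ) (p : List ℕ) (t : PlaneTree) :
    get (i::p) t = (t.children[i]?).bind (get p) := rfl

lemma children_node (cs : List PlaneTree) : (node cs).children = cs := rfl

lemma degAt_nil (t : PlaneTree) : degAt t [] = t.children.length := rfl

lemma degAt_cons {t c : PlaneTree} {i : ℕ} (p : List ℕ) (h : t.children[i]? = some c) :
    degAt t (i::p) = degAt c p := by
  unfold degAt
  rw [get_cons, h, Option.bind_some]

lemma children_mirror (cs : List PlaneTree) :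
    (mirror (node cs)).children = (cs.map mirror).reverse := by
  rw [mirror]
  rw [children_node, List.attach_map_val]

lemma length_children_mirror (cs : List PlaneTree) :
    (mirror (node cs)).children.length = cs.length := by
  simp [children_mirror]

lemma get?_children_mirror (cs : List PlaneTree) (i : ℕ) (c : PlaneTree)
    (h : cs[i]? = some c) :
    (mirror (node cs)).children[cs.length - 1 - i]? = some (mirror c) := by
  have hi : i < cs.length := (isSome_get? _ _).mp (by rw [h]; rfl)
  rw [children_mirror]
  rw [List.getElem?_reverse (by simp; omega)]
  have hidx : (cs.map mirror).length - 1 - (cs.length - 1 - i) = i := by simp; omega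
  rw [hidx, List.getElem?_map, h, Option.map_some]

lemma mirrorAddr_cons (i : ℕ) (p : List ℕ) {t c : PlaneTree}
    (h : t.children[i]? = some c) :
    mirrorAddr (i::p) t = (t.children.length - 1 - i) :: mirrorAddr p c := by
  rw [mirrorAddr, h]

lemma lex_cons_cons {a b : ℕ} {l m : List ℕ} :
    List.Lex (·<·) (a::l) (b::m) ↔ a < b ∨ (a = b ∧ List.Lex (·<·) l m) := by
  constructor
  · intro h
    cases h with
    | cons h => exact Or.inr ⟨rfl, h⟩
    | rel h => exact Or.inl h
  · rintro (h | ⟨rfl, h⟩)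
    exacts [List.Lex.rel h, List.Lex.cons h]

/-- The address set of the subtree rooted at child `j`, extracted from `V`. -/
noncomputable def childSet (V : Finset (List ℕ)) (j : ℕ) : Finset (List ℕ) :=
  (V.filter (fun q => q.head? = some j)).image List.tail

lemma mem_childSet {V : Finset (List ℕ)} {j : ℕ} {r : List ℕ} :
    r ∈ childSet V j ↔ (j :: r) ∈ V := by
  simp only [childSet, Finset.mem_image, Finset.mem_filter]
  constructor
  · rintro ⟨q, ⟨hq, hh⟩, ht⟩
    cases q with
    | nil => simp at hh
    | cons a l =>
      simp only [List.head?_cons, Option.some.injEq] at hh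
      simp only [List.tail_cons] at ht
      subst hh; subst ht; exact hq
  · intro h; exact ⟨j::r, ⟨h, rfl⟩, rfl⟩

lemma childSet_spec {t : PlaneTree} {V : Finset (List ℕ)}
    (hV : ∀ p, p ∈ V ↔ (get p t).isSome) {j : ℕ} {c : PlaneTree}
    (h : t.children[j]? = some c) :
    ∀ r, r ∈ childSet V j ↔ (get r c).isSome := by
  intro r
  rw [mem_childSet, hV, get_cons, h, Option.bind_some]

/-- Decomposition of a sum over the vertex set at the root. -/
lemma sum_decomp (t : PlaneTree) (V : Finset (List ℕ))
    (hV : ∀ p, p ∈ V ↔ (get p t).isSome) (G : List ℕ → ℤ) :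
    ∑ q ∈ V, G q =
      G [] + ∑ j ∈ Finset.range t.children.length,
        ∑ r ∈ childSet V j, G (j :: r) := by
  have hVeq : V = insert ([] : List ℕ)
      ((Finset.range t.children.length).biUnion
        (fun j => (childSet V j).image (j :: ·))) := by
    ext q
    simp only [Finset.mem_insert, Finset.mem_biUnion, Finset.mem_range, Finset.mem_image]
    constructor
    · intro hq
      cases q with
      | nil => exact Or.inl rfl
      | cons a l =>
        refine Or.inr ⟨a, ?_, l, mem_childSet.mpr hq, rfl⟩
        have := (hV _).mp hq
        rw [get_cons] at this
        rcases h : t.children[a]? with _ | c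
        · rw [h] at this; simp at this
        · exact (isSome_get? _ _).mp (by rw [h]; rfl)
    · rintro (rfl | ⟨j, _, r, hr, rfl⟩)
      · exact (hV []).mpr (by rw [get_nil]; rfl)
      · exact mem_childSet.mp hr
  have hdisj : Set.PairwiseDisjoint ↑(Finset.range t.children.length)
      (fun j => (childSet V j).image (j :: ·)) := by
    intro a _ b _ hab
    simp only [Function.onFun, Finset.disjoint_left]
    intro q hqa hqb
    simp only [Finset.mem_image] at hqa hqb
    obtain ⟨x, _, rfl⟩ := hqa
    obtain ⟨y, _, h⟩ := hqb
    apply hab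
    injection h with h1 h2
    exact h1.symm
  have hnotmem : ([] : List ℕ) ∉ (Finset.range t.children.length).biUnion
      (fun j => (childSet V j).image (j :: ·)) := by
    intro hmem
    rw [Finset.mem_biUnion] at hmem
    obtain ⟨j, _, hj⟩ := hmem
    rw [Finset.mem_image] at hj
    obtain ⟨r, _, h⟩ := hj
    exact List.cons_ne_nil _ _ h
  calc ∑ q ∈ V, G q
      = ∑ q ∈ insert ([] : List ℕ) ((Finset.range t.children.length).biUnion
          (fun j => (childSet V j).image (j :: ·))), G q := by rw [← hVeq]
    _ = G [] + ∑ j ∈ Finset.range t.children.length,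
          ∑ q ∈ (childSet V j).image (j :: ·), G q := by
        rw [Finset.sum_insert hnotmem, Finset.sum_biUnion hdisj]
    _ = G [] + ∑ j ∈ Finset.range t.children.length,
          ∑ r ∈ childSet V j, G (j :: r) := by
        congr 1
        refine Finset.sum_congr rfl fun j _ => ?_
        refine Finset.sum_image fun x _ y _ h => ?_
        injection h

/-- The full-tree sum `∑ (d⁺(q) - 1) = -1`. -/
theorem sum_deg : ∀ (t : PlaneTree) (V : Finset (List ℕ)),
    (∀ p, p ∈ V ↔ (get p t).isSome) →
    ∑ q ∈ V, ((degAt t q : ℤ) - 1) = -1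
  | node cs, V, hV => by
    rw [sum_decomp (node cs) V hV]
    have hinner : ∀ j ∈ Finset.range (node cs).children.length,
        (∑ r ∈ childSet V j, ((degAt (node cs) (j::r) : ℤ) - 1)) = -1 := by
      intro j hj
      rw [children_node] at hj
      obtain ⟨c, hc⟩ : ∃ c, cs[j]? = some c :=
        Option.isSome_iff_exists.mp ((isSome_get? _ _).mpr (Finset.mem_range.mp hj))
      have hc' : (node cs).children[j]? = some c := hc
      have key : ∑ r ∈ childSet V j, ((degAt (node cs) (j::r) : ℤ) - 1)
          = ∑ r ∈ childSet V j, ((degAt c r : ℤ) - 1) :=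
        Finset.sum_congr rfl fun r _ => by rw [degAt_cons r hc']
      rw [key]
      exact sum_deg c (childSet V j) (childSet_spec hV hc')
    rw [Finset.sum_congr rfl hinner, Finset.sum_const, degAt_nil, children_node]
    simp only [Finset.card_range, nsmul_eq_mul, mul_neg_one]

    ring
termination_by t => sizeOf t
decreasing_by
  have := List.sizeOf_lt_of_mem (List.mem_of_getElem? hc)
  simp only [PlaneTree.node.sizeOf_spec]
  omega

/-- Queue recursion: descending to child `i`. -/
theorem queue_cons (t : PlaneTree) (V : Finset (List ℕ))
    (hV : ∀ p, p ∈ V ↔ (get p t).isSome)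
    (i : ℕ) (p : List ℕ) (c : PlaneTree) (hc : t.children[i]? = some c)
    (W : Finset (List ℕ)) (hW : ∀ r, r ∈ W ↔ (get r c).isSome) :
    queueAt t V (i::p) = queueAt c W p + t.children.length - 1 - i := by
  obtain ⟨cs⟩ := t
  have hi : i < cs.length := (isSome_get? _ _).mp (by rw [children_node] at hc; rw [hc]; rfl)
  have hWeq : W = childSet V i := by
    ext r; rw [hW, childSet_spec hV hc]
  unfold queueAt
  rw [Finset.sum_filter, Finset.sum_filter, sum_decomp (node cs) V hV]
  have hnil : (if List.Lex (·<·) ([] : List ℕ) (i::p) then ((degAt (node cs) [] : ℤ) - 1) else 0)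
      = (cs.length : ℤ) - 1 := by
    rw [if_pos List.Lex.nil, degAt_nil, children_node]
  set X : ℤ := ∑ r ∈ W, (if List.Lex (·<·) r p then ((degAt c r : ℤ) - 1) else 0) with hX
  have hinner : ∀ j ∈ Finset.range (node cs).children.length,
      (∑ r ∈ childSet V j,
        (if List.Lex (·<·) (j::r) (i::p) then ((degAt (node cs) (j::r) : ℤ) - 1) else 0))
      = (if j < i then (-1 : ℤ) else 0) + (if j = i then X else 0) := by
    intro j hj
    rw [children_node] at hj
    obtain ⟨cj, hcj⟩ : ∃ cj, cs[j]? = some cj :=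
      Option.isSome_iff_exists.mp ((isSome_get? _ _).mpr (Finset.mem_range.mp hj))
    have hcj' : (node cs).children[j]? = some cj := hcj
    rcases lt_trichotomy j i with h | h | h
    · rw [if_pos h, if_neg (Nat.ne_of_lt h), add_zero]
      have key : ∀ r ∈ childSet V j,
          (if List.Lex (·<·) (j::r) (i::p) then ((degAt (node cs) (j::r) : ℤ) - 1) else 0)
          = ((degAt cj r : ℤ) - 1) := by
        intro r _
        rw [if_pos (List.Lex.rel h), degAt_cons r hcj']
      rw [Finset.sum_congr rfl key]
      exact sum_deg cj (childSet V j) (childSet_spec hV hcj')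
    · subst h
      rw [if_neg (lt_irrefl j), if_pos rfl, zero_add]
      have hcc : cj = c := by rw [hcj'] at hc; injection hc
      subst hcc
      rw [hX, hWeq]
      refine Finset.sum_congr rfl fun r _ => ?_
      have hlex : List.Lex (·<·) (j::r) (j::p) ↔ List.Lex (·<·) r p := by
        rw [lex_cons_cons]; simp
      rw [degAt_cons r hcj']
      by_cases hl : List.Lex (·<·) r p
      · rw [if_pos (hlex.mpr hl), if_pos hl]
      · rw [if_neg (fun hh => hl (hlex.mp hh)), if_neg hl]
    · rw [if_neg (Nat.lt_asymm h), if_neg (Nat.ne_of_gt h), add_zero]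
      have key : ∀ r ∈ childSet V j,
          (if List.Lex (·<·) (j::r) (i::p) then ((degAt (node cs) (j::r) : ℤ) - 1) else 0)
          = 0 := by
        intro r _
        rw [if_neg]
        intro hh
        rcases lex_cons_cons.mp hh with h' | ⟨h', _⟩
        · omega
        · omega
      rw [Finset.sum_congr rfl key, Finset.sum_const, smul_zero]
  rw [hnil, Finset.sum_congr rfl hinner, Finset.sum_add_distrib]
  rw [Finset.sum_ite_eq' (Finset.range (node cs).children.length) i (fun _ => X)]
  rw [children_node]
  rw [if_pos (Finset.mem_range.mpr hi)]
  have hfirst : ∑ j ∈ Finset.range cs.length, (if j < i then (-1 : ℤ) else 0) = -(i : ℤ) := by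
    rw [Finset.sum_ite, Finset.sum_const, Finset.sum_const, smul_zero, add_zero]
    have : (Finset.range cs.length).filter (fun j => j < i) = Finset.range i := by
      ext j
      simp only [Finset.mem_filter, Finset.mem_range]
      omega
    rw [this, Finset.card_range]
    simp
  rw [hfirst]
  ring

/-- Ancestor-sum recursion: descending to child `i`. -/
theorem anc_sum (t : PlaneTree) (V : Finset (List ℕ))
    (hV : ∀ p, p ∈ V ↔ (get p t).isSome)
    (i : ℕ) (p : List ℕ) (c : PlaneTree) (hc : t.children[i]? = some c)
    (W : Finset (List ℕ)) (hW : ∀ r, r ∈ W ↔ (get r c).isSome) :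
    ∑ q ∈ V.filter (fun q => q ≠ i::p ∧ q <+: i::p), (degAt t q : ℤ) =
      (t.children.length : ℤ) +
        ∑ r ∈ W.filter (fun r => r ≠ p ∧ r <+: p), (degAt c r : ℤ) := by
  obtain ⟨cs⟩ := t
  have hi : i < cs.length := (isSome_get? _ _).mp (by rw [children_node] at hc; rw [hc]; rfl)
  have hWeq : W = childSet V i := by
    ext r; rw [hW, childSet_spec hV hc]
  rw [Finset.sum_filter, Finset.sum_filter, sum_decomp (node cs) V hV]
  set X : ℤ := ∑ r ∈ W, (if r ≠ p ∧ r <+: p then (degAt c r : ℤ) else 0) with hX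
  have hnil : (if ([] : List ℕ) ≠ i::p ∧ ([] : List ℕ) <+: i::p
      then (degAt (node cs) [] : ℤ) else 0) = (cs.length : ℤ) := by
    rw [if_pos ⟨fun h => List.cons_ne_nil _ _ h.symm, List.nil_prefix⟩, degAt_nil,
      children_node]
  have hinner : ∀ j ∈ Finset.range (node cs).children.length,
      (∑ r ∈ childSet V j,
        (if (j::r) ≠ i::p ∧ (j::r) <+: i::p then (degAt (node cs) (j::r) : ℤ) else 0))
      = (if j = i then X else 0) := by
    intro j hj
    obtain ⟨cj, hcj⟩ : ∃ cj, cs[j]? = some cj :=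
      Option.isSome_iff_exists.mp
        ((isSome_get? _ _).mpr (Finset.mem_range.mp (by rwa [children_node] at hj)))
    have hcj' : (node cs).children[j]? = some cj := hcj
    by_cases h : j = i
    · subst h
      rw [if_pos rfl]
      have hcc : cj = c := by rw [hcj'] at hc; injection hc
      subst hcc
      rw [hX, hWeq]
      refine Finset.sum_congr rfl fun r _ => ?_
      have hiff : ((j::r) ≠ j::p ∧ (j::r) <+: j::p) ↔ (r ≠ p ∧ r <+: p) := by
        rw [List.cons_prefix_cons]
        constructor
        · rintro ⟨hne, _, hpre⟩
          exact ⟨fun h => hne (by rw [h]), hpre⟩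
        · rintro ⟨hne, hpre⟩
          exact ⟨fun h => hne (by injection h), rfl, hpre⟩
      rw [degAt_cons r hcj']
      by_cases hl : r ≠ p ∧ r <+: p
      · rw [if_pos (hiff.mpr hl), if_pos hl]
      · rw [if_neg (fun hh => hl (hiff.mp hh)), if_neg hl]
    · rw [if_neg h]
      have key : ∀ r ∈ childSet V j,
          (if (j::r) ≠ i::p ∧ (j::r) <+: i::p then (degAt (node cs) (j::r) : ℤ) else 0)
          = 0 := by
        intro r _
        rw [if_neg]
        rintro ⟨_, hpre⟩
        exact h (List.cons_prefix_cons.mp hpre).1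
      rw [Finset.sum_congr rfl key, Finset.sum_const, smul_zero]
  rw [hnil, Finset.sum_congr rfl hinner]
  rw [Finset.sum_ite_eq' (Finset.range (node cs).children.length) i (fun _ => X)]
  rw [children_node, if_pos (Finset.mem_range.mpr hi)]

end PlaneTree

open PlaneTree

/-- For a plane tree `t` with vertex (address) set `V`, a vertex `v`, and the mirror tree
with vertex set `V'`, the forward DFS queue value at `v` plus the reverse DFS queue value
at the corresponding vertex of the mirror image equals
`2 + Σ_{u ≻ v} d⁺(u) - h(v)`, the sum being over the strict ancestors of `v`. -/
theorem dfs_queue_identity (t : PlaneTree)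
    (V : Finset (List ℕ)) (hV : ∀ p, p ∈ V ↔ (get p t).isSome)
    (V' : Finset (List ℕ)) (hV' : ∀ p, p ∈ V' ↔ (get p (mirror t)).isSome)
    (v : List ℕ) (hv : v ∈ V) :
    queueAt t V v + queueAt (mirror t) V' (mirrorAddr v t) =
      2 + (∑ q ∈ V.filter (fun q => q ≠ v ∧ q <+: v), (degAt t q : ℤ)) - v.length := by
  revert hv hV' V' hV V t
  induction v with
  | nil =>
    intro t V hV V' hV' hv
    have h1 : V.filter (fun q => List.Lex (·<·) q ([] : List ℕ)) = ∅ :=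
      Finset.filter_false_of_mem fun q _ => List.not_lex_nil
    have h2 : V'.filter (fun q => List.Lex (·<·) q (mirrorAddr [] t)) = ∅ :=
      Finset.filter_false_of_mem fun q _ => by
        show ¬ List.Lex (·<·) q (mirrorAddr [] t)
        rw [show mirrorAddr [] t = [] from rfl]
        exact List.not_lex_nil
    have h3 : V.filter (fun q => q ≠ ([] : List ℕ) ∧ q <+: []) = ∅ :=
      Finset.filter_false_of_mem fun q _ => by
        rintro ⟨hne, hpre⟩
        exact hne (List.prefix_nil.mp hpre)
    rw [queueAt, queueAt, h1, h2, h3]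
    simp
  | cons i p ih =>
    intro t V hV V' hV' hv
    obtain ⟨cs⟩ := t
    have hv1 := (hV _).mp hv
    rw [get_cons, children_node] at hv1
    obtain ⟨c, hc⟩ : ∃ c, cs[i]? = some c := by
      rcases h : cs[i]? with _ | c
      · rw [h] at hv1; simp at hv1
      · exact ⟨c, rfl⟩
    rw [hc, Option.bind_some] at hv1
    have hi : i < cs.length := (isSome_get? _ _).mp (by rw [hc]; rfl)
    have hc0 : (node cs).children[i]? = some c := hc
    set W := childSet V i with hWdef
    have hW : ∀ r, r ∈ W ↔ (get r c).isSome := childSet_spec hV hc0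
    set j := cs.length - 1 - i with hjdef
    have hcm : (mirror (node cs)).children[j]? = some (mirror c) :=
      get?_children_mirror cs i c hc
    set W' := childSet V' j with hW'def
    have hW' : ∀ r, r ∈ W' ↔ (get r (mirror c)).isSome := childSet_spec hV' hcm
    have hp : p ∈ W := (hW p).mpr hv1
    have IH := ih c W hW W' hW' hp
    have hq1 := queue_cons (node cs) V hV i p c hc0 W hW
    have hq2 := queue_cons (mirror (node cs)) V' hV' j (mirrorAddr p c) (mirror c) hcm W' hW'
    have hma : mirrorAddr (i::p) (node cs) = j :: mirrorAddr p c := by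
      rw [mirrorAddr_cons i p hc0]
      rfl
    have ha := anc_sum (node cs) V hV i p c hc0 W hW
    rw [children_node] at hq1 ha
    rw [length_children_mirror] at hq2
    rw [hma, hq1, hq2, ha]
    have hj : (j : ℤ) = (cs.length : ℤ) - 1 - (i : ℤ) := by omega
    have hlength : (((i::p) : List ℕ).length : ℤ) = (p.length : ℤ) + 1 := by simp
    rw [hlength, hj]
    linarith [IH]
end

section
/- Let G be a connected rooted graph with root r whose block decomposition gives a rooted tree structure T on V(G) (the enriched tree of the block decomposition). If a is a vertex of T and b a child of a in T, then the graph distance satisfies d_G(a,b) ≤ d⁺_T(a), where d⁺_T(a) is the number of children of a in T. Consequently, for any vertex v, the height of v in G satisfies h_G(v) ≤ Σ_{u ≻ v} d⁺_T(u), summing over ancestors u of v in T. -/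
open SimpleGraph

/-- Enriched-tree distance bound.  Let `G` be a connected rooted graph with root `r` and
let `T` be a rooted tree structure on the vertices of `G` given by a parent function
`par` and a depth function `dep` (the enriched tree of the block decomposition): for each
non-root vertex `b`, the vertex `b` and its parent `par b` lie in a common block, i.e. a
connected induced subgraph with at most `d⁺_T(par b) + 1` vertices, where `d⁺_T a` is the
number of children of `a` in `T`.  Then `d_G(par b, b) ≤ d⁺_T(par b)` for every non-root
vertex `b`, and consequently the height of any vertex `v` in `G` is at most the sum of
the out-degrees of the strict ancestors of `v` in `T`. -/
theorem enriched_tree_height_bound {V : Type*} [Fintype V]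
    (G : SimpleGraph V) (hG : G.Connected)
    (r : V) (par : V → V) (dep : V → ℕ)
    (hr : par r = r) (hdep0 : dep r = 0)
    (hdep : ∀ v, v ≠ r → dep v = dep (par v) + 1)
    (outdeg : V → ℕ)
    (houtdeg : ∀ a, outdeg a = Nat.card {b : V | b ≠ r ∧ par b = a})
    (hblock : ∀ b, b ≠ r → ∃ B : Finset V, par b ∈ B ∧ b ∈ B ∧
      B.card ≤ outdeg (par b) + 1 ∧ (G.induce (↑B : Set V)).Connected) :
    (∀ b, b ≠ r → G.dist (par b) b ≤ outdeg (par b)) ∧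
    (∀ v : V, G.dist r v ≤ ∑ i ∈ Finset.Icc 1 (dep v), outdeg (par^[i] v)) := by
  have key : ∀ b, b ≠ r → G.dist (par b) b ≤ outdeg (par b) := by
    intro b hb
    obtain ⟨B, ha, hbB, hcard, hconn⟩ := hblock b hb
    have hreach := hconn.preconnected ⟨par b, by simpa using ha⟩ ⟨b, by simpa using hbB⟩
    classical
    obtain ⟨p⟩ := hreach
    let p' := p.toPath
    have hlt : p'.1.length < Fintype.card (↑B : Set V) := p'.2.length_lt
    have hcardB : Fintype.card (↑B : Set V) = B.card := by
      simp
    let f : (G.induce (↑B : Set V)) →g G := ⟨fun x => x.val, fun h => h⟩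
    have hd : G.dist (par b) b ≤ (p'.1.map f).length := SimpleGraph.dist_le _
    rw [SimpleGraph.Walk.length_map] at hd
    omega
  refine ⟨key, ?_⟩
  have hdeppos : ∀ v : V, dep v = 0 → v = r := by
    intro v hv
    by_contra h
    have := hdep v h
    omega
  have main : ∀ n : ℕ, ∀ v : V, dep v = n →
      G.dist r v ≤ ∑ i ∈ Finset.Icc 1 (dep v), outdeg (par^[i] v) := by
    intro n
    induction n with
    | zero =>
      intro v hv
      have : v = r := hdeppos v hv
      subst this
      simp [SimpleGraph.dist_self]
    | succ n ih =>
      intro v hv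
      have hvr : v ≠ r := by
        intro h; subst h; omega
      have hdepp : dep (par v) = n := by
        have := hdep v hvr; omega
      have h1 : G.dist r v ≤ G.dist r (par v) + G.dist (par v) v :=
        hG.dist_triangle
      have h2 := ih (par v) hdepp
      have h3 := key v hvr
      have hsum : ∑ i ∈ Finset.Icc 1 (dep v), outdeg (par^[i] v)
          = outdeg (par v) + ∑ i ∈ Finset.Icc 1 (dep (par v)), outdeg (par^[i] (par v)) := by
        rw [hdep v hvr]
        rw [show Finset.Icc 1 (dep (par v) + 1) = Finset.Ico 1 (dep (par v) + 1 + 1) from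
          (Finset.Ico_add_one_right_eq_Icc 1 _).symm]
        rw [show Finset.Icc 1 (dep (par v)) = Finset.Ico 1 (dep (par v) + 1) from
          (Finset.Ico_add_one_right_eq_Icc 1 _).symm]
        rw [Finset.sum_Ico_eq_sum_range, Finset.sum_Ico_eq_sum_range]
        simp only [Nat.add_sub_cancel]
        rw [Finset.sum_range_succ']
        have h4 : ∀ i : ℕ, par^[1 + (i + 1)] v = par^[1 + i] (par v) := by
          intro i
          rw [show 1 + (i + 1) = (1 + i) + 1 from by ring, Function.iterate_succ_apply]
        simp only [h4]
        simp [add_comm]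
      omega
  exact fun v => main (dep v) v rfl
end
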